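/- arXiv:1202.0123 — 9 statements merged into one kernel-verified Lean document; each statement's English description precedes it below -/
import Mathlib

section
/- Let A and B be finite multisets of positive integers such that ∏_{a ∈ A} (1 − x^a) = ∏_{b ∈ B} (1 − x^b) as polynomials in ℤ[x]. Then A = B as multisets (in particular they have the same cardinality). -/
open Polynomial

private lemma coeff_zero_prod (S : Multiset ℕ) (hS : ∀ a ∈ S, 0 < a) :
    ((S.map fun a => (1 - Polynomial.X ^ a : Polynomial ℤ)).prod).coeff 0 = 1 := by
  induction S using Multiset.induction with
  | empty => simp
  | cons a S ih =>
    have ha : 0 < a := hS a (Multiset.mem_cons_self a S)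
    rw [Multiset.map_cons, Multiset.prod_cons, Polynomial.mul_coeff_zero,
      ih (fun x hx => hS x (Multiset.mem_cons_of_mem hx))]
    simp [Polynomial.coeff_X_pow]; omega

private lemma coeff_min_prod (S : Multiset ℕ) (m : ℕ) (hm : 0 < m)
    (hS : ∀ a ∈ S, 0 < a) (hmin : ∀ a ∈ S, m ≤ a) :
    ((S.map fun a => (1 - Polynomial.X ^ a : Polynomial ℤ)).prod).coeff m
      = -(S.count m : ℤ) := by
  induction S using Multiset.induction with
  | empty => simp [Polynomial.coeff_one, hm.ne']
  | cons a S ih =>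
    have hS' : ∀ x ∈ S, 0 < x := fun x hx => hS x (Multiset.mem_cons_of_mem hx)
    have hmin' : ∀ x ∈ S, m ≤ x := fun x hx => hmin x (Multiset.mem_cons_of_mem hx)
    have hma : m ≤ a := hmin a (Multiset.mem_cons_self a S)
    rw [Multiset.map_cons, Multiset.prod_cons, sub_mul, one_mul, Polynomial.coeff_sub,
      Polynomial.X_pow_mul, Polynomial.coeff_mul_X_pow', ih hS' hmin']
    by_cases hma' : a = m
    · subst hma'
      rw [if_pos le_rfl, Nat.sub_self, coeff_zero_prod S hS']
      rw [Multiset.count_cons_self]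
      push_cast
      ring
    · have : ¬ a ≤ m := fun hle => hma' (le_antisymm hle hma)
      rw [if_neg this, Multiset.count_cons_of_ne (fun e => hma' e.symm)]
      ring

private lemma key : ∀ (n : ℕ) (A B : Multiset ℕ), A.card = n →
    (∀ a ∈ A, 0 < a) → (∀ b ∈ B, 0 < b) →
    (A.map fun a => (1 - Polynomial.X ^ a : Polynomial ℤ)).prod
       = (B.map fun b => (1 - Polynomial.X ^ b : Polynomial ℤ)).prod →
    A = B := by
  intro n
  induction n with
  | zero =>
    intro A B hcard hA hB h
    have hA0 : A = 0 := Multiset.card_eq_zero.mp hcard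
    subst hA0
    by_contra hBne
    have hB0 : B ≠ 0 := fun e => hBne e.symm
    have hfin : B.toFinset.Nonempty := by
      rwa [Multiset.toFinset_nonempty]
    set m := B.toFinset.min' hfin with hm
    have hmB : m ∈ B := Multiset.mem_toFinset.mp (B.toFinset.min'_mem hfin)
    have hmpos : 0 < m := hB m hmB
    have hminB : ∀ x ∈ B, m ≤ x := fun x hx =>
      B.toFinset.min'_le x (Multiset.mem_toFinset.mpr hx)
    have hc := coeff_min_prod B m hmpos hB hminB
    rw [← h] at hc
    simp only [Multiset.map_zero, Multiset.prod_zero, Polynomial.coeff_one,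
      if_neg hmpos.ne'] at hc
    have : 0 < B.count m := Multiset.count_pos.mpr hmB
    omega
  | succ n ih =>
    intro A B hcard hA hB h
    have hAne : A ≠ 0 := by
      intro e; rw [e] at hcard; simp at hcard
    have hABne : A + B ≠ 0 := by
      intro e
      apply hAne
      have := congrArg Multiset.card e
      simp at this
      exact this.1
    have hfin : (A + B).toFinset.Nonempty := by rwa [Multiset.toFinset_nonempty]
    set m := (A + B).toFinset.min' hfin with hm
    have hmAB : m ∈ A + B := Multiset.mem_toFinset.mp ((A + B).toFinset.min'_mem hfin)
    have hmpos : 0 < m := by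
      rcases Multiset.mem_add.mp hmAB with hx | hx
      · exact hA m hx
      · exact hB m hx
    have hminA : ∀ x ∈ A, m ≤ x := fun x hx =>
      (A + B).toFinset.min'_le x (Multiset.mem_toFinset.mpr (Multiset.mem_add.mpr (Or.inl hx)))
    have hminB : ∀ x ∈ B, m ≤ x := fun x hx =>
      (A + B).toFinset.min'_le x (Multiset.mem_toFinset.mpr (Multiset.mem_add.mpr (Or.inr hx)))
    have hcA := coeff_min_prod A m hmpos hA hminA
    have hcB := coeff_min_prod B m hmpos hB hminB
    rw [h, hcB] at hcA
    have hcount : A.count m = B.count m := by exact_mod_cast neg_injective hcA.symm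
    have hmem : m ∈ A ∧ m ∈ B := by
      rcases Multiset.mem_add.mp hmAB with hx | hx
      · refine ⟨hx, Multiset.count_pos.mp ?_⟩
        rw [← hcount]; exact Multiset.count_pos.mpr hx
      · refine ⟨Multiset.count_pos.mp ?_, hx⟩
        rw [hcount]; exact Multiset.count_pos.mpr hx
    obtain ⟨hmA, hmB⟩ := hmem
    -- cancel the factor (1 - X^m)
    have hprodA := Multiset.prod_map_erase (f := fun a => (1 - Polynomial.X ^ a : Polynomial ℤ)) hmA
    have hprodB := Multiset.prod_map_erase (f := fun b => (1 - Polynomial.X ^ b : Polynomial ℤ)) hmB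
    have hne : (1 - Polynomial.X ^ m : Polynomial ℤ) ≠ 0 := by
      intro e
      have := congrArg (fun p => Polynomial.coeff p m) e
      simp [Polynomial.coeff_one, hmpos.ne'] at this
    have h' : ((A.erase m).map fun a => (1 - Polynomial.X ^ a : Polynomial ℤ)).prod
        = ((B.erase m).map fun b => (1 - Polynomial.X ^ b : Polynomial ℤ)).prod := by
      apply mul_left_cancel₀ hne
      rw [hprodA, hprodB, h]
    have hcard' : (A.erase m).card = n := by
      rw [Multiset.card_erase_of_mem hmA, hcard]; rfl
    have hAe : ∀ a ∈ A.erase m, 0 < a := fun a ha => hA a (Multiset.mem_of_mem_erase ha)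
    have hBe : ∀ b ∈ B.erase m, 0 < b := fun b hb => hB b (Multiset.mem_of_mem_erase hb)
    have heq := ih (A.erase m) (B.erase m) hcard' hAe hBe h'
    calc A = m ::ₘ A.erase m := (Multiset.cons_erase hmA).symm
    _ = m ::ₘ B.erase m := by rw [heq]
    _ = B := Multiset.cons_erase hmB

/-- **Unique factorization of products `∏ (1 - x^a)`.**
If `A` and `B` are finite multisets of positive integers with
`∏_{a ∈ A} (1 - x^a) = ∏_{b ∈ B} (1 - x^b)` in `ℤ[x]`, then `A = B`. -/
theorem multiset_eq_of_prod_one_sub_X_pow_eq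
    (A B : Multiset ℕ) (hA : ∀ a ∈ A, 0 < a) (hB : ∀ b ∈ B, 0 < b)
    (h : (A.map fun a => (1 - Polynomial.X ^ a : Polynomial ℤ)).prod
       = (B.map fun b => (1 - Polynomial.X ^ b : Polynomial ℤ)).prod) :
    A = B := by
  exact key A.card A B rfl hA hB h
end

section
/- Let G be a finite simple graph with at least two vertices, let p be a vertex of G that is adjacent to exactly one vertex of G, and let G' be the induced subgraph of G obtained by deleting p. Then for every k ≥ 1, c_k(G) = k·c_{k−1}(G') + (k−1)·c_k(G'), where c_0 of any graph is defined to be 0. -/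
/-- An (ordered) `k`-partition of a finite simple graph `G`: an ordered `k`-tuple of nonempty,
pairwise disjoint independent sets of `G` whose union is the whole vertex set. -/
def SimpleGraph.IsOrderedPartition {V : Type*} [Fintype V] [DecidableEq V]
    (G : SimpleGraph V) {k : ℕ} (J : Fin k → Finset V) : Prop :=
  (∀ i, (J i).Nonempty) ∧ (∀ i j, i ≠ j → Disjoint (J i) (J j)) ∧
    (Finset.univ.biUnion J = Finset.univ) ∧
    (∀ i, ∀ a ∈ J i, ∀ b ∈ J i, ¬ G.Adj a b)

/-- `c_k(G)`: the number of (ordered) `k`-partitions of `G`, with `c_0(G) := 0`. -/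
noncomputable def SimpleGraph.ckPart {V : Type*} [Fintype V] [DecidableEq V]
    (G : SimpleGraph V) (k : ℕ) : ℕ :=
  if k = 0 then 0 else Nat.card {J : Fin k → Finset V // G.IsOrderedPartition J}

/-- `c(G) := (-1)^l * ∑_{k=1}^{l} (-1)^k c_k(G)/k`, where `l` is the number of vertices. -/
noncomputable def SimpleGraph.cInv {V : Type*} [Fintype V] [DecidableEq V]
    (G : SimpleGraph V) : ℚ :=
  (-1 : ℚ) ^ (Fintype.card V) *
    ∑ k ∈ Finset.Icc 1 (Fintype.card V), (-1 : ℚ) ^ k * (G.ckPart k : ℚ) / k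

namespace PendantAux
set_option linter.unusedSectionVars false

open Finset

variable {V : Type*} [Fintype V] [DecidableEq V]

/-- Restrict a finset of `V` to the subtype avoiding `p`. -/
def res (p : V) (s : Finset V) : Finset {u : V // u ≠ p} := s.subtype _

/-- Extend a finset of the subtype back to `V`. -/
def exx (p : V) (s : Finset {u : V // u ≠ p}) : Finset V :=
  s.map (Function.Embedding.subtype _)

@[simp] lemma mem_res {p : V} {s : Finset V} {x : {u : V // u ≠ p}} :
    x ∈ res p s ↔ (x : V) ∈ s := Finset.mem_subtype

@[simp] lemma coe_mem_exx {p : V} {s : Finset {u : V // u ≠ p}} {x : {u : V // u ≠ p}} :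
    (x : V) ∈ exx p s ↔ x ∈ s := Finset.mem_map' _

lemma mem_exx {p : V} {s : Finset {u : V // u ≠ p}} {x : V} :
    x ∈ exx p s ↔ ∃ hx : x ≠ p, (⟨x, hx⟩ : {u : V // u ≠ p}) ∈ s := by
  constructor
  · intro hx
    rcases Finset.mem_map.mp hx with ⟨a, ha, rfl⟩
    exact ⟨a.2, by simpa using ha⟩
  · rintro ⟨hx, h⟩
    exact Finset.mem_map.mpr ⟨⟨x, hx⟩, h, rfl⟩

lemma not_mem_exx (p : V) (s : Finset {u : V // u ≠ p}) : p ∉ exx p s := by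
  rw [mem_exx]; rintro ⟨hx, -⟩; exact hx rfl

@[simp] lemma res_exx (p : V) (s : Finset {u : V // u ≠ p}) : res p (exx p s) = s := by
  ext x; simp

lemma exx_res (p : V) (s : Finset V) : exx p (res p s) = s.erase p := by
  ext x
  rw [mem_exx]
  constructor
  · rintro ⟨hx, h⟩
    exact Finset.mem_erase.mpr ⟨hx, mem_res.mp h⟩
  · intro hx
    rcases Finset.mem_erase.mp hx with ⟨h1, h2⟩
    exact ⟨h1, mem_res.mpr h2⟩

lemma exx_res_of_not_mem {p : V} {s : Finset V} (h : p ∉ s) : exx p (res p s) = s := by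
  rw [exx_res, Finset.erase_eq_of_notMem h]

lemma exx_nonempty {p : V} {s : Finset {u : V // u ≠ p}} (h : s.Nonempty) :
    (exx p s).Nonempty := h.map

lemma disjoint_exx {p : V} {s t : Finset {u : V // u ≠ p}} (h : Disjoint s t) :
    Disjoint (exx p s) (exx p t) := (Finset.disjoint_map _).mpr h

/-- Every vertex lies in some part. -/
lemma exists_mem_part {W : Type*} [Fintype W] [DecidableEq W] {G : SimpleGraph W} {k : ℕ}
    {J : Fin k → Finset W} (hJ : G.IsOrderedPartition J) (x : W) : ∃ i, x ∈ J i := by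
  have hx : x ∈ Finset.univ.biUnion J := by rw [hJ.2.2.1]; exact Finset.mem_univ x
  simpa using hx

/-- Each vertex lies in only one part. -/
lemma mem_part_unique {W : Type*} [Fintype W] [DecidableEq W] {G : SimpleGraph W} {k : ℕ}
    {J : Fin k → Finset W} (hJ : G.IsOrderedPartition J) {x : W} {a b : Fin k}
    (ha : x ∈ J a) (hb : x ∈ J b) : a = b := by
  by_contra h
  exact (hJ.2.1 a b h).forall_ne_finset ha hb rfl

variable {G : SimpleGraph V} {p : V}

/-- Deleting the part `{p}` gives a partition of the induced subgraph. -/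
lemma part_res_succAbove {m : ℕ} {J : Fin (m + 1) → Finset V} (hJ : G.IsOrderedPartition J)
    {i₀ : Fin (m + 1)} (hi₀ : J i₀ = {p}) :
    (G.induce {u | u ≠ p}).IsOrderedPartition (fun j => res p (J (i₀.succAbove j))) := by
  have hp0 : p ∈ J i₀ := by rw [hi₀]; exact Finset.mem_singleton_self p
  have hpnot : ∀ j : Fin m, p ∉ J (i₀.succAbove j) := by
    intro j hpj
    exact (Fin.succAbove_ne i₀ j) (mem_part_unique hJ hpj hp0)
  refine ⟨?_, ?_, ?_, ?_⟩
  · intro j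
    obtain ⟨x, hx⟩ := hJ.1 (i₀.succAbove j)
    exact ⟨⟨x, fun h => hpnot j (h ▸ hx)⟩, mem_res.mpr hx⟩
  · intro a b hab
    rw [Finset.disjoint_left]
    intro x hxa hxb
    exact hab (Fin.succAbove_right_injective
      (mem_part_unique hJ (mem_res.mp hxa) (mem_res.mp hxb)))
  · ext x
    simp only [Finset.mem_biUnion, Finset.mem_univ, true_iff, iff_true]
    obtain ⟨i, hi⟩ := exists_mem_part hJ (x : V)
    have hine : i ≠ i₀ := by
      intro h; subst h
      rw [hi₀] at hi
      exact x.2 (Finset.mem_singleton.mp hi)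
    obtain ⟨j, rfl⟩ := Fin.exists_succAbove_eq hine
    exact ⟨j, trivial, mem_res.mpr hi⟩
  · intro i a ha b hb
    exact hJ.2.2.2 (i₀.succAbove i) a (mem_res.mp ha) b (mem_res.mp hb)

/-- Inserting `{p}` as a new part into a partition of the induced subgraph. -/
lemma part_insertNth {m : ℕ} {J' : Fin m → Finset {u : V // u ≠ p}}
    (hJ' : (G.induce {u | u ≠ p}).IsOrderedPartition J') (i : Fin (m + 1)) :
    G.IsOrderedPartition (i.insertNth {p} (fun j => exx p (J' j))) := by
  refine ⟨?_, ?_, ?_, ?_⟩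
  · intro x
    rcases eq_or_ne x i with rfl | hx
    · rw [Fin.insertNth_apply_same]; exact Finset.singleton_nonempty p
    · obtain ⟨j, rfl⟩ := Fin.exists_succAbove_eq hx
      rw [Fin.insertNth_apply_succAbove]
      exact exx_nonempty (hJ'.1 j)
  · intro a b hab
    rcases eq_or_ne a i with rfl | hA
    · obtain ⟨j, rfl⟩ := Fin.exists_succAbove_eq hab.symm
      rw [Fin.insertNth_apply_same, Fin.insertNth_apply_succAbove,
        Finset.disjoint_singleton_left]
      exact not_mem_exx p _
    · obtain ⟨j, rfl⟩ := Fin.exists_succAbove_eq hA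
      rcases eq_or_ne b i with rfl | hB
      · rw [Fin.insertNth_apply_same, Fin.insertNth_apply_succAbove,
          Finset.disjoint_singleton_right]
        exact not_mem_exx p _
      · obtain ⟨j', rfl⟩ := Fin.exists_succAbove_eq hB
        rw [Fin.insertNth_apply_succAbove, Fin.insertNth_apply_succAbove]
        exact disjoint_exx (hJ'.2.1 j j'
          (fun h => hab (congrArg i.succAbove h)))
  · ext x
    simp only [Finset.mem_biUnion, Finset.mem_univ, true_iff, iff_true]
    rcases eq_or_ne x p with rfl | hx
    · exact ⟨i, trivial, by rw [Fin.insertNth_apply_same]; exact Finset.mem_singleton_self x⟩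
    · obtain ⟨j, hj⟩ := exists_mem_part hJ' (⟨x, hx⟩ : {u : V // u ≠ p})
      refine ⟨i.succAbove j, trivial, ?_⟩
      rw [Fin.insertNth_apply_succAbove, mem_exx]
      exact ⟨hx, hj⟩
  · intro ix a ha b hb
    rcases eq_or_ne ix i with rfl | hx
    · rw [Fin.insertNth_apply_same] at ha hb
      rw [Finset.mem_singleton.mp ha, Finset.mem_singleton.mp hb]
      exact G.loopless.irrefl p
    · obtain ⟨j, rfl⟩ := Fin.exists_succAbove_eq hx
      rw [Fin.insertNth_apply_succAbove] at ha hb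
      rw [mem_exx] at ha hb
      obtain ⟨hap, ha⟩ := ha
      obtain ⟨hbp, hb⟩ := hb
      exact hJ'.2.2.2 j ⟨a, hap⟩ ha ⟨b, hbp⟩ hb

lemma part_unique_singleton {m : ℕ} {J : Fin (m + 1) → Finset V} (hJ : G.IsOrderedPartition J)
    {a b : Fin (m + 1)} (ha : J a = {p}) (hb : J b = {p}) : a = b :=
  mem_part_unique hJ (ha ▸ Finset.mem_singleton_self p) (hb ▸ Finset.mem_singleton_self p)


variable (G p) in
/-- Partitions of `G` in which `p`'s part is `{p}` correspond to a choice of position together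
with a partition of the induced subgraph. -/
noncomputable def e1 (m : ℕ) :
    {J : {J : Fin (m + 1) → Finset V // G.IsOrderedPartition J} // ∃ i, J.1 i = {p}} ≃
      Fin (m + 1) × {J : Fin m → Finset {u : V // u ≠ p} //
        (G.induce {u | u ≠ p}).IsOrderedPartition J} where
  toFun JJ := (JJ.2.choose,
    ⟨fun j => res p (JJ.1.1 (JJ.2.choose.succAbove j)),
      part_res_succAbove JJ.1.2 JJ.2.choose_spec⟩)
  invFun x := ⟨⟨x.1.insertNth {p} (fun j => exx p (x.2.1 j)), part_insertNth x.2.2 x.1⟩,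
    ⟨x.1, Fin.insertNth_apply_same (α := fun _ => Finset V) x.1 {p} (fun j => exx p (x.2.1 j))⟩⟩
  left_inv JJ := by
    obtain ⟨⟨J, hJ⟩, hP⟩ := JJ
    apply Subtype.ext
    apply Subtype.ext
    dsimp only
    have hcs : J hP.choose = ({p} : Finset V) := hP.choose_spec
    funext x
    rcases eq_or_ne x hP.choose with rfl | hx
    · rw [Fin.insertNth_apply_same]
      exact hcs.symm
    · obtain ⟨j, rfl⟩ := Fin.exists_succAbove_eq hx
      rw [Fin.insertNth_apply_succAbove]
      apply exx_res_of_not_mem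
      intro hpj
      exact (Fin.succAbove_ne _ j)
        (mem_part_unique hJ hpj (show p ∈ J hP.choose by rw [hcs]; exact Finset.mem_singleton_self p))
  right_inv x := by
    obtain ⟨i, J', hJ'⟩ := x
    dsimp only
    generalize_proofs h
    have hch : h.choose = i := by
      rcases eq_or_ne h.choose i with he | hne
      · exact he
      · exfalso
        obtain ⟨j, hj⟩ := Fin.exists_succAbove_eq hne
        have hs := h.choose_spec
        try dsimp only at hs
        rw [← hj, Fin.insertNth_apply_succAbove] at hs
        exact not_mem_exx p (J' j) (hs ▸ Finset.mem_singleton_self p)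
    refine Prod.ext ?_ ?_
    · exact hch
    · apply Subtype.ext
      funext j
      dsimp only
      rw [hch, Fin.insertNth_apply_succAbove, res_exx]

variable {q : V}

/-- Deleting `p` from all parts gives a partition of the induced subgraph when no part is
exactly `{p}`. -/
lemma part_res_all {m : ℕ} {J : Fin (m + 1) → Finset V} (hJ : G.IsOrderedPartition J)
    (hnP : ¬∃ i, J i = {p}) :
    (G.induce {u | u ≠ p}).IsOrderedPartition (fun j => res p (J j)) := by
  refine ⟨?_, ?_, ?_, ?_⟩
  · intro j
    have hne : J j ≠ {p} := fun h => hnP ⟨j, h⟩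
    have hns : ¬ J j ⊆ {p} := by
      intro hsub
      rcases Finset.subset_singleton_iff.mp hsub with h | h
      · exact (hJ.1 j).ne_empty h
      · exact hne h
    obtain ⟨x, hx, hxp⟩ := Finset.not_subset.mp hns
    exact ⟨⟨x, fun h => hxp (Finset.mem_singleton.mpr h)⟩, mem_res.mpr hx⟩
  · intro a b hab
    rw [Finset.disjoint_left]
    intro x hxa hxb
    exact hab (mem_part_unique hJ (mem_res.mp hxa) (mem_res.mp hxb))
  · ext x
    simp only [Finset.mem_biUnion, Finset.mem_univ, true_iff, iff_true]
    obtain ⟨i, hi⟩ := exists_mem_part hJ (x : V)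
    exact ⟨i, trivial, mem_res.mpr hi⟩
  · intro i a ha b hb
    exact hJ.2.2.2 i a (mem_res.mp ha) b (mem_res.mp hb)

lemma q_not_mem_res {k : ℕ} {J : Fin k → Finset V} (hJ : G.IsOrderedPartition J)
    (hq : ∀ r, G.Adj p r ↔ r = q) {i₀ : Fin k} (hi₀ : p ∈ J i₀) (hqp : q ≠ p) :
    (⟨q, hqp⟩ : {u : V // u ≠ p}) ∉ res p (J i₀) := by
  intro hmem
  exact hJ.2.2.2 i₀ p hi₀ q (mem_res.mp hmem) ((hq q).mpr rfl)

/-- Adding `p` to a part not containing `q` gives a partition of `G`. -/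
lemma part_insert (hq : ∀ r, G.Adj p r ↔ r = q) (hqp : q ≠ p) {k : ℕ}
    {J' : Fin k → Finset {u : V // u ≠ p}}
    (hJ' : (G.induce {u | u ≠ p}).IsOrderedPartition J') {i : Fin k}
    (hi : (⟨q, hqp⟩ : {u : V // u ≠ p}) ∉ J' i) :
    G.IsOrderedPartition
      (fun j => if j = i then insert p (exx p (J' j)) else exx p (J' j)) := by
  refine ⟨?_, ?_, ?_, ?_⟩
  · intro j
    dsimp only
    by_cases hji : j = i
    · rw [if_pos hji]; exact Finset.insert_nonempty _ _
    · rw [if_neg hji]; exact exx_nonempty (hJ'.1 j)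
  · intro a b hab
    dsimp only
    rcases eq_or_ne a i with rfl | hA
    · rw [if_pos rfl, if_neg (Ne.symm hab)]
      exact Finset.disjoint_insert_left.mpr
        ⟨not_mem_exx p _, disjoint_exx (hJ'.2.1 _ _ hab)⟩
    · rcases eq_or_ne b i with rfl | hB
      · rw [if_pos rfl, if_neg hA]
        exact Finset.disjoint_insert_right.mpr
          ⟨not_mem_exx p _, disjoint_exx (hJ'.2.1 _ _ hab)⟩
      · rw [if_neg hA, if_neg hB]
        exact disjoint_exx (hJ'.2.1 _ _ hab)
  · ext x
    simp only [Finset.mem_biUnion, Finset.mem_univ, true_iff, iff_true]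
    rcases eq_or_ne x p with rfl | hx
    · exact ⟨i, trivial, by rw [if_pos rfl]; exact Finset.mem_insert_self x _⟩
    · obtain ⟨j, hj⟩ := exists_mem_part hJ' (⟨x, hx⟩ : {u : V // u ≠ p})
      refine ⟨j, trivial, ?_⟩
      by_cases hji : j = i
      · rw [if_pos hji]
        exact Finset.mem_insert_of_mem (mem_exx.mpr ⟨hx, hj⟩)
      · rw [if_neg hji]
        exact mem_exx.mpr ⟨hx, hj⟩
  · intro j a ha b hb
    dsimp only at ha hb
    rcases eq_or_ne j i with rfl | hji
    · rw [if_pos rfl] at ha hb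
      rcases Finset.mem_insert.mp ha with rfl | ha'
      · rcases Finset.mem_insert.mp hb with rfl | hb'
        · exact G.loopless.irrefl _
        · intro hadj
          have hbq : b = q := (hq b).mp hadj
          subst hbq
          obtain ⟨hbp, hb''⟩ := mem_exx.mp hb'
          exact hi hb''
      · rcases Finset.mem_insert.mp hb with rfl | hb'
        · intro hadj
          have haq : a = q := (hq a).mp hadj.symm
          subst haq
          obtain ⟨hap, ha''⟩ := mem_exx.mp ha'
          exact hi ha''
        · obtain ⟨hap, ha''⟩ := mem_exx.mp ha'
          obtain ⟨hbp, hb''⟩ := mem_exx.mp hb'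
          exact hJ'.2.2.2 j ⟨a, hap⟩ ha'' ⟨b, hbp⟩ hb''
    · rw [if_neg hji] at ha hb
      obtain ⟨hap, ha''⟩ := mem_exx.mp ha
      obtain ⟨hbp, hb''⟩ := mem_exx.mp hb
      exact hJ'.2.2.2 j ⟨a, hap⟩ ha'' ⟨b, hbp⟩ hb''

lemma part_insert_ne_singleton {k : ℕ} {J' : Fin k → Finset {u : V // u ≠ p}}
    (hJ' : (G.induce {u | u ≠ p}).IsOrderedPartition J') (i : Fin k) :
    ¬∃ i', (fun j => if j = i then insert p (exx p (J' j)) else exx p (J' j)) i' = {p} := by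
  rintro ⟨i', hi'⟩
  dsimp only at hi'
  obtain ⟨x, hx⟩ := exx_nonempty (hJ'.1 i')
  by_cases hii : i' = i
  · rw [if_pos hii] at hi'
    have hxm : x ∈ ({p} : Finset V) := hi' ▸ Finset.mem_insert_of_mem hx
    rw [Finset.mem_singleton] at hxm
    exact not_mem_exx p (J' i') (hxm ▸ hx)
  · rw [if_neg hii] at hi'
    have hxm : x ∈ ({p} : Finset V) := hi' ▸ hx
    rw [Finset.mem_singleton] at hxm
    exact not_mem_exx p (J' i') (hxm ▸ hx)

/-- Partitions of `G` in which `p`'s part is not a singleton correspond to pairs of a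
partition of the induced subgraph and a part avoiding `q`. -/
noncomputable def e2 (hq : ∀ r, G.Adj p r ↔ r = q) (hqp : q ≠ p) (m : ℕ) :
    {J : {J : Fin (m + 1) → Finset V // G.IsOrderedPartition J} // ¬∃ i, J.1 i = {p}} ≃
      {x : {J : Fin (m + 1) → Finset {u : V // u ≠ p} //
          (G.induce {u | u ≠ p}).IsOrderedPartition J} × Fin (m + 1) //
        (⟨q, hqp⟩ : {u : V // u ≠ p}) ∉ x.1.1 x.2} where
  toFun JJ :=
    ⟨(⟨fun j => res p (JJ.1.1 j), part_res_all JJ.1.2 JJ.2⟩,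
      (exists_mem_part JJ.1.2 p).choose),
      q_not_mem_res JJ.1.2 hq (exists_mem_part JJ.1.2 p).choose_spec hqp⟩
  invFun x :=
    ⟨⟨fun j => if j = x.1.2 then insert p (exx p (x.1.1.1 j)) else exx p (x.1.1.1 j),
      part_insert hq hqp x.1.1.2 x.2⟩, part_insert_ne_singleton x.1.1.2 x.1.2⟩
  left_inv JJ := by
    obtain ⟨⟨J, hJ⟩, hnP⟩ := JJ
    apply Subtype.ext
    apply Subtype.ext
    dsimp only
    generalize_proofs h
    have hspec : p ∈ J h.choose := h.choose_spec
    funext j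
    rcases eq_or_ne j h.choose with rfl | hji
    · rw [if_pos rfl, exx_res, Finset.insert_erase hspec]
    · rw [if_neg hji]
      apply exx_res_of_not_mem
      intro hpj
      exact hji (mem_part_unique hJ hpj hspec)
  right_inv x := by
    obtain ⟨⟨⟨J', hJ'⟩, i⟩, hi⟩ := x
    apply Subtype.ext
    dsimp only at hi ⊢
    generalize_proofs h1 h
    have hch : h.choose = i := by
      rcases eq_or_ne h.choose i with he | hne
      · exact he
      · exfalso
        have hs := h.choose_spec
        try dsimp only at hs
        rw [if_neg hne] at hs
        exact not_mem_exx p _ hs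
    refine Prod.ext ?_ ?_
    · apply Subtype.ext
      funext j
      dsimp only
      by_cases hji : j = i
      · rw [if_pos hji]
        ext x'
        simp only [mem_res, Finset.mem_insert, coe_mem_exx]
        exact or_iff_right x'.2
      · rw [if_neg hji, res_exx]
    · exact hch

lemma card_fiber {m : ℕ} (hqp : q ≠ p)
    (a : {J : Fin (m + 1) → Finset {u : V // u ≠ p} //
        (G.induce {u | u ≠ p}).IsOrderedPartition J}) :
    Nat.card {b : Fin (m + 1) // (⟨q, hqp⟩ : {u : V // u ≠ p}) ∉ a.1 b} = m := by
  classical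
  obtain ⟨i₀, hi₀⟩ := exists_mem_part a.2 (⟨q, hqp⟩ : {u : V // u ≠ p})
  have hiff : ∀ b, ((⟨q, hqp⟩ : {u : V // u ≠ p}) ∉ a.1 b) ↔ b ≠ i₀ := by
    intro b
    constructor
    · intro h hbi; exact h (hbi ▸ hi₀)
    · intro hne hmem; exact hne (mem_part_unique a.2 hmem hi₀)
  rw [Nat.card_congr (Equiv.subtypeEquivRight hiff), Nat.card_eq_fintype_card,
    Fintype.card_subtype_compl, Fintype.card_subtype_eq, Fintype.card_fin]
  omega

lemma main_count (G : SimpleGraph V) (p q : V) (hq : ∀ r, G.Adj p r ↔ r = q) (m : ℕ) :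
    Nat.card {J : Fin (m + 1) → Finset V // G.IsOrderedPartition J} =
      (m + 1) * Nat.card {J : Fin m → Finset {u : V // u ≠ p} //
          (G.induce {u | u ≠ p}).IsOrderedPartition J} +
        m * Nat.card {J : Fin (m + 1) → Finset {u : V // u ≠ p} //
          (G.induce {u | u ≠ p}).IsOrderedPartition J} := by
  classical
  have hqp : q ≠ p := fun h => G.loopless.irrefl p (h ▸ (hq q).mpr rfl)
  rw [← Nat.card_congr (Equiv.sumCompl
    (fun J : {J : Fin (m + 1) → Finset V // G.IsOrderedPartition J} => ∃ i, J.1 i = {p}))]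
  rw [Nat.card_sum, Nat.card_congr (e1 G p m), Nat.card_congr (e2 hq hqp m), Nat.card_prod]
  congr 1
  · congr 1
    rw [Nat.card_eq_fintype_card, Fintype.card_fin]
  · rw [Nat.card_congr (Equiv.subtypeProdEquivSigmaSubtype
      (fun (a : {J : Fin (m + 1) → Finset {u : V // u ≠ p} //
          (G.induce {u | u ≠ p}).IsOrderedPartition J}) (b : Fin (m + 1)) =>
        (⟨q, hqp⟩ : {u : V // u ≠ p}) ∉ a.1 b))]
    rw [Nat.card_eq_fintype_card, Fintype.card_sigma]
    have hfib : ∀ a : {J : Fin (m + 1) → Finset {u : V // u ≠ p} //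
        (G.induce {u | u ≠ p}).IsOrderedPartition J},
        Fintype.card {b : Fin (m + 1) // (⟨q, hqp⟩ : {u : V // u ≠ p}) ∉ a.1 b} = m := by
      intro a
      rw [← Nat.card_eq_fintype_card]
      exact card_fiber hqp a
    rw [Finset.sum_congr rfl (fun a _ => hfib a), Finset.sum_const, smul_eq_mul,
      Finset.card_univ, ← Nat.card_eq_fintype_card, Nat.mul_comm]

end PendantAux

/-- **Deleting a pendant vertex: `c_k` recursion.** If `p` is a vertex of `G` adjacent to
exactly one vertex, and `G'` is obtained by deleting `p`, then
`c_k(G) = k·c_{k−1}(G') + (k−1)·c_k(G')` for all `k ≥ 1`. -/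
theorem ckPart_pendant_vertex {V : Type*} [Fintype V] [DecidableEq V]
    (G : SimpleGraph V) (hV : 2 ≤ Fintype.card V)
    (p : V) (hp : ∃! q : V, G.Adj p q) (k : ℕ) (hk : 1 ≤ k) :
    G.ckPart k =
      k * (G.induce {u | u ≠ p}).ckPart (k - 1) + (k - 1) * (G.induce {u | u ≠ p}).ckPart k := by
  classical
  obtain ⟨m, rfl⟩ : ∃ m, k = m + 1 := ⟨k - 1, (Nat.succ_pred_eq_of_pos hk).symm⟩
  obtain ⟨q, hq1, hq2⟩ := hp
  have hq : ∀ r, G.Adj p r ↔ r = q := fun r => ⟨fun h => hq2 r h, fun h => h ▸ hq1⟩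
  have hqp : q ≠ p := fun h => G.loopless.irrefl p (h ▸ hq1)
  have hmain := PendantAux.main_count G p q hq m
  have h0 : G.ckPart (m + 1) =
      Nat.card {J : Fin (m + 1) → Finset V // G.IsOrderedPartition J} := by
    rw [SimpleGraph.ckPart, if_neg (Nat.succ_ne_zero m)]
  have h2 : (G.induce {u | u ≠ p}).ckPart (m + 1) =
      Nat.card {J : Fin (m + 1) → Finset {u : V // u ≠ p} //
        (G.induce {u | u ≠ p}).IsOrderedPartition J} := by
    rw [SimpleGraph.ckPart, if_neg (Nat.succ_ne_zero m)]
    rfl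
  rw [h0, hmain]
  simp only [Nat.add_sub_cancel]
  rcases Nat.eq_zero_or_pos m with rfl | hm
  · have hzero : Nat.card {J : Fin 0 → Finset {u : V // u ≠ p} //
        (G.induce {u | u ≠ p}).IsOrderedPartition J} = 0 := by
      haveI : IsEmpty {J : Fin 0 → Finset {u : V // u ≠ p} //
          (G.induce {u | u ≠ p}).IsOrderedPartition J} := by
        refine ⟨fun JJ => ?_⟩
        obtain ⟨J, hJ⟩ := JJ
        have hcov := hJ.2.2.1
        rw [Finset.univ_eq_empty (α := Fin 0), Finset.biUnion_empty] at hcov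
        have hqm := Finset.mem_univ (⟨q, hqp⟩ : {u : V // u ≠ p})
        rw [← hcov] at hqm
        exact Finset.notMem_empty _ hqm
      exact Nat.card_of_isEmpty
    rw [hzero]
    simp [SimpleGraph.ckPart]
  · have h1 : (G.induce {u | u ≠ p}).ckPart m =
        Nat.card {J : Fin m → Finset {u : V // u ≠ p} //
          (G.induce {u | u ≠ p}).IsOrderedPartition J} := by
      rw [SimpleGraph.ckPart, if_neg hm.ne']
      rfl
    rw [h2, h1]
end

section
/- Let G be a finite simple graph with at least two vertices, let p be a vertex of G that is adjacent to exactly one vertex of G, and let G' be the induced subgraph of G obtained by deleting p. Then c(G) = c(G'). -/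
set_option linter.unusedSectionVars false
set_option linter.unusedVariables false
set_option maxHeartbeats 1000000
section AuxPendant
namespace SimpleGraph
variable {V : Type*} [Fintype V] [DecidableEq V]

variable {G : SimpleGraph V}

lemma IsOrderedPartition.existsUnique {k : ℕ} {J : Fin k → Finset V}
    (h : G.IsOrderedPartition J) (v : V) : ∃! i, v ∈ J i := by
  obtain ⟨-, hdisj, hcov, -⟩ := h
  have : v ∈ Finset.univ.biUnion J := by rw [hcov]; exact Finset.mem_univ v
  obtain ⟨i, -, hi⟩ := Finset.mem_biUnion.mp this
  refine ⟨i, hi, fun j hj => ?_⟩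
  by_contra hne
  exact (Finset.disjoint_left.mp (hdisj j i hne)) hj hi

lemma ckPart_eq_zero_of_card_lt {k : ℕ} (h : Fintype.card V < k) : G.ckPart k = 0 := by
  have hk : k ≠ 0 := by omega
  rw [ckPart, if_neg hk]
  have : IsEmpty {J : Fin k → Finset V // G.IsOrderedPartition J} := by
    constructor
    rintro ⟨J, hne, hdisj, hcov, -⟩
    have h1 : (Finset.univ : Finset (Fin k)).card ≤ (Finset.univ.biUnion J).card := by
      rw [Finset.card_biUnion (fun i _ j _ hij => hdisj i j hij)]
      calc (Finset.univ : Finset (Fin k)).card = ∑ _i : Fin k, 1 := by simp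
        _ ≤ ∑ i : Fin k, (J i).card :=
            Finset.sum_le_sum fun i _ => Finset.card_pos.mpr (hne i)
    rw [hcov] at h1
    simp only [Finset.card_univ, Fintype.card_fin] at h1
    omega
  simp

section Pendant

variable (p : V)

/-- Lift a finset of `{u | u ≠ p}` to a finset of `V`. -/
def pLift (s : Finset ↥{u : V | u ≠ p}) : Finset V :=
  s.map (Function.Embedding.subtype _)

/-- Restrict a finset of `V` to `{u | u ≠ p}`. -/
noncomputable def pRes (s : Finset V) : Finset ↥{u : V | u ≠ p} :=
  s.preimage Subtype.val Subtype.val_injective.injOn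

variable {p}

lemma mem_pLift {s : Finset ↥{u : V | u ≠ p}} {v : V} :
    v ∈ pLift p s ↔ ∃ h : v ≠ p, ⟨v, h⟩ ∈ s := by
  simp only [pLift, Finset.mem_map, Function.Embedding.coe_subtype]
  constructor
  · rintro ⟨⟨a, ha⟩, has, rfl⟩; exact ⟨ha, has⟩
  · rintro ⟨h, hs⟩; exact ⟨⟨v, h⟩, hs, rfl⟩

lemma mem_pRes {s : Finset V} {v : ↥{u : V | u ≠ p}} :
    v ∈ pRes p s ↔ (v : V) ∈ s := Finset.mem_preimage

lemma notMem_pLift (s : Finset ↥{u : V | u ≠ p}) : p ∉ pLift p s := by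
  rw [mem_pLift]; rintro ⟨h, -⟩; exact h rfl

lemma pLift_injective : Function.Injective (pLift p) := fun s t h =>
  Finset.map_injective _ h

lemma pLift_pRes (s : Finset V) : pLift p (pRes p s) = s.erase p := by
  ext v
  simp only [mem_pLift, mem_pRes, Finset.mem_erase]
  constructor
  · rintro ⟨h, hs⟩; exact ⟨h, hs⟩
  · rintro ⟨h, hs⟩; exact ⟨h, hs⟩

lemma pLift_pRes_of_notMem {s : Finset V} (h : p ∉ s) : pLift p (pRes p s) = s := by
  rw [pLift_pRes, Finset.erase_eq_of_notMem h]

lemma pRes_nonempty {s : Finset V} (hs : s.Nonempty) (h : ¬ s ⊆ {p}) :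
    (pRes p s).Nonempty := by
  obtain ⟨v, hv, hvp⟩ : ∃ v ∈ s, v ≠ p := by
    by_contra hc
    push_neg at hc
    exact h fun v hv => Finset.mem_singleton.mpr (hc v hv)
  exact ⟨⟨v, hvp⟩, mem_pRes.mpr hv⟩

lemma pLift_nonempty {s : Finset ↥{u : V | u ≠ p}} (hs : s.Nonempty) :
    (pLift p s).Nonempty := hs.map

lemma pLift_disjoint {s t : Finset ↥{u : V | u ≠ p}} (h : Disjoint s t) :
    Disjoint (pLift p s) (pLift p t) := by
  rw [Finset.disjoint_left] at h ⊢
  intro a has hat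
  rw [mem_pLift] at has hat
  obtain ⟨ha, has'⟩ := has
  obtain ⟨ha2, hat'⟩ := hat
  exact h has' hat'


end Pendant

lemma induce_adj' {s : Set V} {a b : ↥s} : (G.induce s).Adj a b ↔ G.Adj a b := Iff.rfl

section Main

variable {p q : V} (hadj : G.Adj p q) (huniq : ∀ b, G.Adj p b → b = q)
  {m : ℕ}

/-- Case A insertion: part `i` is the singleton `{p}`. -/
lemma isOrderedPartition_insA (i : Fin (m + 1)) {I : Fin m → Finset ↥{u : V | u ≠ p}}
    (hI : (G.induce {u | u ≠ p}).IsOrderedPartition I) :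
    G.IsOrderedPartition (i.insertNth ({p} : Finset V) fun j => pLift p (I j)) := by
  obtain ⟨hne, hdisj, hcov, hind⟩ := hI
  have hmem : ∀ (j : Fin (m + 1)) (v : V), v ∈ Fin.insertNth (α := fun _ => Finset V) i {p} (fun j => pLift p (I j)) j ↔
      (j = i ∧ v = p) ∨ ∃ (j' : Fin m) (h : v ≠ p), j = i.succAbove j' ∧ ⟨v, h⟩ ∈ I j' := by
    intro j v
    rcases eq_or_ne j i with rfl | hji
    · simp only [Fin.insertNth_apply_same, Finset.mem_singleton, true_and]
      constructor
      · intro h; exact Or.inl h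
      · rintro (h | ⟨j', h, hj, -⟩)
        · exact h
        · exact absurd hj.symm (Fin.succAbove_ne j j')
    · obtain ⟨j', rfl⟩ := Fin.exists_succAbove_eq hji
      rw [Fin.insertNth_apply_succAbove]
      rw [mem_pLift]
      constructor
      · rintro ⟨h, hmem⟩; exact Or.inr ⟨j', h, rfl, hmem⟩
      · rintro (⟨h, -⟩ | ⟨j'', h, heq, hmem⟩)
        · exact absurd h hji
        · cases Fin.succAbove_right_injective heq
          exact ⟨h, hmem⟩
  refine ⟨?_, ?_, ?_, ?_⟩
  · intro j
    rcases eq_or_ne j i with rfl | hji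
    · rw [Fin.insertNth_apply_same]; exact ⟨p, Finset.mem_singleton_self p⟩
    · obtain ⟨j', rfl⟩ := Fin.exists_succAbove_eq hji
      rw [Fin.insertNth_apply_succAbove]
      exact pLift_nonempty (hne j')
  · intro j j' hjj'
    rw [Finset.disjoint_left]
    intro a ha ha'
    rw [hmem] at ha ha'
    rcases ha with ⟨rfl, rfl⟩ | ⟨k, h, rfl, hk⟩
    · rcases ha' with ⟨rfl, -⟩ | ⟨k, h, -, -⟩
      · exact hjj' rfl
      · exact h rfl
    · rcases ha' with ⟨-, rfl⟩ | ⟨k', h', heq, hk'⟩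
      · exact h rfl
      · have hkk' : k ≠ k' := fun hc => hjj' (by rw [hc, heq])
        exact Finset.disjoint_left.mp (hdisj k k' hkk') hk hk'
  · apply Finset.eq_univ_of_forall
    intro v
    rw [Finset.mem_biUnion]
    rcases eq_or_ne v p with rfl | hvp
    · exact ⟨i, Finset.mem_univ i, (hmem i v).mpr (Or.inl ⟨rfl, rfl⟩)⟩
    · have : (⟨v, hvp⟩ : ↥{u : V | u ≠ p}) ∈ Finset.univ.biUnion I := by
        rw [hcov]; exact Finset.mem_univ _
      obtain ⟨j', -, hj'⟩ := Finset.mem_biUnion.mp this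
      exact ⟨i.succAbove j', Finset.mem_univ _,
        (hmem _ v).mpr (Or.inr ⟨j', hvp, rfl, hj'⟩)⟩
  · intro j a ha b hb hab
    rw [hmem] at ha hb
    rcases ha with ⟨rfl, rfl⟩ | ⟨k, h, hk0, hk⟩
    · rcases hb with ⟨-, rfl⟩ | ⟨k, h, hk0, -⟩
      · exact G.irrefl hab
      · exact absurd hk0.symm (Fin.succAbove_ne j k)
    · rcases hb with ⟨hji, -⟩ | ⟨k', h', hk0', hk'⟩
      · exact absurd (hji.symm.trans hk0).symm (Fin.succAbove_ne i k)
      · rw [hk0] at hk0'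
        cases Fin.succAbove_right_injective hk0'
        exact hind k _ hk _ hk' hab

include huniq in
/-- Case B insertion: `p` is added to part `i`. -/
lemma isOrderedPartition_insB (i : Fin (m + 1)) {I : Fin (m + 1) → Finset ↥{u : V | u ≠ p}}
    (hI : (G.induce {u | u ≠ p}).IsOrderedPartition I)
    (hq : (⟨q, hadj.ne'⟩ : ↥{u : V | u ≠ p}) ∉ I i) :
    G.IsOrderedPartition
      (fun j => if j = i then insert p (pLift p (I j)) else pLift p (I j)) := by
  obtain ⟨hne, hdisj, hcov, hind⟩ := hI
  have hmem : ∀ (j : Fin (m + 1)) (v : V),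
      v ∈ (if j = i then insert p (pLift p (I j)) else pLift p (I j)) ↔
      (j = i ∧ v = p) ∨ ∃ h : v ≠ p, ⟨v, h⟩ ∈ I j := by
    intro j v
    rcases eq_or_ne j i with h | h
    · rw [if_pos h, Finset.mem_insert, mem_pLift]
      constructor
      · rintro (rfl | ⟨hv, hmem⟩)
        · exact Or.inl ⟨h, rfl⟩
        · exact Or.inr ⟨hv, hmem⟩
      · rintro (⟨-, rfl⟩ | ⟨hv, hmem⟩)
        · exact Or.inl rfl
        · exact Or.inr ⟨hv, hmem⟩
    · rw [if_neg h, mem_pLift]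
      constructor
      · rintro ⟨hv, hmem⟩; exact Or.inr ⟨hv, hmem⟩
      · rintro (⟨hji, -⟩ | ⟨hv, hmem⟩)
        · exact absurd hji h
        · exact ⟨hv, hmem⟩
  refine ⟨?_, ?_, ?_, ?_⟩
  · intro j
    dsimp only
    rcases eq_or_ne j i with h | h
    · rw [if_pos h]; exact ⟨p, Finset.mem_insert_self _ _⟩
    · rw [if_neg h]; exact pLift_nonempty (hne j)
  · intro j j' hjj'
    rw [Finset.disjoint_left]
    intro a ha ha'
    rw [hmem] at ha ha'
    rcases ha with ⟨hji, rfl⟩ | ⟨h, hk⟩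
    · rcases ha' with ⟨hji', -⟩ | ⟨h', -⟩
      · exact hjj' (hji.trans hji'.symm)
      · exact h' rfl
    · rcases ha' with ⟨-, rfl⟩ | ⟨h', hk'⟩
      · exact h rfl
      · exact Finset.disjoint_left.mp (hdisj j j' hjj') hk
          (by convert hk')
  · apply Finset.eq_univ_of_forall
    intro v
    rw [Finset.mem_biUnion]
    rcases eq_or_ne v p with rfl | hvp
    · exact ⟨i, Finset.mem_univ i, (hmem i v).mpr (Or.inl ⟨rfl, rfl⟩)⟩
    · have : (⟨v, hvp⟩ : ↥{u : V | u ≠ p}) ∈ Finset.univ.biUnion I := by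
        rw [hcov]; exact Finset.mem_univ _
      obtain ⟨j', -, hj'⟩ := Finset.mem_biUnion.mp this
      exact ⟨j', Finset.mem_univ _, (hmem j' v).mpr (Or.inr ⟨hvp, hj'⟩)⟩
  · intro j a ha b hb hab
    rw [hmem] at ha hb
    rcases ha with ⟨rfl, rfl⟩ | ⟨h, hk⟩
    · rcases hb with ⟨-, rfl⟩ | ⟨h, hk⟩
      · exact G.irrefl hab
      · have : b = q := huniq b hab
        subst this
        exact hq (by convert hk)
    · rcases hb with ⟨rfl, rfl⟩ | ⟨h', hk'⟩
      · have : a = q := huniq a hab.symm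
        subst this
        exact hq (by convert hk)
      · exact hind j _ hk _ hk' hab


lemma pmem_insA (i : Fin (m + 1)) (I : Fin m → Finset ↥{u : V | u ≠ p}) (j : Fin (m + 1)) :
    p ∈ Fin.insertNth (α := fun _ => Finset V) i {p} (fun j => pLift p (I j)) j ↔ j = i := by
  rcases eq_or_ne j i with rfl | h
  · simp [Fin.insertNth_apply_same]
  · obtain ⟨j', rfl⟩ := Fin.exists_succAbove_eq h
    rw [Fin.insertNth_apply_succAbove]
    simp [notMem_pLift, Fin.succAbove_ne i j']

lemma pmem_insB (i : Fin (m + 1)) (I : Fin (m + 1) → Finset ↥{u : V | u ≠ p})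
    (j : Fin (m + 1)) :
    p ∈ (if j = i then insert p (pLift p (I j)) else pLift p (I j)) ↔ j = i := by
  rcases eq_or_ne j i with h | h
  · simp [if_pos h, h]
  · simp [if_neg h, notMem_pLift, h]

end Main

lemma ckPart_eq_card' (G : SimpleGraph V) (hW : Nonempty V) (k : ℕ) :
    G.ckPart k = Nat.card {J : Fin k → Finset V // G.IsOrderedPartition J} := by
  rcases Nat.eq_zero_or_pos k with rfl | hk
  · rw [ckPart, if_pos rfl]
    have : IsEmpty {J : Fin 0 → Finset V // G.IsOrderedPartition J} := by
      constructor; rintro ⟨J, -, -, hcov, -⟩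
      obtain ⟨w⟩ := hW
      have hw : w ∈ Finset.univ.biUnion J := by rw [hcov]; exact Finset.mem_univ w
      simp at hw
    simp
  · rw [ckPart, if_neg (by omega)]

section Rec
variable {G : SimpleGraph V} {p q : V}

lemma ckPart_succ_rec (hadj : G.Adj p q) (huniq : ∀ b, G.Adj p b → b = q) (m : ℕ) :
    G.ckPart (m + 1) = m * (G.induce {u | u ≠ p}).ckPart (m + 1)
      + (m + 1) * (G.induce {u | u ≠ p}).ckPart m := by
  classical
  set G' := G.induce {u | u ≠ p} with hG'
  have hqp : q ≠ p := hadj.ne'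
  set qv : ↥{u : V | u ≠ p} := ⟨q, hqp⟩ with hqv
  have hWne : Nonempty ↥{u : V | u ≠ p} := ⟨qv⟩
  let A := Fin (m + 1) × {I : Fin m → Finset ↥{u : V | u ≠ p} // G'.IsOrderedPartition I}
  let B := {x : Fin (m + 1) × (Fin (m + 1) → Finset ↥{u : V | u ≠ p}) //
      G'.IsOrderedPartition x.2 ∧ qv ∉ x.2 x.1}
  let f : A ⊕ B → {J : Fin (m + 1) → Finset V // G.IsOrderedPartition J} :=
    Sum.elim
      (fun x => ⟨Fin.insertNth x.1 ({p} : Finset V) fun j => pLift p (x.2.1 j),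
        isOrderedPartition_insA x.1 x.2.2⟩)
      (fun x => ⟨fun j => if j = x.1.1 then insert p (pLift p (x.1.2 j)) else pLift p (x.1.2 j),
        isOrderedPartition_insB hadj huniq x.1.1 x.2.1 x.2.2⟩)
  have hbij : Function.Bijective f := by
    constructor
    · rintro (⟨i, I, hI⟩ | ⟨⟨i, I⟩, hI, hqI⟩) (⟨i', I', hI'⟩ | ⟨⟨i', I'⟩, hI', hqI'⟩) hff <;>
        simp only [f, Sum.elim_inl, Sum.elim_inr, Subtype.mk.injEq] at hff
      · -- inl / inl
        have hi : i = i' := (pmem_insA i' I' i).mp (congrFun hff i ▸ (pmem_insA i I i).mpr rfl)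
        subst hi
        have hIj : ∀ j, I j = I' j := by
          intro j
          have h := congrFun hff (i.succAbove j)
          rw [Fin.insertNth_apply_succAbove, Fin.insertNth_apply_succAbove] at h
          exact pLift_injective h
        cases funext hIj
        rfl
      · -- inl / inr : impossible
        exfalso
        have hi : i = i' := (pmem_insB i' I' i).mp (congrFun hff i ▸ (pmem_insA i I i).mpr rfl)
        subst hi
        have h2 := congrFun hff i
        rw [Fin.insertNth_apply_same, if_pos rfl] at h2
        obtain ⟨v, hv⟩ := hI'.1 i
        have hvmem : (v : V) ∈ insert p (pLift p (I' i)) :=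
          Finset.mem_insert_of_mem (mem_pLift.mpr ⟨v.2, hv⟩)
        rw [← h2] at hvmem
        exact v.2 (Finset.mem_singleton.mp hvmem)
      · -- inr / inl : impossible
        exfalso
        have hi : i = i' := (pmem_insA i' I' i).mp (congrFun hff i ▸ (pmem_insB i I i).mpr rfl)
        subst hi
        have h2 := congrFun hff i
        rw [Fin.insertNth_apply_same, if_pos rfl] at h2
        obtain ⟨v, hv⟩ := hI.1 i
        have hvmem : (v : V) ∈ insert p (pLift p (I i)) :=
          Finset.mem_insert_of_mem (mem_pLift.mpr ⟨v.2, hv⟩)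
        rw [h2] at hvmem
        exact v.2 (Finset.mem_singleton.mp hvmem)
      · -- inr / inr
        have hi : i = i' := (pmem_insB i' I' i).mp (congrFun hff i ▸ (pmem_insB i I i).mpr rfl)
        subst hi
        have hIj : ∀ j, I j = I' j := by
          intro j
          have h := congrFun hff j
          rcases eq_or_ne j i with rfl | hj
          · rw [if_pos rfl, if_pos rfl] at h
            have h3 := congrArg (fun s => Finset.erase s p) h
            simp only [Finset.erase_insert (notMem_pLift _)] at h3
            exact pLift_injective h3
          · rw [if_neg hj, if_neg hj] at h
            exact pLift_injective h
        cases funext hIj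
        rfl
    · rintro ⟨J, hJ⟩
      obtain ⟨hne, hdisj, hcov, hind⟩ := id hJ
      obtain ⟨i, hpi, hup⟩ := hJ.existsUnique p
      have hnotmem : ∀ j, j ≠ i → p ∉ J j := fun j hj hc => hj (hup j hc)
      by_cases hsing : J i = {p}
      · refine ⟨Sum.inl ⟨i, ⟨fun j => pRes p (J (i.succAbove j)), ?_⟩⟩, ?_⟩
        · refine ⟨?_, ?_, ?_, ?_⟩
          · intro j
            refine pRes_nonempty (hne _) fun hsub => ?_
            obtain ⟨v, hv⟩ := hne (i.succAbove j)
            have hvp := Finset.mem_singleton.mp (hsub hv)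
            exact hnotmem _ (Fin.succAbove_ne i j) (by rwa [hvp] at hv)
          · intro j j' hjj'
            rw [Finset.disjoint_left]
            intro a ha ha'
            rw [mem_pRes] at ha ha'
            exact Finset.disjoint_left.mp
              (hdisj _ _ fun hc => hjj' (Fin.succAbove_right_injective hc)) ha ha'
          · apply Finset.eq_univ_of_forall
            intro v
            rw [Finset.mem_biUnion]
            have hv0 : (v : V) ∈ Finset.univ.biUnion J := by
              rw [hcov]; exact Finset.mem_univ _
            obtain ⟨j, -, hj⟩ := Finset.mem_biUnion.mp hv0
            have hji : j ≠ i := by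
              rintro rfl
              rw [hsing] at hj
              exact v.2 (Finset.mem_singleton.mp hj)
            obtain ⟨j', rfl⟩ := Fin.exists_succAbove_eq hji
            exact ⟨j', Finset.mem_univ _, mem_pRes.mpr hj⟩
          · intro j a ha b hb
            rw [mem_pRes] at ha hb
            exact hind _ _ ha _ hb
        · apply Subtype.ext
          funext j
          show Fin.insertNth (α := fun _ => Finset V) i {p}
            (fun j => pLift p (pRes p (J (i.succAbove j)))) j = J j
          rcases eq_or_ne j i with rfl | hj
          · rw [Fin.insertNth_apply_same, hsing]
          · obtain ⟨j', rfl⟩ := Fin.exists_succAbove_eq hj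
            rw [Fin.insertNth_apply_succAbove]
            exact pLift_pRes_of_notMem (hnotmem _ (Fin.succAbove_ne i j'))
      · refine ⟨Sum.inr ⟨⟨i, fun j => pRes p (J j)⟩, ⟨?_, ?_⟩⟩, ?_⟩
        · refine ⟨?_, ?_, ?_, ?_⟩
          · intro j
            refine pRes_nonempty (hne j) fun hsub => ?_
            rcases eq_or_ne j i with rfl | hj
            · rcases Finset.subset_singleton_iff.mp hsub with h0 | h0
              · exact (hne j).ne_empty h0
              · exact hsing h0
            · obtain ⟨v, hv⟩ := hne j
              have hvp := Finset.mem_singleton.mp (hsub hv)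
              exact hnotmem j hj (by rwa [hvp] at hv)
          · intro j j' hjj'
            rw [Finset.disjoint_left]
            intro a ha ha'
            rw [mem_pRes] at ha ha'
            exact Finset.disjoint_left.mp (hdisj j j' hjj') ha ha'
          · apply Finset.eq_univ_of_forall
            intro v
            rw [Finset.mem_biUnion]
            have hv0 : (v : V) ∈ Finset.univ.biUnion J := by
              rw [hcov]; exact Finset.mem_univ _
            obtain ⟨j, -, hj⟩ := Finset.mem_biUnion.mp hv0
            exact ⟨j, Finset.mem_univ _, mem_pRes.mpr hj⟩
          · intro j a ha b hb
            rw [mem_pRes] at ha hb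
            exact hind _ _ ha _ hb
        · rw [mem_pRes]
          intro hc
          exact hind i p hpi q hc hadj
        · apply Subtype.ext
          funext j
          show (if j = i then insert p (pLift p (pRes p (J j)))
            else pLift p (pRes p (J j))) = J j
          rcases eq_or_ne j i with rfl | hj
          · rw [if_pos rfl, pLift_pRes, Finset.insert_erase hpi]
          · rw [if_neg hj]
            exact pLift_pRes_of_notMem (hnotmem j hj)
  have hcard := Nat.card_eq_of_bijective f hbij
  rw [Nat.card_sum] at hcard
  have hA : Nat.card A = (m + 1) * G'.ckPart m := by
    rw [Nat.card_prod, Nat.card_eq_fintype_card, Fintype.card_fin,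
      ckPart_eq_card' G' hWne]
  have hB : Nat.card B = m * G'.ckPart (m + 1) := by
    have e1 : B ≃ Σ I : {I : Fin (m + 1) → Finset ↥{u : V | u ≠ p} //
        G'.IsOrderedPartition I}, {i : Fin (m + 1) // qv ∉ I.1 i} :=
      { toFun := fun x => ⟨⟨x.1.2, x.2.1⟩, ⟨x.1.1, x.2.2⟩⟩
        invFun := fun x => ⟨(x.2.1, x.1.1), x.1.2, x.2.2⟩
        left_inv := fun x => rfl
        right_inv := fun x => rfl }
    have e2 : ∀ I : {I : Fin (m + 1) → Finset ↥{u : V | u ≠ p} //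
        G'.IsOrderedPartition I}, {i : Fin (m + 1) // qv ∉ I.1 i} ≃ Fin m := by
      intro I
      have hu := I.2.existsUnique qv
      refine (Equiv.subtypeEquivRight fun i => ?_).trans (finSuccAboveEquiv hu.choose).symm
      constructor
      · intro h hi
        exact h (hi ▸ hu.choose_spec.1)
      · intro h hi
        exact h (hu.choose_spec.2 i hi)
    have := Nat.card_congr ((e1.trans (Equiv.sigmaCongrRight e2)).trans
      (Equiv.sigmaEquivProd _ (Fin m)))
    rw [this, Nat.card_prod, ckPart_eq_card' G' hWne,
      Nat.card_eq_fintype_card (α := Fin m), Fintype.card_fin, Nat.mul_comm]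
  have hmain : G.ckPart (m + 1) = Nat.card {J : Fin (m + 1) → Finset V //
      G.IsOrderedPartition J} := ckPart_eq_card' G ⟨p⟩ (m + 1)
  rw [hmain, ← hcard, hA, hB, Nat.add_comm]

end Rec
end SimpleGraph
end AuxPendant

/-- **Deleting a pendant vertex preserves `c`.** If `p` is a vertex of `G` adjacent to
exactly one vertex, and `G'` is obtained by deleting `p`, then `c(G) = c(G')`. -/
theorem cInv_pendant_vertex {V : Type*} [Fintype V] [DecidableEq V]
    (G : SimpleGraph V) (hV : 2 ≤ Fintype.card V)
    (p : V) (hp : ∃! q : V, G.Adj p q) :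
    G.cInv = (G.induce {u | u ≠ p}).cInv := by
  classical
  obtain ⟨q, hadj, huniq⟩ := hp
  have hnV : Fintype.card ↥{u : V | u ≠ p} = Fintype.card V - 1 := by
    have e : ↥{u : V | u ≠ p} ≃ {x : V // ¬ x = p} :=
      Equiv.subtypeEquivRight fun u => Iff.rfl
    rw [Fintype.card_congr e, Fintype.card_subtype_compl, Fintype.card_subtype_eq]
  obtain ⟨n, hl⟩ : ∃ n, Fintype.card V = n + 1 :=
    ⟨Fintype.card V - 1, by omega⟩
  have hn1 : 1 ≤ n := by omega
  have hn : Fintype.card ↥{u : V | u ≠ p} = n := by omega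
  rw [SimpleGraph.cInv, SimpleGraph.cInv, hl, hn]
  set c : ℕ → ℚ := fun k => ((G.induce {u | u ≠ p}).ckPart k : ℚ) with hcdef
  have hc0 : c 0 = 0 := by simp [hcdef, SimpleGraph.ckPart]
  have hctop : c (n + 1) = 0 := by
    have := SimpleGraph.ckPart_eq_zero_of_card_lt
      (G := G.induce {u | u ≠ p}) (k := n + 1) (by omega)
    simp [hcdef, this]
  have hrec : ∀ k ∈ Finset.Icc 1 (n + 1), (-1 : ℚ) ^ k * (G.ckPart k : ℚ) / k
      = ((-1) ^ k * c k - (-1) ^ k * c k / k) + (-1) ^ k * c (k - 1) := by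
    intro k hk
    obtain ⟨hk1, -⟩ := Finset.mem_Icc.mp hk
    obtain ⟨m, rfl⟩ : ∃ m, k = m + 1 := ⟨k - 1, by omega⟩
    rw [SimpleGraph.ckPart_succ_rec hadj huniq m]
    simp only [Nat.add_sub_cancel, hcdef]
    have hm0 : ((m : ℚ) + 1) ≠ 0 := by positivity
    push_cast
    field_simp
    ring
  rw [Finset.sum_congr rfl hrec, Finset.sum_add_distrib, Finset.sum_sub_distrib]
  have hS : ∑ k ∈ Finset.Icc 1 (n + 1), (-1 : ℚ) ^ k * c k
      = ∑ k ∈ Finset.Icc 1 n, (-1 : ℚ) ^ k * c k := by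
    rw [Finset.sum_Icc_succ_top (by omega : 1 ≤ n + 1), hctop]
    ring
  have hT : ∑ k ∈ Finset.Icc 1 (n + 1), (-1 : ℚ) ^ k * c k / k
      = ∑ k ∈ Finset.Icc 1 n, (-1 : ℚ) ^ k * c k / k := by
    rw [Finset.sum_Icc_succ_top (by omega : 1 ≤ n + 1), hctop]
    ring
  have hU : ∑ k ∈ Finset.Icc 1 (n + 1), (-1 : ℚ) ^ k * c (k - 1)
      = -∑ k ∈ Finset.Icc 1 n, (-1 : ℚ) ^ k * c k := by
    rw [← Finset.Ico_add_one_right_eq_Icc, Finset.sum_Ico_eq_sum_range,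
      ← Finset.Ico_add_one_right_eq_Icc, Finset.sum_Ico_eq_sum_range]
    simp only [Nat.add_sub_cancel, Nat.add_sub_cancel_left, Nat.succ_sub_one]
    rw [Finset.sum_range_succ', hc0]
    have hterm : ∀ i ∈ Finset.range n,
        (-1 : ℚ) ^ (1 + (i + 1)) * c (i + 1) = -((-1 : ℚ) ^ (1 + i) * c (1 + i)) := by
      intro i _
      have h1 : (1 : ℕ) + i = i + 1 := Nat.add_comm 1 i
      rw [h1]
      ring
    rw [Finset.sum_congr rfl hterm]
    simp
  rw [hS, hT, hU]
  simp only [hcdef]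
  ring
end

section
/- Let G be a finite simple graph with at least one vertex. If G is a tree (connected and acyclic), then c(G) = 1. -/
section Aux
set_option linter.unusedSectionVars false
open Finset
variable {V : Type*} [Fintype V] [DecidableEq V]

def PCol (G : SimpleGraph V) (k : ℕ) : Type _ :=
  {f : V → Fin k // (∀ a b, G.Adj a b → f a ≠ f b) ∧ Function.Surjective f}

lemma part_existsUnique (G : SimpleGraph V) {k : ℕ}
    (J : {J : Fin k → Finset V // G.IsOrderedPartition J}) (x : V) :
    ∃! i, i ∈ Finset.univ ∧ x ∈ J.1 i := by
  obtain ⟨hne, hdis, hcov, hind⟩ := J.2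
  have hx : x ∈ Finset.univ.biUnion J.1 := by rw [hcov]; exact mem_univ x
  rw [Finset.mem_biUnion] at hx
  obtain ⟨i, _, hi⟩ := hx
  refine ⟨i, ⟨mem_univ i, hi⟩, ?_⟩
  rintro j ⟨-, hj⟩
  by_contra hij
  exact (Finset.disjoint_left.mp (hdis j i hij) hj) hi

noncomputable def partToCol (G : SimpleGraph V) {k : ℕ}
    (J : {J : Fin k → Finset V // G.IsOrderedPartition J}) : PCol G k := by
  refine ⟨fun x => Finset.choose _ Finset.univ (part_existsUnique G J x), ?_, ?_⟩
  · intro a b hab heq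
    have ha := Finset.choose_property _ Finset.univ (part_existsUnique G J a)
    have hb := Finset.choose_property _ Finset.univ (part_existsUnique G J b)
    dsimp only at heq
    rw [heq] at ha
    exact J.2.2.2.2 _ _ ha _ hb hab
  · intro i
    obtain ⟨a, ha⟩ := J.2.1 i
    refine ⟨a, ?_⟩
    have ha' := Finset.choose_property _ Finset.univ (part_existsUnique G J a)
    by_contra hne'
    exact (Finset.disjoint_left.mp (J.2.2.1 _ i hne') ha') ha

def colToPart (G : SimpleGraph V) {k : ℕ} (f : PCol G k) :
    {J : Fin k → Finset V // G.IsOrderedPartition J} := by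
  refine ⟨fun i => Finset.univ.filter (fun x => f.1 x = i), ?_, ?_, ?_, ?_⟩
  · intro i
    obtain ⟨x, hx⟩ := f.2.2 i
    exact ⟨x, by simpa using hx⟩
  · intro i j hij
    rw [Finset.disjoint_left]
    intro a ha hb
    simp only [mem_filter] at ha hb
    exact hij (ha.2 ▸ hb.2)
  · ext x
    simp only [Finset.mem_biUnion, mem_filter, mem_univ, true_and, iff_true]
    exact ⟨f.1 x, rfl⟩
  · intro i a ha b hb hab
    simp only [mem_filter] at ha hb
    exact f.2.1 a b hab (ha.2.trans hb.2.symm)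

noncomputable def partEquiv (G : SimpleGraph V) (k : ℕ) :
    {J : Fin k → Finset V // G.IsOrderedPartition J} ≃ PCol G k := by
  refine ⟨partToCol G, colToPart G, ?_, ?_⟩
  · intro J
    apply Subtype.ext
    funext i
    ext x
    simp only [colToPart, mem_filter, mem_univ, true_and]
    constructor
    · rintro h
      have := Finset.choose_property _ Finset.univ (part_existsUnique G J x)
      rw [show Finset.choose _ Finset.univ (part_existsUnique G J x) = i from h] at this
      exact this
    · intro hx
      have := Finset.choose_property _ Finset.univ (part_existsUnique G J x)
      by_contra hne'
      exact (Finset.disjoint_left.mp (J.2.2.1 _ i hne') this) hx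
  · intro f
    apply Subtype.ext
    funext x
    have h1 := Finset.choose_property _ Finset.univ (part_existsUnique G (colToPart G f) x)
    exact (Finset.mem_filter.mp h1).2.symm

lemma ckPart_eq [Nonempty V] (G : SimpleGraph V) (k : ℕ) :
    G.ckPart k = Nat.card (PCol G k) := by
  rcases Nat.eq_zero_or_pos k with rfl | hk
  · have : IsEmpty (PCol G 0) := ⟨fun f => (f.1 (Classical.arbitrary V)).elim0⟩
    simp [SimpleGraph.ckPart, Nat.card_of_isEmpty]
  · rw [SimpleGraph.ckPart, if_neg (by omega), Nat.card_congr (partEquiv G k)]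

lemma exists_leaf (G : SimpleGraph V) (hG : G.IsTree) (h2 : 2 ≤ Fintype.card V) :
    ∃ v u : V, u ≠ v ∧ ∀ y, G.Adj v y ↔ y = u := by
  classical
  have hconn := hG.isConnected
  have hdeg1 : ∀ w : V, 1 ≤ G.degree w := by
    intro w
    obtain ⟨w', hw'⟩ := Fintype.exists_ne_of_one_lt_card (by omega) w
    obtain ⟨p⟩ := (hconn w' w).symm
    cases p with
    | nil => exact absurd rfl hw'
    | cons h _ => exact (G.degree_pos_iff_exists_adj w).mpr ⟨_, h⟩
  have hsum : ∑ w, G.degree w = 2 * (Fintype.card V - 1) := by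
    rw [G.sum_degrees_eq_twice_card_edges]
    have := hG.card_edgeFinset
    omega
  have : ∃ v : V, G.degree v = 1 := by
    by_contra hno
    push_neg at hno
    have h2d : ∀ w : V, 2 ≤ G.degree w := fun w => by
      have := hdeg1 w; have := hno w; omega
    have := Finset.card_nsmul_le_sum Finset.univ (fun w => G.degree w) 2
      (fun w _ => h2d w)
    simp only [smul_eq_mul, Finset.card_univ] at this
    rw [hsum] at this
    omega
  obtain ⟨v, hv⟩ := this
  rw [SimpleGraph.degree, Finset.card_eq_one] at hv
  obtain ⟨u, hu⟩ := hv
  refine ⟨v, u, ?_, fun y => ?_⟩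
  · intro h
    have hm : u ∈ G.neighborFinset v := hu ▸ Finset.mem_singleton_self u
    have hadj := (G.mem_neighborFinset v u).mp hm
    rw [h] at hadj
    exact G.irrefl hadj
  · rw [← SimpleGraph.mem_neighborFinset, hu, Finset.mem_singleton]

lemma induced_isTree (G : SimpleGraph V) (hG : G.IsTree) {v u : V} (hu : u ≠ v)
    (hvu : ∀ y, G.Adj v y ↔ y = u) :
    (G.comap (fun x : {x : V // x ≠ v} => (x : V))).IsTree := by
  classical
  set G' := G.comap (fun x : {x : V // x ≠ v} => (x : V)) with hG'
  have hlift : ∀ (x y : V) (p : G.Walk x y) (hx : x ≠ v) (hy : y ≠ v), v ∉ p.support →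
      G'.Reachable ⟨x, hx⟩ ⟨y, hy⟩ := by
    intro x y p
    induction p with
    | nil =>
      intro hx hy _
      exact SimpleGraph.Reachable.refl _
    | @cons x y z h p ih =>
      intro hx hz hs
      simp only [SimpleGraph.Walk.support_cons, List.mem_cons] at hs
      push_neg at hs
      have hy : y ≠ v := fun hyv => hs.2 (hyv ▸ p.start_mem_support)
      have h1 : G'.Adj ⟨x, hx⟩ ⟨y, hy⟩ := h
      exact (h1.reachable).trans (ih hy hz hs.2)
  have key : ∀ (n : ℕ) (x y : V) (hx : x ≠ v) (hy : y ≠ v) (p : G.Walk x y),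
      p.length ≤ n → G'.Reachable ⟨x, hx⟩ ⟨y, hy⟩ := by
    intro n
    induction n with
    | zero =>
      intro x y hx hy p hp
      have hxy : x = y := p.eq_of_length_eq_zero (Nat.le_zero.mp hp)
      subst hxy
      exact SimpleGraph.Reachable.refl _
    | succ n ih =>
      intro x y hx hy p hp
      by_cases hv : v ∈ p.support
      · obtain ⟨q, r, rfl⟩ := SimpleGraph.Walk.mem_support_iff_exists_append.mp hv
        obtain ⟨w1, h1, t, ht⟩ := SimpleGraph.Walk.exists_eq_cons_of_ne (Ne.symm hx) q.reverse
        obtain ⟨w2, h2, r', hr⟩ := SimpleGraph.Walk.exists_eq_cons_of_ne (Ne.symm hy) r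
        have hw1 : w1 = u := (hvu _).mp h1
        have hw2 : w2 = u := (hvu _).mp h2
        subst hw1; subst hw2
        have hlen : (t.reverse.append r').length ≤ n := by
          have e1 : q.reverse.length = t.length + 1 := by rw [ht]; simp
          have e2 : r.length = r'.length + 1 := by rw [hr]; simp
          have e3 : (q.append r).length = q.length + r.length :=
            SimpleGraph.Walk.length_append q r
          rw [SimpleGraph.Walk.length_reverse] at e1
          rw [SimpleGraph.Walk.length_append, SimpleGraph.Walk.length_reverse]
          omega
        exact ih x y hx hy (t.reverse.append r') hlen
      · exact hlift x y p hx hy hv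
  refine ⟨?_, ?_⟩
  · have hpre : G'.Preconnected := by
      rintro ⟨x, hx⟩ ⟨y, hy⟩
      obtain ⟨p⟩ := hG.isConnected x y
      exact key p.length x y hx hy p le_rfl
    haveI : Nonempty {x : V // x ≠ v} := ⟨⟨u, hu⟩⟩
    exact ⟨hpre⟩
  · intro a c hc
    exact hG.2 (c.map (SimpleGraph.Embedding.comap (Function.Embedding.subtype _) G).toHom)
      (hc.map Subtype.val_injective)

section Rec
variable (G : SimpleGraph V) {v u : V} (hu : u ≠ v) (hvu : ∀ y, G.Adj v y ↔ y = u) (m : ℕ)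

local notation "V'" => {x : V // x ≠ v}
local notation "G''" => SimpleGraph.comap (fun x : {x : V // x ≠ v} => (x : V)) G

/-- The intermediate type. -/
def TCol : Type _ :=
  {p : (V' → Fin (m+1)) × Fin (m+1) //
    (∀ a b : V', (G'').Adj a b → p.1 a ≠ p.1 b) ∧ p.2 ≠ p.1 ⟨u, hu⟩ ∧
      ∀ d, d ≠ p.2 → ∃ x, p.1 x = d}

def pcolEquivT : PCol G (m+1) ≃ TCol G hu m := by
  refine
  { toFun := fun f => ⟨(fun x => f.1 x.1, f.1 v), ?_, ?_, ?_⟩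
    invFun := fun p => ⟨fun x => if h : x = v then p.1.2 else p.1.1 ⟨x, h⟩, ?_, ?_⟩
    left_inv := ?_
    right_inv := ?_ }
  · intro a b hab
    exact f.2.1 a.1 b.1 hab
  · exact f.2.1 v u ((hvu u).mpr rfl)
  · intro d hd
    obtain ⟨x, hx⟩ := f.2.2 d
    have hxv : x ≠ v := fun h => hd (by rw [← hx, h])
    exact ⟨⟨x, hxv⟩, hx⟩
  · -- proper
    intro a b hab
    dsimp only
    by_cases ha : a = v
    · rw [dif_pos ha]
      have hb : b = u := (hvu b).mp (by rw [← ha]; exact hab)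
      have hbv : b ≠ v := by rw [hb]; exact hu
      rw [dif_neg hbv]
      have he : (⟨b, hbv⟩ : {x : V // x ≠ v}) = ⟨u, hu⟩ := Subtype.ext hb
      rw [he]
      exact p.2.2.1
    · by_cases hb : b = v
      · rw [dif_neg ha, dif_pos hb]
        have ha' : a = u := (hvu a).mp (by rw [← hb]; exact hab.symm)
        have he : (⟨a, ha⟩ : {x : V // x ≠ v}) = ⟨u, hu⟩ := Subtype.ext ha'
        rw [he]
        exact fun h => p.2.2.1 h.symm
      · rw [dif_neg ha, dif_neg hb]
        have hadj : (G'').Adj ⟨a, ha⟩ ⟨b, hb⟩ := hab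
        exact p.2.1 _ _ hadj
  · -- surjective
    intro d
    by_cases hd : d = p.1.2
    · exact ⟨v, by dsimp only; rw [dif_pos rfl]; exact hd.symm⟩
    · obtain ⟨x, hx⟩ := p.2.2.2 d hd
      refine ⟨x.1, ?_⟩
      dsimp only
      rw [dif_neg x.2]
      rwa [Subtype.eta]
  · -- left_inv
    intro f
    apply Subtype.ext
    funext x
    by_cases h : x = v
    · subst h; simp
    · simp [h]
  · -- right_inv
    intro p
    apply Subtype.ext
    refine Prod.ext ?_ ?_
    · funext x
      simp only
      rw [dif_neg x.2, Subtype.eta]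
    · simp

noncomputable def aEquiv :
    {p : TCol G hu m // p.1.2 ∈ Set.range p.1.1} ≃ PCol (G'') (m+1) × Fin m := by
  refine
  { toFun := fun a => (⟨a.1.1.1, a.1.2.1, ?_⟩,
      (finSuccAboveEquiv (a.1.1.1 ⟨u, hu⟩)).symm ⟨a.1.1.2, a.1.2.2.1⟩)
    invFun := fun q => ⟨⟨(q.1.1, (finSuccAboveEquiv (q.1.1 ⟨u, hu⟩) q.2).1),
      q.1.2.1, (finSuccAboveEquiv (q.1.1 ⟨u, hu⟩) q.2).2, fun d _ => q.1.2.2 d⟩,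
      q.1.2.2 _⟩
    left_inv := ?_
    right_inv := ?_ }
  · -- surjectivity of a.1.1.1
    intro d
    by_cases hd : d = a.1.1.2
    · obtain ⟨x, hx⟩ := a.2
      exact ⟨x, hd ▸ hx⟩
    · exact a.1.2.2.2 d hd
  · intro a
    apply Subtype.ext
    apply Subtype.ext
    refine Prod.ext rfl ?_
    simp only
    have := (finSuccAboveEquiv (a.1.1.1 ⟨u, hu⟩)).apply_symm_apply ⟨a.1.1.2, a.1.2.2.1⟩
    rw [this]
  · intro q
    refine Prod.ext (Subtype.ext rfl) ?_
    simp only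
    have h1 : (⟨(finSuccAboveEquiv (q.1.1 ⟨u, hu⟩) q.2).1,
        (finSuccAboveEquiv (q.1.1 ⟨u, hu⟩) q.2).2⟩ :
        {x : Fin (m+1) // x ≠ q.1.1 ⟨u, hu⟩}) = finSuccAboveEquiv (q.1.1 ⟨u, hu⟩) q.2 :=
      Subtype.ext rfl
    rw [h1, Equiv.symm_apply_apply]
end Rec

section RecB
variable (G : SimpleGraph V) {v u : V} (hu : u ≠ v) (hvu : ∀ y, G.Adj v y ↔ y = u) (m : ℕ)
local notation "G''" => SimpleGraph.comap (fun x : {x : V // x ≠ v} => (x : V)) G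

noncomputable def bEquiv :
    {p : TCol G hu m // p.1.2 ∉ Set.range p.1.1} ≃ Fin (m+1) × PCol (G'') m := by
  refine
  { toFun := fun b => (b.1.1.2,
      ⟨fun x => (finSuccAboveEquiv b.1.1.2).symm ⟨b.1.1.1 x, fun hEq => b.2 ⟨x, hEq⟩⟩, ?_, ?_⟩)
    invFun := fun q => ⟨⟨(fun x => (finSuccAboveEquiv q.1 (q.2.1 x)).1, q.1), ?_, ?_, ?_⟩, ?_⟩
    left_inv := ?_
    right_inv := ?_ }
  · -- proper
    intro a c hadj heq
    have h2 := congrArg (finSuccAboveEquiv b.1.1.2) heq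
    rw [Equiv.apply_symm_apply, Equiv.apply_symm_apply] at h2
    exact b.1.2.1 a c hadj (congrArg Subtype.val h2)
  · -- surjective
    intro j
    obtain ⟨x, hx⟩ := b.1.2.2.2 (finSuccAboveEquiv b.1.1.2 j).1 (finSuccAboveEquiv b.1.1.2 j).2
    refine ⟨x, ?_⟩
    dsimp only
    have he : (⟨b.1.1.1 x, fun hEq => b.2 ⟨x, hEq⟩⟩ : {d : Fin (m+1) // d ≠ b.1.1.2}) =
        finSuccAboveEquiv b.1.1.2 j := Subtype.ext hx
    rw [he, Equiv.symm_apply_apply]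
  · -- proper for invFun
    intro a c hadj heq
    have h2 : finSuccAboveEquiv q.1 (q.2.1 a) = finSuccAboveEquiv q.1 (q.2.1 c) :=
      Subtype.ext heq
    exact q.2.2.1 a c hadj ((finSuccAboveEquiv q.1).injective h2)
  · -- ne
    exact fun h => (finSuccAboveEquiv q.1 (q.2.1 ⟨u, hu⟩)).2 h.symm
  · -- cond3
    intro d hd
    obtain ⟨x, hx⟩ := q.2.2.2 ((finSuccAboveEquiv q.1).symm ⟨d, hd⟩)
    refine ⟨x, ?_⟩
    dsimp only
    rw [hx, Equiv.apply_symm_apply]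
  · -- not in range
    rintro ⟨x, hx⟩
    exact (finSuccAboveEquiv q.1 (q.2.1 x)).2 hx
  · -- left_inv
    intro b
    apply Subtype.ext
    apply Subtype.ext
    refine Prod.ext ?_ rfl
    funext x
    dsimp only
    rw [Equiv.apply_symm_apply]
  · -- right_inv
    intro q
    refine Prod.ext rfl ?_
    apply Subtype.ext
    funext x
    dsimp only
    have he : (⟨(finSuccAboveEquiv q.1 (q.2.1 x)).1, (finSuccAboveEquiv q.1 (q.2.1 x)).2⟩ :
        {d : Fin (m+1) // d ≠ q.1}) = finSuccAboveEquiv q.1 (q.2.1 x) := Subtype.ext rfl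
    rw [he, Equiv.symm_apply_apply]

instance : Finite (TCol G hu m) := by unfold TCol; exact Subtype.finite

include hu hvu in
lemma pcol_card :
    Nat.card (PCol G (m+1)) =
      m * Nat.card (PCol (G'') (m+1)) + (m+1) * Nat.card (PCol (G'') m) := by
  classical
  rw [Nat.card_congr (pcolEquivT G hu hvu m),
    (Nat.card_congr (Equiv.sumCompl (fun p : TCol G hu m => p.1.2 ∈ Set.range p.1.1))).symm,
    Nat.card_sum, Nat.card_congr (aEquiv G hu m), Nat.card_congr (bEquiv G hu m),
    Nat.card_prod, Nat.card_prod, Nat.card_eq_fintype_card (α := Fin m),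
    Nat.card_eq_fintype_card (α := Fin (m+1)), Fintype.card_fin, Fintype.card_fin]
  ring
end RecB


lemma pcol_card_zero (G : SimpleGraph V) (k : ℕ) (h : Fintype.card V < k) :
    Nat.card (PCol G k) = 0 := by
  have : IsEmpty (PCol G k) := ⟨fun f => by
    have := Fintype.card_le_of_surjective f.1 f.2.2
    rw [Fintype.card_fin] at this
    omega⟩
  exact Nat.card_of_isEmpty

lemma pcol_card_one [Nonempty V] (G : SimpleGraph V) (h : Fintype.card V = 1) :
    Nat.card (PCol G 1) = 1 := by
  haveI : Subsingleton V := Fintype.card_le_one_iff_subsingleton.mp (by omega)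
  rw [Nat.card_eq_one_iff_unique]
  constructor
  · constructor
    rintro ⟨f, -⟩ ⟨g, -⟩
    exact Subtype.ext (funext fun x => Subsingleton.elim _ _)
  · refine ⟨⟨fun _ => 0, fun a b hab => ?_, fun i => ?_⟩⟩
    · exact absurd (Subsingleton.elim a b ▸ hab) (G.irrefl)
    · exact ⟨Classical.arbitrary V, Subsingleton.elim _ _⟩

lemma cInv_aux : ∀ (n : ℕ) (W : Type*) [Fintype W] [DecidableEq W] [Nonempty W]
    (G : SimpleGraph W), G.IsTree → Fintype.card W = n → G.cInv = 1 := by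
  intro n
  induction n using Nat.strong_induction_on with
  | _ n IH =>
  intro W _ _ _ G hG hcard
  have hpos : 1 ≤ n := hcard ▸ Fintype.card_pos
  by_cases h1 : n = 1
  · -- base case
    subst h1
    have hck : G.ckPart 1 = 1 := by rw [ckPart_eq, pcol_card_one G hcard]
    rw [SimpleGraph.cInv, hcard]
    norm_num [hck]
  · -- inductive step
    obtain ⟨m, rfl⟩ : ∃ m, n = m + 1 := ⟨n - 1, by omega⟩
    have hm : 1 ≤ m := by omega
    obtain ⟨v, u, hu, hvu⟩ := exists_leaf G hG (by omega)
    haveI : Nonempty {x : W // x ≠ v} := ⟨⟨u, hu⟩⟩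
    set G' := SimpleGraph.comap (fun x : {x : W // x ≠ v} => (x : W)) G with hG'def
    have htree' : G'.IsTree := induced_isTree G hG hu hvu
    have hcard' : Fintype.card {x : W // x ≠ v} = m := by
      have h1 := Fintype.card_subtype_compl (fun x : W => x = v)
      have h2 : Fintype.card {x : W // x = v} = 1 := Fintype.card_subtype_eq v
      have h3 : Fintype.card {x : W // ¬ x = v} = Fintype.card {x : W // x ≠ v} := rfl
      omega
    have hIH : G'.cInv = 1 := IH m (by omega) _ G' htree' hcard'
    -- notation for the counts
    set c' : ℕ → ℚ := fun k => (G'.ckPart k : ℚ) with hc'def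
    have hc'0 : c' 0 = 0 := by simp [hc'def, SimpleGraph.ckPart]
    have hc'top : c' (m + 1) = 0 := by
      have := pcol_card_zero G' (m + 1) (by omega)
      simp [hc'def, ckPart_eq, this]
    have hrec : ∀ j : ℕ, (G.ckPart (j + 1) : ℚ) = j * c' (j + 1) + (j + 1) * c' j := by
      intro j
      have h := pcol_card G hu hvu j
      rw [← ckPart_eq, ← ckPart_eq, ← ckPart_eq] at h
      rw [h]
      push_cast
      ring
    set g : ℕ → ℚ := fun j => (-1 : ℚ) ^ j * c' j with hgdef
    set h : ℕ → ℚ := fun j => (-1 : ℚ) ^ j * c' j / j with hhdef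
    have hmap : ∀ f : ℕ → ℚ,
        ∑ k ∈ Finset.Icc 1 (m + 1), f k = ∑ j ∈ Finset.Icc 0 m, f (j + 1) := by
      intro f
      have him : Finset.Icc 1 (m + 1) =
          (Finset.Icc 0 m).map ⟨fun j => j + 1, fun a b hab => by simpa using hab⟩ := by
        ext x
        simp only [Finset.mem_map, Finset.mem_Icc, Function.Embedding.coeFn_mk]
        constructor
        · intro hx
          refine ⟨x - 1, by omega, show x - 1 + 1 = x by omega⟩
        · rintro ⟨y, hy, rfl⟩
          exact show 1 ≤ y + 1 ∧ y + 1 ≤ m + 1 by omega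
      rw [him, Finset.sum_map]
      rfl
    have hsplit0 : ∀ f : ℕ → ℚ,
        ∑ j ∈ Finset.Icc 0 m, f j = f 0 + ∑ j ∈ Finset.Icc 1 m, f j := by
      intro f
      rw [show Finset.Icc 0 m = insert 0 (Finset.Icc 1 m) by
        ext x; simp only [Finset.mem_insert, Finset.mem_Icc]; omega]
      rw [Finset.sum_insert (by simp)]
    have hsplittop : ∀ f : ℕ → ℚ,
        ∑ j ∈ Finset.Icc 1 (m + 1), f j = (∑ j ∈ Finset.Icc 1 m, f j) + f (m + 1) := by
      intro f
      rw [show Finset.Icc 1 (m + 1) = insert (m + 1) (Finset.Icc 1 m) by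
        ext x; simp only [Finset.mem_insert, Finset.mem_Icc]; omega]
      rw [Finset.sum_insert (by simp), add_comm]
    set T : ℚ := ∑ j ∈ Finset.Icc 1 m, g j with hTdef
    set S : ℚ := ∑ j ∈ Finset.Icc 1 m, h j with hSdef
    have hterm : ∀ j ∈ Finset.Icc 0 m,
        (-1 : ℚ) ^ (j + 1) * (G.ckPart (j + 1) : ℚ) / ((j + 1 : ℕ) : ℚ) =
          g (j + 1) - h (j + 1) - g j := by
      intro j _
      rw [hrec j]
      simp only [hgdef, hhdef]
      have hj : ((j : ℚ) + 1) ≠ 0 := by positivity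
      push_cast
      field_simp
      ring
    have hsum : ∑ k ∈ Finset.Icc 1 (m + 1), (-1 : ℚ) ^ k * (G.ckPart k : ℚ) / k = -S := by
      rw [hmap]
      rw [Finset.sum_congr rfl hterm]
      rw [Finset.sum_sub_distrib, Finset.sum_sub_distrib]
      have hg0 : g (m + 1) = 0 := by simp [hgdef, hc'top]
      have hh0 : h (m + 1) = 0 := by simp [hhdef, hc'top]
      have hg00 : g 0 = 0 := by simp [hgdef, hc'0]
      have e1 : ∑ j ∈ Finset.Icc 0 m, g (j + 1) = T := by
        rw [← hmap, hsplittop, hg0, add_zero]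
      have e2 : ∑ j ∈ Finset.Icc 0 m, h (j + 1) = S := by
        rw [← hmap, hsplittop, hh0, add_zero]
      have e3 : ∑ j ∈ Finset.Icc 0 m, g j = T := by
        rw [hsplit0, hg00, zero_add]
      rw [e1, e2, e3]
      ring
    have hS : G'.cInv = (-1 : ℚ) ^ m * S := by
      rw [SimpleGraph.cInv, hcard', hSdef, hhdef]
    rw [SimpleGraph.cInv, hcard, hsum]
    rw [hS] at hIH
    have hfin : (-1 : ℚ) ^ (m + 1) * -S = (-1 : ℚ) ^ m * S := by ring
    rw [hfin]
    exact hIH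

end Aux

/-- **Trees.** If `G` is a tree (on at least one vertex), then `c(G) = 1`. -/
theorem cInv_eq_one_of_isTree {V : Type*} [Fintype V] [DecidableEq V] [Nonempty V]
    (G : SimpleGraph V) (hG : G.IsTree) :
    G.cInv = 1 := by
  exact cInv_aux (Fintype.card V) V G hG rfl
end

section
/- Let G be a finite simple graph, let e be an edge of G with endpoints p ≠ q, let G†_e be the graph obtained from G by deleting the edge e (keeping all vertices and all other edges), and let G_e be the graph obtained from G by contracting e (defined on the vertex set of G with p removed, where distinct vertices s, t are adjacent iff they are adjacent in G, or t = q and s is adjacent to p in G, or s = q and t is adjacent to p in G). Then c(G) = c(G†_e) + c(G_e). -/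
/-- The graph obtained from `G` by contracting the edge between `p` and `q`, defined on the
vertex set of `G` with `p` removed: distinct vertices `s`, `t` are adjacent iff they are
adjacent in `G`, or `t = q` and `s` is adjacent to `p`, or `s = q` and `t` is adjacent to `p`. -/
def SimpleGraph.contractEdge {V : Type*} (G : SimpleGraph V) (p q : V) :
    SimpleGraph {v : V // v ≠ p} where
  Adj s t := s ≠ t ∧ (G.Adj s t ∨ ((t : V) = q ∧ G.Adj s p) ∨ ((s : V) = q ∧ G.Adj t p))
  symm := by
    constructor
    rintro s t ⟨hst, h⟩
    refine ⟨hst.symm, ?_⟩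
    rcases h with h | ⟨h1, h2⟩ | ⟨h1, h2⟩
    · exact Or.inl h.symm
    · exact Or.inr (Or.inr ⟨h1, h2⟩)
    · exact Or.inr (Or.inl ⟨h1, h2⟩)
  loopless := ⟨fun s hs => hs.1 rfl⟩


section Aux
set_option linter.unusedSectionVars false
variable {V : Type*} [Fintype V] [DecidableEq V]

lemma cInv_part_index_eq {k : ℕ} {J : Fin k → Finset V}
    (hdisj : ∀ i j, i ≠ j → Disjoint (J i) (J j)) {v : V} {i j : Fin k}
    (hi : v ∈ J i) (hj : v ∈ J j) : i = j := by
  by_contra hne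
  exact (Finset.disjoint_left.mp (hdisj i j hne) hi) hj

lemma cInv_ckPart_eq_zero_of_card_lt (G : SimpleGraph V) {k : ℕ} (hk : Fintype.card V < k) :
    G.ckPart k = 0 := by
  have hk0 : k ≠ 0 := by omega
  rw [SimpleGraph.ckPart, if_neg hk0]
  have : IsEmpty {J : Fin k → Finset V // G.IsOrderedPartition J} := by
    constructor
    rintro ⟨J, h1, h2, h3, h4⟩
    have hinj : Function.Injective (fun i => (h1 i).choose) := by
      intro i j hij
      have hi := (h1 i).choose_spec
      have hj := (h1 j).choose_spec
      rw [show (h1 i).choose = (h1 j).choose from hij] at hi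
      exact cInv_part_index_eq h2 hi hj
    have := Fintype.card_le_of_injective _ hinj
    simp only [Fintype.card_fin] at this
    omega
  exact Nat.card_of_isEmpty

lemma cInv_contractEdge_adj (G : SimpleGraph V) (p q : V) (s t : {v : V // v ≠ p}) :
    (G.contractEdge p q).Adj s t ↔
      s ≠ t ∧ (G.Adj s t ∨ ((t : V) = q ∧ G.Adj s p) ∨ ((s : V) = q ∧ G.Adj t p)) :=
  Iff.rfl

lemma cInv_deleteEdges_pair_adj (G : SimpleGraph V) (p q a b : V) :
    (G.deleteEdges {s(p,q)}).Adj a b ↔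
      G.Adj a b ∧ ¬(a = p ∧ b = q ∨ a = q ∧ b = p) := by
  rw [SimpleGraph.deleteEdges_adj]
  simp [Sym2.eq_iff]

lemma cInv_del_partition_iff {G : SimpleGraph V} {p q : V} (he : G.Adj p q) {k : ℕ}
    (J : Fin k → Finset V) :
    G.IsOrderedPartition J ↔
      (G.deleteEdges {s(p,q)}).IsOrderedPartition J ∧ ∀ i, ¬(p ∈ J i ∧ q ∈ J i) := by
  constructor
  · rintro ⟨h1, h2, h3, h4⟩
    refine ⟨⟨h1, h2, h3, ?_⟩, ?_⟩
    · intro i a ha b hb hadj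
      exact h4 i a ha b hb ((cInv_deleteEdges_pair_adj G p q a b).mp hadj).1
    · rintro i ⟨hp, hq⟩
      exact h4 i p hp q hq he
  · rintro ⟨⟨h1, h2, h3, h4⟩, hsep⟩
    refine ⟨h1, h2, h3, ?_⟩
    intro i a ha b hb hadj
    by_cases hcase : a = p ∧ b = q ∨ a = q ∧ b = p
    · rcases hcase with ⟨rfl, rfl⟩ | ⟨rfl, rfl⟩
      · exact hsep i ⟨ha, hb⟩
      · exact hsep i ⟨hb, ha⟩
    · exact h4 i a ha b hb ((cInv_deleteEdges_pair_adj G p q a b).mpr ⟨hadj, hcase⟩)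

lemma cInv_card_middle {G : SimpleGraph V} {p q : V} (hpq : p ≠ q) (he : G.Adj p q) (k : ℕ) :
    Nat.card {J : Fin k → Finset V //
        (G.deleteEdges {s(p,q)}).IsOrderedPartition J ∧ ∃ i, p ∈ J i ∧ q ∈ J i} =
      Nat.card {J : Fin k → Finset {v : V // v ≠ p} //
        (G.contractEdge p q).IsOrderedPartition J} := by
  classical
  set D := G.deleteEdges {s(p,q)} with hDdef
  have hqp : q ≠ p := Ne.symm hpq
  -- the forward map
  have key : ∀ (J : Fin k → Finset V), D.IsOrderedPartition J → (∃ i, p ∈ J i ∧ q ∈ J i) →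
      (G.contractEdge p q).IsOrderedPartition (fun i => (J i).subtype (· ≠ p)) := by
    rintro J ⟨h1, h2, h3, h4⟩ ⟨i₀, hp₀, hq₀⟩
    refine ⟨?_, ?_, ?_, ?_⟩
    · intro i
      by_cases hi : i = i₀
      · subst hi
        exact ⟨⟨q, hqp⟩, Finset.mem_subtype.mpr hq₀⟩
      · obtain ⟨a, ha⟩ := h1 i
        have hap : a ≠ p := by
          rintro rfl
          exact hi (cInv_part_index_eq h2 ha hp₀)
        exact ⟨⟨a, hap⟩, Finset.mem_subtype.mpr ha⟩
    · intro i j hne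
      rw [Finset.disjoint_left]
      intro x hxi hxj
      exact hne (cInv_part_index_eq h2 (Finset.mem_subtype.mp hxi) (Finset.mem_subtype.mp hxj))
    · apply Finset.eq_univ_iff_forall.mpr
      intro x
      have : (x : V) ∈ Finset.univ.biUnion J := by rw [h3]; exact Finset.mem_univ _
      obtain ⟨i, _, hi⟩ := Finset.mem_biUnion.mp this
      exact Finset.mem_biUnion.mpr ⟨i, Finset.mem_univ _, Finset.mem_subtype.mpr hi⟩
    · intro i a ha b hb hadj
      have ha' : (a : V) ∈ J i := Finset.mem_subtype.mp ha
      have hb' : (b : V) ∈ J i := Finset.mem_subtype.mp hb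
      obtain ⟨hne, hc⟩ := hadj
      rcases hc with hG | ⟨hbq, hap⟩ | ⟨haq, hbp⟩
      · refine h4 i a ha' b hb' ((cInv_deleteEdges_pair_adj G p q _ _).mpr ⟨hG, ?_⟩)
        rintro (⟨h, -⟩ | ⟨-, h⟩)
        · exact a.2 h
        · exact b.2 h
      · have hi : i = i₀ := cInv_part_index_eq h2 (hbq ▸ hb') hq₀
        have ha'' : (a : V) ∈ J i₀ := hi ▸ ha'
        have haq' : (a : V) ≠ q := by
          intro h
          exact hne (Subtype.ext (h.trans hbq.symm))
        refine h4 i₀ a ha'' p hp₀ ((cInv_deleteEdges_pair_adj G p q _ _).mpr ⟨hap, ?_⟩)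
        rintro (⟨h, -⟩ | ⟨h, -⟩)
        · exact a.2 h
        · exact haq' h
      · have hi : i = i₀ := cInv_part_index_eq h2 (haq ▸ ha') hq₀
        have hb'' : (b : V) ∈ J i₀ := hi ▸ hb'
        have hbq' : (b : V) ≠ q := by
          intro h
          exact hne (Subtype.ext (haq.trans h.symm))
        refine h4 i₀ b hb'' p hp₀ ((cInv_deleteEdges_pair_adj G p q _ _).mpr ⟨hbp, ?_⟩)
        rintro (⟨h, -⟩ | ⟨h, -⟩)
        · exact b.2 h
        · exact hbq' h
  let Φ : {J : Fin k → Finset V //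
        D.IsOrderedPartition J ∧ ∃ i, p ∈ J i ∧ q ∈ J i} →
      {J : Fin k → Finset {v : V // v ≠ p} // (G.contractEdge p q).IsOrderedPartition J} :=
    fun J => ⟨fun i => (J.1 i).subtype (· ≠ p), key J.1 J.2.1 J.2.2⟩
  refine Nat.card_eq_of_bijective Φ ⟨?_, ?_⟩
  · -- injectivity
    rintro ⟨J, hJ, iJ, hpJ, hqJ⟩ ⟨K, hK, iK, hpK, hqK⟩ h
    have h' : ∀ i (x : V) (hx : x ≠ p), (x ∈ J i ↔ x ∈ K i) := by
      intro i x hx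
      have := congrFun (congrArg Subtype.val h) i
      simp only [Φ] at this
      constructor
      · intro hmem
        have : (⟨x, hx⟩ : {v : V // v ≠ p}) ∈ (K i).subtype (· ≠ p) := by
          rw [← this]; exact Finset.mem_subtype.mpr hmem
        exact Finset.mem_subtype.mp this
      · intro hmem
        have : (⟨x, hx⟩ : {v : V // v ≠ p}) ∈ (J i).subtype (· ≠ p) := by
          rw [this]; exact Finset.mem_subtype.mpr hmem
        exact Finset.mem_subtype.mp this
    have hpiffJ : ∀ i, p ∈ J i ↔ q ∈ J i := by
      intro i
      constructor
      · intro hm; exact (cInv_part_index_eq hJ.2.1 hm hpJ) ▸ hqJ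
      · intro hm; exact (cInv_part_index_eq hJ.2.1 hm hqJ) ▸ hpJ
    have hpiffK : ∀ i, p ∈ K i ↔ q ∈ K i := by
      intro i
      constructor
      · intro hm; exact (cInv_part_index_eq hK.2.1 hm hpK) ▸ hqK
      · intro hm; exact (cInv_part_index_eq hK.2.1 hm hqK) ▸ hpK
    apply Subtype.ext
    funext i
    ext x
    by_cases hx : x = p
    · subst hx
      rw [hpiffJ, hpiffK]
      exact h' i q hqp
    · exact h' i x hx
  · -- surjectivity
    rintro ⟨J', h1', h2', h3', h4'⟩
    have hqbar : (⟨q, hqp⟩ : {v : V // v ≠ p}) ∈ Finset.univ.biUnion J' := by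
      rw [h3']; exact Finset.mem_univ _
    obtain ⟨i₀, -, hq₀⟩ := Finset.mem_biUnion.mp hqbar
    let emb : {v : V // v ≠ p} ↪ V := Function.Embedding.subtype _
    set J : Fin k → Finset V := fun i =>
      if (⟨q, hqp⟩ : {v : V // v ≠ p}) ∈ J' i then insert p ((J' i).map emb)
      else (J' i).map emb with hJdef
    have hmem : ∀ (i : Fin k) (x : V),
        x ∈ J i ↔ (x = p ∧ (⟨q, hqp⟩ : {v : V // v ≠ p}) ∈ J' i) ∨
          ∃ hx : x ≠ p, (⟨x, hx⟩ : {v : V // v ≠ p}) ∈ J' i := by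
      intro i x
      simp only [hJdef]
      by_cases hi : (⟨q, hqp⟩ : {v : V // v ≠ p}) ∈ J' i
      · rw [if_pos hi]
        constructor
        · intro hxm
          rcases Finset.mem_insert.mp hxm with rfl | hx'
          · exact Or.inl ⟨rfl, hi⟩
          · obtain ⟨a, ha, rfl⟩ := Finset.mem_map.mp hx'
            exact Or.inr ⟨a.2, ha⟩
        · rintro (⟨rfl, -⟩ | ⟨hx, hm⟩)
          · exact Finset.mem_insert_self _ _
          · exact Finset.mem_insert_of_mem (Finset.mem_map.mpr ⟨⟨x, hx⟩, hm, rfl⟩)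
      · rw [if_neg hi]
        constructor
        · intro hxm
          obtain ⟨a, ha, rfl⟩ := Finset.mem_map.mp hxm
          exact Or.inr ⟨a.2, ha⟩
        · rintro (⟨rfl, hcon⟩ | ⟨hx, hm⟩)
          · exact absurd hcon hi
          · exact Finset.mem_map.mpr ⟨⟨x, hx⟩, hm, rfl⟩
    have hDpart : D.IsOrderedPartition J := by
      refine ⟨?_, ?_, ?_, ?_⟩
      · intro i
        obtain ⟨a, ha⟩ := h1' i
        exact ⟨a.1, (hmem i a.1).mpr (Or.inr ⟨a.2, ha⟩)⟩
      · intro i j hne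
        rw [Finset.disjoint_left]
        intro x hxi hxj
        rcases (hmem i x).mp hxi with ⟨rfl, hqi⟩ | ⟨hx, hmi⟩ <;>
          rcases (hmem j x).mp hxj with ⟨hxp, hqj⟩ | ⟨hx', hmj⟩
        · exact hne (cInv_part_index_eq h2' hqi hqj)
        · exact hx' rfl
        · exact absurd hxp hx
        · exact hne (cInv_part_index_eq h2' hmi hmj)
      · apply Finset.eq_univ_iff_forall.mpr
        intro x
        by_cases hx : x = p
        · exact Finset.mem_biUnion.mpr ⟨i₀, Finset.mem_univ _,
            (hmem i₀ x).mpr (Or.inl ⟨hx, hq₀⟩)⟩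
        · have : (⟨x, hx⟩ : {v : V // v ≠ p}) ∈ Finset.univ.biUnion J' := by
            rw [h3']; exact Finset.mem_univ _
          obtain ⟨i, -, hi⟩ := Finset.mem_biUnion.mp this
          exact Finset.mem_biUnion.mpr ⟨i, Finset.mem_univ _,
            (hmem i x).mpr (Or.inr ⟨hx, hi⟩)⟩
      · intro i a ha b hb hadj
        obtain ⟨hG, hexcl⟩ := (cInv_deleteEdges_pair_adj G p q a b).mp hadj
        have hab : a ≠ b := hG.ne
        rcases (hmem i a).mp ha with ⟨rfl, hqi⟩ | ⟨hap, hma⟩ <;>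
          rcases (hmem i b).mp hb with ⟨hbp, hqi'⟩ | ⟨hbp, hmb⟩
        · exact hab hbp.symm
        · -- a = p, b ≠ p
          have hbq : b ≠ q := fun h => hexcl (Or.inl ⟨rfl, h⟩)
          refine h4' i ⟨b, hbp⟩ hmb ⟨q, hqp⟩ hqi ⟨?_, Or.inr (Or.inl ⟨rfl, hG.symm⟩)⟩
          intro h
          exact hbq (congrArg Subtype.val h)
        · -- b = p, a ≠ p
          subst hbp
          have haq : a ≠ q := fun h => hexcl (Or.inr ⟨h, rfl⟩)
          refine h4' i ⟨a, hap⟩ hma ⟨q, hqp⟩ hqi' ⟨?_, Or.inr (Or.inl ⟨rfl, hG⟩)⟩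
          intro h
          exact haq (congrArg Subtype.val h)
        · refine h4' i ⟨a, hap⟩ hma ⟨b, hbp⟩ hmb ⟨?_, Or.inl hG⟩
          intro h
          exact hab (congrArg Subtype.val h)
    refine ⟨⟨J, hDpart, i₀, (hmem i₀ p).mpr (Or.inl ⟨rfl, hq₀⟩),
      (hmem i₀ q).mpr (Or.inr ⟨hqp, hq₀⟩)⟩, ?_⟩
    apply Subtype.ext
    funext i
    ext x
    simp only [Φ]
    rw [Finset.mem_subtype]
    constructor
    · intro h
      rcases (hmem i x.1).mp h with ⟨hxp, -⟩ | ⟨hx, hm⟩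
      · exact absurd hxp x.2
      · exact hm
    · intro h
      exact (hmem i x.1).mpr (Or.inr ⟨x.2, h⟩)

lemma cInv_ckPart_del (G : SimpleGraph V) (p q : V) (hpq : p ≠ q) (he : G.Adj p q) (k : ℕ) :
    (G.deleteEdges {s(p,q)}).ckPart k = G.ckPart k + (G.contractEdge p q).ckPart k := by
  classical
  rcases eq_or_ne k 0 with rfl | hk
  · simp [SimpleGraph.ckPart]
  unfold SimpleGraph.ckPart
  rw [if_neg hk, if_neg hk, if_neg hk]
  set D := G.deleteEdges {s(p,q)} with hDdef
  have e1 : {J : Fin k → Finset V // D.IsOrderedPartition J} ≃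
      {J : Fin k → Finset V // D.IsOrderedPartition J ∧ ¬∃ i, p ∈ J i ∧ q ∈ J i} ⊕
      {J : Fin k → Finset V // D.IsOrderedPartition J ∧ ∃ i, p ∈ J i ∧ q ∈ J i} := by
    refine ((Equiv.sumCompl (fun J : {J : Fin k → Finset V // D.IsOrderedPartition J} =>
      ∃ i, p ∈ J.1 i ∧ q ∈ J.1 i)).symm.trans (Equiv.sumComm _ _)).trans
      (Equiv.sumCongr ?_ ?_)
    · exact (Equiv.subtypeSubtypeEquivSubtypeInter
        (fun J : Fin k → Finset V => D.IsOrderedPartition J)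
        (fun J => ¬∃ i, p ∈ J i ∧ q ∈ J i))
    · exact (Equiv.subtypeSubtypeEquivSubtypeInter
        (fun J : Fin k → Finset V => D.IsOrderedPartition J)
        (fun J => ∃ i, p ∈ J i ∧ q ∈ J i))
  rw [Nat.card_congr e1, Nat.card_sum]
  congr 1
  · apply Nat.card_congr
    apply Equiv.subtypeEquivRight
    intro J
    rw [cInv_del_partition_iff he J]
    push_neg
    rw [hDdef]
  · exact cInv_card_middle hpq he k

end Aux

/-- **Deletion–contraction for `c`.** For an edge `e` of `G` with endpoints `p ≠ q`,
`c(G) = c(G†_e) + c(G_e)`, where `G†_e` is `G` with `e` deleted and `G_e` is `G` with `e`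
contracted. -/
theorem cInv_deletion_contraction {V : Type*} [Fintype V] [DecidableEq V]
    (G : SimpleGraph V) (p q : V) (hpq : p ≠ q) (he : G.Adj p q) :
    G.cInv = (G.deleteEdges {s(p, q)}).cInv + (G.contractEdge p q).cInv := by
  classical
  have hV : 1 ≤ Fintype.card V := Fintype.card_pos_iff.mpr ⟨p⟩
  set l := Fintype.card V with hl
  have hcard : Fintype.card {v : V // v ≠ p} = l - 1 := by
    have h1 : Fintype.card {v : V // ¬ v = p} = l - Fintype.card {v : V // v = p} :=
      Fintype.card_subtype_compl _
    have h2 : Fintype.card {v : V // v = p} = 1 := Fintype.card_subtype_eq p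
    simpa [h2] using h1
  have hzero : ((G.contractEdge p q).ckPart l : ℚ) = 0 := by
    rw [cInv_ckPart_eq_zero_of_card_lt]
    · simp
    · rw [hcard]; omega
  have hsum : ∑ k ∈ Finset.Icc 1 l, (-1:ℚ)^k * ((G.contractEdge p q).ckPart k : ℚ)/k
      = ∑ k ∈ Finset.Icc 1 (l-1), (-1:ℚ)^k * ((G.contractEdge p q).ckPart k : ℚ)/k := by
    obtain ⟨m, hm⟩ : ∃ m, l = m + 1 := ⟨l - 1, by omega⟩
    rw [hm, show m + 1 - 1 = m from rfl]
    rw [← Finset.insert_Icc_right_eq_Icc_add_one (by omega : 1 ≤ m + 1)]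
    rw [Finset.sum_insert (by simp)]
    rw [hm] at hzero
    simp [hzero]
  have hdel : (G.deleteEdges {s(p,q)}).cInv = G.cInv +
      (-1:ℚ)^l * ∑ k ∈ Finset.Icc 1 l, (-1:ℚ)^k * ((G.contractEdge p q).ckPart k : ℚ)/k := by
    unfold SimpleGraph.cInv
    rw [← hl, ← mul_add, ← Finset.sum_add_distrib]
    congr 1
    apply Finset.sum_congr rfl
    intro k _
    rw [cInv_ckPart_del G p q hpq he k]
    push_cast
    ring
  have hcontract : (G.contractEdge p q).cInv =
      (-1:ℚ)^(l-1) * ∑ k ∈ Finset.Icc 1 (l-1),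
        (-1:ℚ)^k * ((G.contractEdge p q).ckPart k : ℚ)/k := by
    unfold SimpleGraph.cInv
    rw [hcard]
  rw [hdel, hcontract, hsum]
  have hpow : (-1:ℚ)^l = -(-1:ℚ)^(l-1) := by
    obtain ⟨m, hm⟩ : ∃ m, l = m + 1 := ⟨l - 1, by omega⟩
    rw [hm, show m + 1 - 1 = m from rfl, pow_succ]
    ring
  rw [hpow]
  ring
end

section
/- Let m ≥ 3 and let C_m be the cycle graph on m vertices. Then c(C_m) = m − 1. -/
set_option linter.unusedSectionVars false

open Finset Polynomial

namespace CInvCycle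


def pathCond {n j : ℕ} (f : Fin (n+1) → Fin j) : Prop := ∀ i : Fin n, f i.castSucc ≠ f i.succ
def cycCond {n j : ℕ} (f : Fin (n+1) → Fin j) : Prop := ∀ i, f i ≠ f (i+1)

instance {n j : ℕ} : DecidablePred (pathCond (n := n) (j := j)) := fun _ => by
  unfold pathCond; infer_instance
instance {n j : ℕ} : DecidablePred (cycCond (n := n) (j := j)) := fun _ => by
  unfold cycCond; infer_instance

def pathSuccEquiv (n j : ℕ) :
    {f : Fin (n+2) → Fin j // pathCond f} ≃
      Σ g : {f : Fin (n+1) → Fin j // pathCond f}, {c : Fin j // c ≠ g.1 (Fin.last n)} where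
  toFun f := ⟨⟨f.1 ∘ Fin.castSucc, fun i => by
      have := f.2 i.castSucc
      rw [Fin.succ_castSucc] at this
      exact this⟩,
    ⟨f.1 (Fin.last (n+1)), by
      have := f.2 (Fin.last n)
      simp only [Fin.succ_last] at this
      exact fun h => this h.symm⟩⟩
  invFun gc := ⟨Fin.snoc gc.1.1 gc.2.1, by
    intro i
    refine Fin.lastCases ?_ ?_ i
    · simp only [Fin.succ_last, Fin.snoc_castSucc, Fin.snoc_last]
      exact fun h => gc.2.2 h.symm
    · intro i'
      simp only [Fin.succ_castSucc, Fin.snoc_castSucc]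
      exact gc.1.2 i'⟩
  left_inv f := by
    ext i
    refine Fin.lastCases ?_ ?_ i <;> simp
  right_inv gc := by
    ext i <;> simp

lemma card_path (n j : ℕ) :
    Fintype.card {f : Fin (n+1) → Fin j // pathCond f} = j * (j-1)^n := by
  induction n with
  | zero =>
    rw [pow_zero, mul_one]
    have e : {f : Fin 1 → Fin j // pathCond f} ≃ Fin j :=
      (Equiv.subtypeUnivEquiv (fun f => fun i => i.elim0)).trans
        (Equiv.funUnique (Fin 1) (Fin j))
    simp [Fintype.card_congr e]
  | succ n ih =>
    rw [Fintype.card_congr (pathSuccEquiv n j), Fintype.card_sigma]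
    have hc : ∀ g : {f : Fin (n+1) → Fin j // pathCond f},
        Fintype.card {c : Fin j // c ≠ g.1 (Fin.last n)} = j - 1 := by
      intro g
      rw [Fintype.card_subtype_compl, Fintype.card_subtype_eq, Fintype.card_fin]
    simp only [hc, sum_const, card_univ, smul_eq_mul, ih]
    rw [pow_succ]
    ring

-- closed subtype: paths with f last = f 0
def closedEquiv (n j : ℕ) :
    {f : Fin (n+2) → Fin j // pathCond f ∧ f (Fin.last (n+1)) = f 0} ≃
      {g : Fin (n+1) → Fin j // cycCond g} where
  toFun f := ⟨f.1 ∘ Fin.castSucc, by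
    intro i
    have h1 := f.2.1 i
    have h2 : f.1 (Fin.castSucc (i + 1)) = f.1 i.succ := by
      rcases eq_or_ne i (Fin.last n) with rfl | hne
      · rw [Fin.last_add_one, Fin.succ_last]
        have : (Fin.castSucc (0 : Fin (n+1))) = (0 : Fin (n+2)) := rfl
        rw [this, ← f.2.2]
      · have : (i + 1).castSucc = i.succ := by
          ext
          simp only [Fin.coe_castSucc, Fin.val_succ, Fin.val_add_one, if_neg hne]
        rw [this]
    simpa [Function.comp, h2] using h1⟩
  invFun g := ⟨Fin.snoc g.1 (g.1 0), by
    constructor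
    · intro i
      refine Fin.lastCases ?_ ?_ i
      · simp only [Fin.succ_last, Fin.snoc_castSucc, Fin.snoc_last]
        have := g.2 (Fin.last n)
        rwa [Fin.last_add_one] at this
      · intro i'
        simp only [Fin.succ_castSucc, Fin.snoc_castSucc]
        have := g.2 i'.castSucc
        rwa [Fin.coeSucc_eq_succ] at this
    · have h0 : (0 : Fin (n+2)) = Fin.castSucc 0 := rfl
      rw [Fin.snoc_last, h0, Fin.snoc_castSucc]⟩
  left_inv f := by
    ext i
    refine Fin.lastCases ?_ ?_ i
    · simp only [Fin.snoc_last, Function.comp]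
      have h0 : (0 : Fin (n+1)).castSucc = (0 : Fin (n+2)) := rfl
      rw [h0, ← f.2.2]
    · intro i'; simp
  right_inv g := by
    ext i
    simp [Function.comp]

lemma cyc_iff {n j : ℕ} (f : Fin (n+2) → Fin j) :
    cycCond f ↔ pathCond f ∧ f (Fin.last (n+1)) ≠ f 0 := by
  constructor
  · intro h
    refine ⟨fun i => ?_, ?_⟩
    · have := h i.castSucc
      rwa [Fin.coeSucc_eq_succ] at this
    · have := h (Fin.last (n+1))
      rwa [Fin.last_add_one] at this
  · rintro ⟨hp, hl⟩ i
    refine Fin.lastCases ?_ ?_ i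
    · rwa [Fin.last_add_one]
    · intro i'
      have := hp i'
      rwa [← Fin.coeSucc_eq_succ] at this

lemma card_cyc_rec (n j : ℕ) :
    Fintype.card {f : Fin (n+2) → Fin j // cycCond f}
      + Fintype.card {g : Fin (n+1) → Fin j // cycCond g} = j * (j-1)^(n+1) := by
  have e1 : Fintype.card {f : Fin (n+2) → Fin j // cycCond f}
      = Fintype.card {f : Fin (n+2) → Fin j // pathCond f ∧ f (Fin.last (n+1)) ≠ f 0} :=
    Fintype.card_congr (Equiv.subtypeEquivRight (fun f => cyc_iff f))
  have e2 : Fintype.card {g : Fin (n+1) → Fin j // cycCond g}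
      = Fintype.card {f : Fin (n+2) → Fin j // pathCond f ∧ f (Fin.last (n+1)) = f 0} :=
    (Fintype.card_congr (closedEquiv n j)).symm
  rw [e1, e2, ← card_path (n+1) j]
  rw [Fintype.card_subtype, Fintype.card_subtype, Fintype.card_subtype]
  rw [show (Finset.univ.filter (fun f : Fin (n+2) → Fin j =>
        pathCond f ∧ f (Fin.last (n+1)) ≠ f 0))
      = (Finset.univ.filter (fun f : Fin (n+2) → Fin j => pathCond f)).filter
        (fun f => ¬ f (Fin.last (n+1)) = f 0) by rw [Finset.filter_filter]]
  rw [show (Finset.univ.filter (fun f : Fin (n+2) → Fin j =>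
        pathCond f ∧ f (Fin.last (n+1)) = f 0))
      = (Finset.univ.filter (fun f : Fin (n+2) → Fin j => pathCond f)).filter
        (fun f => f (Fin.last (n+1)) = f 0) by rw [Finset.filter_filter]]
  rw [add_comm]
  exact Finset.card_filter_add_card_filter_not _

lemma card_cyc (n j : ℕ) :
    (Fintype.card {f : Fin (n+1) → Fin j // cycCond f} : ℤ)
      = ((j:ℤ)-1)^(n+1) + (-1)^(n+1) * ((j:ℤ)-1) := by
  induction n with
  | zero =>
    have : IsEmpty {f : Fin 1 → Fin j // cycCond f} := by
      refine ⟨fun f => f.2 0 ?_⟩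
      rw [Subsingleton.elim (0 + 1 : Fin 1) 0]
    rw [Fintype.card_eq_zero]
    ring
  | succ n ih =>
    rcases Nat.eq_zero_or_pos j with rfl | hj
    · have : IsEmpty {f : Fin (n+2) → Fin 0 // cycCond f} := by
        refine ⟨fun f => (f.1 0).elim0⟩
      rw [Fintype.card_eq_zero]
      push_cast
      ring
    · have h := card_cyc_rec n j
      have h2 : (Fintype.card {f : Fin (n+2) → Fin j // cycCond f} : ℤ)
          + (Fintype.card {g : Fin (n+1) → Fin j // cycCond g} : ℤ)
          = (j:ℤ) * ((j:ℤ)-1)^(n+1) := by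
        have := congrArg (fun x : ℕ => (x : ℤ)) h
        push_cast [Nat.cast_sub hj] at this
        convert this using 2
      linear_combination h2 - ih




lemma proper_iff {n j : ℕ} (f : Fin (n+2) → Fin j) :
    (∀ a b, (SimpleGraph.cycleGraph (n+2)).Adj a b → f a ≠ f b) ↔ cycCond f := by
  constructor
  · intro h i
    apply h
    rw [SimpleGraph.cycleGraph_adj]
    right
    rw [add_sub_cancel_left]
  · intro h a b hadj
    rw [SimpleGraph.cycleGraph_adj] at hadj
    rcases hadj with hab | hba
    · have : a = b + 1 := by rw [← hab]; abel
      rw [this]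
      exact (h b).symm
    · have : b = a + 1 := by rw [← hba]; abel
      rw [this]
      exact h a
variable {V : Type*} [Fintype V] [DecidableEq V] (G : SimpleGraph V)

/-- surjective proper colorings count -/
noncomputable def sc (k : ℕ) : ℕ :=
  Nat.card {f : V → Fin k // (∀ a b, G.Adj a b → f a ≠ f b) ∧ Function.Surjective f}

lemma ckPart_eq_sc [Nonempty V] (k : ℕ) : G.ckPart k = sc G k := by
  classical
  rcases Nat.eq_zero_or_pos k with rfl | hk
  · rw [SimpleGraph.ckPart, if_pos rfl, sc]
    have : IsEmpty {f : V → Fin 0 // (∀ a b, G.Adj a b → f a ≠ f b) ∧ Function.Surjective f} :=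
      ⟨fun f => (f.1 (Classical.arbitrary V)).elim0⟩
    rw [Nat.card_of_isEmpty]
  · rw [SimpleGraph.ckPart, if_neg hk.ne', sc]
    symm
    refine Nat.card_eq_of_bijective
      (fun f => ⟨fun i => Finset.univ.filter (fun v => f.1 v = i), ?_, ?_, ?_, ?_⟩) ⟨?_, ?_⟩
    · intro i
      obtain ⟨v, hv⟩ := f.2.2 i
      exact ⟨v, by simp [hv]⟩
    · intro i i' hne
      rw [Finset.disjoint_left]
      intro v hv hv'
      simp only [Finset.mem_filter] at hv hv'
      exact hne (hv.2 ▸ hv'.2 ▸ rfl)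
    · ext v
      simp only [Finset.mem_biUnion, Finset.mem_univ, iff_true, Finset.mem_filter]
      exact ⟨f.1 v, by simp⟩
    · intro i a ha b hb hadj
      simp only [Finset.mem_filter] at ha hb
      exact f.2.1 a b hadj (ha.2.trans hb.2.symm)
    · -- injective
      intro f f' h
      apply Subtype.ext
      funext v
      have := congrArg (fun J => v ∈ J.1 (f.1 v)) h
      simp only [Finset.mem_filter, Finset.mem_univ, true_and, eq_self_iff_true] at this
      exact (this.mp trivial).symm
    · -- surjective
      rintro ⟨J, h1, h2, h3, h4⟩
      have huniq : ∀ v : V, ∃! i, v ∈ J i := by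
        intro v
        have hv : v ∈ Finset.univ.biUnion J := h3.symm ▸ Finset.mem_univ v
        obtain ⟨i, _, hi⟩ := Finset.mem_biUnion.mp hv
        refine ⟨i, hi, fun i' hi' => ?_⟩
        by_contra hne
        exact Finset.disjoint_left.mp (h2 i' i hne) hi' hi
      set f : V → Fin k := fun v => Fintype.choose _ (huniq v) with hf
      have hspec : ∀ v, v ∈ J (f v) := fun v => Fintype.choose_spec _ (huniq v)
      have hval : ∀ v i, v ∈ J i → f v = i := fun v i hvi => (huniq v).unique (hspec v) hvi
      refine ⟨⟨f, ?_, ?_⟩, ?_⟩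
      · intro a b hadj heq
        exact h4 (f a) a (hspec a) b (heq ▸ hspec b) hadj
      · intro i
        obtain ⟨v, hv⟩ := h1 i
        exact ⟨v, hval v i hv⟩
      · apply Subtype.ext
        funext i
        ext v
        simp only [Finset.mem_filter, Finset.mem_univ, true_and]
        exact ⟨fun hfv => hfv ▸ hspec v, fun hv => hval v i hv⟩




noncomputable def nc (j : ℕ) : ℕ :=
  Nat.card {f : V → Fin j // ∀ a b, G.Adj a b → f a ≠ f b}

lemma sc_eq_zero {k : ℕ} (hk : Fintype.card V < k) : sc G k = 0 := by
  have : IsEmpty {f : V → Fin k // (∀ a b, G.Adj a b → f a ≠ f b) ∧ Function.Surjective f} := by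
    refine ⟨fun f => ?_⟩
    have := Fintype.card_le_of_surjective f.1 f.2.2
    rw [Fintype.card_fin] at this
    omega
  rw [sc, Nat.card_of_isEmpty]

lemma key_subset (j : ℕ) (T : Finset (Fin j)) :
    Nat.card {f : V → Fin j //
        (∀ a b, G.Adj a b → f a ≠ f b) ∧ Finset.univ.image f = T} = sc G T.card := by
  classical
  rw [sc]
  symm
  have e := T.equivFin
  refine Nat.card_eq_of_bijective (fun g => ⟨fun v => (e.symm (g.1 v) : Fin j), ?_, ?_⟩) ⟨?_, ?_⟩
  · intro a b hadj heq
    exact g.2.1 a b hadj (e.symm.injective (Subtype.ext heq))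
  · ext x
    simp only [Finset.mem_image, Finset.mem_univ, true_and]
    constructor
    · rintro ⟨v, rfl⟩
      exact (e.symm (g.1 v)).2
    · intro hx
      obtain ⟨v, hv⟩ := g.2.2 (e ⟨x, hx⟩)
      exact ⟨v, by rw [hv, Equiv.symm_apply_apply]⟩
  · intro g g' h
    apply Subtype.ext
    funext v
    have h1 : ((e.symm (g.1 v) : Fin j)) = ((e.symm (g'.1 v) : Fin j)) :=
      congrFun (congrArg Subtype.val h) v
    exact e.symm.injective (Subtype.ext h1)
  · rintro ⟨f, hf, hT⟩
    have hmem : ∀ v, f v ∈ T := fun v => hT ▸ Finset.mem_image_of_mem f (Finset.mem_univ v)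
    refine ⟨⟨fun v => e ⟨f v, hmem v⟩, ?_, ?_⟩, ?_⟩
    · intro a b hadj heq
      exact hf a b hadj (congrArg Subtype.val (e.injective heq))
    · intro i
      have hx : (e.symm i : Fin j) ∈ image f univ := by
        rw [hT]
        exact (e.symm i).2
      obtain ⟨v, _, hv⟩ := Finset.mem_image.mp hx
      refine ⟨v, ?_⟩
      show e ⟨f v, hmem v⟩ = i
      have : (⟨f v, hmem v⟩ : {x // x ∈ T}) = e.symm i := Subtype.ext hv
      rw [this, Equiv.apply_symm_apply]
    · apply Subtype.ext
      funext v
      simp only [Equiv.symm_apply_apply]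

lemma nc_eq_sum (j : ℕ) :
    nc G j = ∑ k ∈ range (j+1), (j.choose k) * sc G k := by
  classical
  have step : nc G j
      = ∑ T ∈ (univ : Finset (Fin j)).powerset,
          Nat.card {f : V → Fin j //
            (∀ a b, G.Adj a b → f a ≠ f b) ∧ Finset.univ.image f = T} := by
    rw [nc, Nat.card_eq_fintype_card, Fintype.card_subtype]
    rw [Finset.card_eq_sum_card_fiberwise (f := fun f : V → Fin j => Finset.univ.image f)
      (t := (univ : Finset (Fin j)).powerset)
      (fun f _ => Finset.mem_powerset.mpr (Finset.subset_univ _))]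
    refine Finset.sum_congr rfl fun T _ => ?_
    rw [Nat.card_eq_fintype_card, Fintype.card_subtype, Finset.filter_filter]
  rw [step]
  have := Finset.sum_powerset_apply_card (fun k => sc G k) (x := (univ : Finset (Fin j)))
  simp only [key_subset] at *
  rw [this]
  simp [Finset.card_univ, smul_eq_mul]



noncomputable def B (k : ℕ) : ℚ[X] := Polynomial.C ((k.factorial : ℚ)⁻¹) * descPochhammer ℚ k

lemma eval_B (k j : ℕ) : (B k).eval (j : ℚ) = (j.choose k : ℚ) := by
  rw [B, eval_mul, eval_C, descPochhammer_eval_eq_descFactorial,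
    Nat.descFactorial_eq_factorial_mul_choose]
  push_cast
  rw [← mul_assoc, inv_mul_cancel₀ (by exact_mod_cast k.factorial_ne_zero), one_mul]

lemma deriv_desc_zero (k : ℕ) :
    (Polynomial.derivative (descPochhammer ℚ (k+1))).eval 0 = (-1)^k * (k.factorial : ℚ) := by
  induction k with
  | zero => simp [descPochhammer_one]
  | succ k ih =>
    rw [descPochhammer_succ_right, derivative_mul]
    simp only [eval_add, eval_mul, eval_sub, eval_X, eval_natCast, ih,
      descPochhammer_eval_zero]
    simp only [derivative_sub, derivative_X, derivative_natCast, sub_zero, eval_one, mul_one]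
    rw [if_neg (Nat.succ_ne_zero k)]
    rw [Nat.factorial_succ]
    push_cast
    ring

lemma deriv_B_zero {k : ℕ} (hk : 1 ≤ k) :
    (Polynomial.derivative (B k)).eval 0 = (-1)^(k-1) / k := by
  obtain ⟨k', rfl⟩ : ∃ k', k = k' + 1 := ⟨k - 1, by omega⟩
  rw [B, derivative_C_mul, eval_mul, eval_C, deriv_desc_zero]
  rw [Nat.factorial_succ, Nat.add_sub_cancel]
  push_cast
  rw [mul_inv]
  field_simp

lemma deriv_B_zero_zero : (Polynomial.derivative (B 0)).eval 0 = 0 := by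
  rw [B, derivative_C_mul]
  simp [descPochhammer_zero]


end CInvCycle

/-- **Cycle graphs.** For `m ≥ 3`, the cycle graph `C_m` on `m` vertices has `c(C_m) = m − 1`. -/
theorem cInv_cycleGraph (m : ℕ) (hm : 3 ≤ m) :
    (SimpleGraph.cycleGraph m).cInv = (m : ℚ) - 1 := by
  classical
  obtain ⟨n, rfl⟩ : ∃ n, m = n + 3 := ⟨m - 3, by omega⟩
  set G := SimpleGraph.cycleGraph (n+3) with hG
  -- number of proper colorings with j colors
  have hnc : ∀ j : ℕ, (CInvCycle.nc G j : ℚ)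
      = ((j:ℚ)-1)^(n+3) + (-1)^(n+3) * ((j:ℚ)-1) := by
    intro j
    have e : {f : Fin (n+3) → Fin j // ∀ a b, G.Adj a b → f a ≠ f b}
        ≃ {f : Fin (n+3) → Fin j // CInvCycle.cycCond f} :=
      Equiv.subtypeEquivRight (fun f => CInvCycle.proper_iff (n := n+1) f)
    have h1 : CInvCycle.nc G j
        = Fintype.card {f : Fin (n+3) → Fin j // CInvCycle.cycCond f} := by
      rw [CInvCycle.nc, Nat.card_congr e, Nat.card_eq_fintype_card]
    have h2 := CInvCycle.card_cyc (n+2) j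
    rw [h1]
    rw [show ((j:ℚ)-1)^(n+3) + (-1:ℚ)^(n+3) * ((j:ℚ)-1)
        = ((((j:ℤ)-1)^(n+2+1) + (-1)^(n+2+1) * ((j:ℤ)-1) : ℤ) : ℚ) by push_cast; ring]
    exact_mod_cast congrArg (fun z : ℤ => (z:ℚ)) h2
  -- the polynomials
  set Q : ℚ[X] := ∑ k ∈ range (n+4), Polynomial.C ((CInvCycle.sc G k : ℚ)) * CInvCycle.B k
    with hQ
  set P : ℚ[X] := (X - 1)^(n+3) + Polynomial.C ((-1:ℚ)^(n+3)) * (X - 1) with hP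
  have hQeval : ∀ j : ℕ, Q.eval (j:ℚ) = (CInvCycle.nc G j : ℚ) := by
    intro j
    rw [hQ, eval_finset_sum]
    simp only [eval_mul, eval_C, CInvCycle.eval_B]
    rw [CInvCycle.nc_eq_sum]
    push_cast
    have e1 : ∑ k ∈ range (n+4), (CInvCycle.sc G k : ℚ) * (j.choose k : ℚ)
        = ∑ k ∈ range (n+4+j), (CInvCycle.sc G k : ℚ) * (j.choose k : ℚ) := by
      apply Finset.sum_subset (Finset.range_subset_range.mpr (by omega))
      intro k _ hk
      rw [Finset.mem_range, not_lt] at hk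
      rw [CInvCycle.sc_eq_zero G (by rw [Fintype.card_fin]; omega)]
      simp
    have e2 : ∑ k ∈ range (j+1), (j.choose k : ℚ) * (CInvCycle.sc G k : ℚ)
        = ∑ k ∈ range (n+4+j), (j.choose k : ℚ) * (CInvCycle.sc G k : ℚ) := by
      apply Finset.sum_subset (Finset.range_subset_range.mpr (by omega))
      intro k _ hk
      rw [Finset.mem_range, not_lt] at hk
      rw [Nat.choose_eq_zero_of_lt (by omega)]
      simp
    rw [e1, e2]
    exact Finset.sum_congr rfl fun k _ => mul_comm _ _
  have hPeval : ∀ j : ℕ, P.eval (j:ℚ) = (CInvCycle.nc G j : ℚ) := by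
    intro j
    rw [hnc j, hP]
    simp [eval_pow]
  have hQP : Q = P := by
    apply Polynomial.eq_of_infinite_eval_eq
    apply Set.infinite_of_injective_forall_mem (f := (Nat.cast : ℕ → ℚ)) Nat.cast_injective
    intro j
    rw [Set.mem_setOf_eq, hQeval j, hPeval j]
  have hQd : (Polynomial.derivative Q).eval 0
      = ∑ k ∈ range (n+4), (CInvCycle.sc G k : ℚ) * ((Polynomial.derivative (CInvCycle.B k)).eval 0) := by
    rw [hQ, map_sum, eval_finset_sum]
    refine Finset.sum_congr rfl fun k _ => ?_
    rw [Polynomial.derivative_C_mul, eval_mul, eval_C]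
  have hsum : ∑ k ∈ Finset.Icc 1 (n+3), (-1:ℚ)^k * (CInvCycle.sc G k : ℚ) / (k:ℚ)
      = -((Polynomial.derivative Q).eval 0) := by
    rw [hQd]
    have hr : range (n+4) = insert 0 (Finset.Icc 1 (n+3)) := by
      ext x
      simp only [Finset.mem_range, Finset.mem_insert, Finset.mem_Icc]
      omega
    rw [hr, Finset.sum_insert (by simp), CInvCycle.deriv_B_zero_zero, mul_zero, zero_add,
      ← Finset.sum_neg_distrib]
    refine Finset.sum_congr rfl fun k hk => ?_
    rw [Finset.mem_Icc] at hk
    rw [CInvCycle.deriv_B_zero hk.1]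
    have hpow : (-1:ℚ)^k = -(-1:ℚ)^(k-1) := by
      conv_lhs => rw [show k = (k-1)+1 by omega]
      rw [pow_succ]
      ring
    rw [hpow]
    ring
  have hPd : (Polynomial.derivative P).eval 0 = (n+3) * (-1:ℚ)^(n+2) + (-1:ℚ)^(n+3) := by
    rw [hP]
    rw [map_add, Polynomial.derivative_pow, Polynomial.derivative_C_mul]
    simp only [Polynomial.derivative_sub, Polynomial.derivative_X, Polynomial.derivative_one,
      sub_zero, mul_one, Nat.add_sub_cancel]
    simp [eval_pow]
  -- final assembly
  rw [SimpleGraph.cInv]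
  simp only [Fintype.card_fin]
  have hck : ∀ k ∈ Finset.Icc 1 (n+3),
      (-1:ℚ)^k * ((G.ckPart k : ℚ)) / (k:ℚ)
        = (-1:ℚ)^k * (CInvCycle.sc G k : ℚ) / (k:ℚ) := by
    intro k _
    rw [CInvCycle.ckPart_eq_sc]
  rw [Finset.sum_congr rfl hck, hsum, hQP, hPd]
  have ht : (-1:ℚ)^(n+3) * (-1:ℚ)^(n+3) = 1 := by
    rw [← pow_add]
    exact Even.neg_one_pow ⟨n+3, by ring⟩
  have hp3 : (-1:ℚ)^(n+3) = (-1:ℚ)^(n+2) * (-1) := pow_succ _ _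
  push_cast
  rw [hp3] at ht ⊢
  nlinarith [ht]
end

section
/- Let G be a finite simple graph with at least one vertex. If G is connected, then c(G) > 0. -/
namespace ChromAux

open Finset Polynomial

variable {V : Type*} [Fintype V] [DecidableEq V]

/-- `f` is a proper coloring of `G`. -/
def Proper (G : SimpleGraph V) {α : Type*} (f : V → α) : Prop :=
  ∀ ⦃x y⦄, G.Adj x y → f x ≠ f y

/-- Number of proper colorings of `G` with colors in `Fin n`. -/
noncomputable def pcount (G : SimpleGraph V) (n : ℕ) : ℕ :=
  Nat.card {f : V → Fin n // Proper G f}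

/-- Number of surjective proper colorings of `G` with colors in `Fin k`. -/
noncomputable def scount (G : SimpleGraph V) (k : ℕ) : ℕ :=
  Nat.card {f : V → Fin k // Proper G f ∧ Function.Surjective f}

lemma ckPart_eq_scount (G : SimpleGraph V) (k : ℕ) (hk : k ≠ 0) :
    G.ckPart k = scount G k := by
  rw [SimpleGraph.ckPart, if_neg hk, scount]
  apply Nat.card_congr
  symm
  refine Equiv.ofBijective
    (fun f => ⟨fun i => Finset.univ.filter (fun v => f.1 v = i), ?_, ?_, ?_, ?_⟩) ?_
  · intro i
    obtain ⟨v, hv⟩ := f.2.2 i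
    exact ⟨v, by simp [hv]⟩
  · intro i j hij
    simp only [Finset.disjoint_left, Finset.mem_filter]
    rintro v ⟨-, rfl⟩ ⟨-, rfl⟩
    exact hij rfl
  · ext v
    simp only [Finset.mem_biUnion, Finset.mem_filter, Finset.mem_univ, true_and, iff_true]
    exact ⟨f.1 v, rfl⟩
  · intro i a ha b hb hab
    simp only [Finset.mem_filter] at ha hb
    exact f.2.1 hab (ha.2.trans hb.2.symm)
  constructor
  · rintro ⟨f, hf⟩ ⟨g, hg⟩ h
    simp only [Subtype.mk.injEq] at h ⊢
    funext v
    have := congrArg (fun J => v ∈ J (g v)) h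
    simpa using this
  · rintro ⟨J, hne, hdisj, huniv, hind⟩
    have hex : ∀ v : V, ∃! i, i ∈ (Finset.univ : Finset (Fin k)) ∧ v ∈ J i := by
      intro v
      have : v ∈ Finset.univ.biUnion J := by rw [huniv]; exact Finset.mem_univ v
      obtain ⟨i, -, hi⟩ := Finset.mem_biUnion.mp this
      refine ⟨i, ⟨Finset.mem_univ i, hi⟩, ?_⟩
      rintro j ⟨-, hj⟩
      by_contra hne'
      exact Finset.disjoint_left.mp (hdisj j i hne') hj hi
    set f : V → Fin k := fun v => Finset.choose _ _ (hex v) with hfdef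
    have hfm : ∀ v, v ∈ J (f v) := fun v => Finset.choose_property _ _ (hex v)
    have hfu : ∀ v i, v ∈ J i → f v = i := by
      intro v i hi
      exact ((hex v).unique ⟨Finset.mem_univ _, hfm v⟩ ⟨Finset.mem_univ _, hi⟩)
    refine ⟨⟨f, ?_, ?_⟩, ?_⟩
    · intro x y hxy hfeq
      exact hind (f x) x (hfm x) y (hfeq ▸ hfm y) hxy
    · intro i
      obtain ⟨v, hv⟩ := hne i
      exact ⟨v, hfu v i hv⟩
    · simp only [Subtype.mk.injEq]
      refine Subtype.ext (funext fun i => ?_)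
      ext v
      simp only [Finset.mem_filter, Finset.mem_univ, true_and]
      exact ⟨fun h => h ▸ hfm v, fun h => hfu v i h⟩

lemma scount_eq_zero_of_lt (G : SimpleGraph V) {k : ℕ} (hk : Fintype.card V < k) :
    scount G k = 0 := by
  rw [scount, Nat.card_eq_zero]
  left
  constructor
  rintro ⟨f, -, hs⟩
  have := Fintype.card_le_of_surjective f hs
  simp only [Fintype.card_fin] at this
  omega

lemma scount_zero [Nonempty V] (G : SimpleGraph V) : scount G 0 = 0 := by
  rw [scount, Nat.card_eq_zero]
  left
  constructor
  rintro ⟨f, -⟩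
  exact (f (Classical.arbitrary V)).elim0

lemma pcount_zero [Nonempty V] (G : SimpleGraph V) : pcount G 0 = 0 := by
  rw [pcount, Nat.card_eq_zero]
  left
  constructor
  rintro ⟨f, -⟩
  exact (f (Classical.arbitrary V)).elim0

lemma nat_card_sigma {ι : Type*} [Fintype ι] (f : ι → Type*) [∀ i, Finite (f i)] :
    Nat.card (Σ i, f i) = ∑ i, Nat.card (f i) := by
  letI : ∀ i, Fintype (f i) := fun i => Fintype.ofFinite _
  simp [Nat.card_eq_fintype_card, Fintype.card_sigma]

/-- The fiber equivalence: proper colorings with image exactly `S` correspond to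
surjective proper colorings into `Fin S.card`. -/
noncomputable def fiberEquiv (G : SimpleGraph V) {n : ℕ} (S : Finset (Fin n)) :
    {f : V → Fin n // Proper G f ∧ Finset.image f Finset.univ = S} ≃
      {g : V → Fin S.card // Proper G g ∧ Function.Surjective g} where
  toFun f := ⟨fun v => S.equivFin ⟨f.1 v, by
      have h := Finset.mem_image_of_mem f.1 (Finset.mem_univ v)
      rwa [f.2.2] at h⟩, by
    constructor
    · intro x y hxy h
      exact f.2.1 hxy (by simpa [Subtype.ext_iff] using S.equivFin.injective h)
    · intro j
      have hmem : (S.equivFin.symm j : Fin n) ∈ Finset.image f.1 Finset.univ := by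
        rw [f.2.2]; exact (S.equivFin.symm j).2
      obtain ⟨v, -, hv⟩ := Finset.mem_image.mp hmem
      refine ⟨v, ?_⟩
      rw [Equiv.apply_eq_iff_eq_symm_apply]
      exact Subtype.ext hv⟩
  invFun g := ⟨fun v => (S.equivFin.symm (g.1 v) : Fin n), by
    constructor
    · intro x y hxy h
      exact g.2.1 hxy (S.equivFin.symm.injective (Subtype.ext h))
    · apply Finset.Subset.antisymm
      · intro s hs
        simp only [Finset.mem_image] at hs
        obtain ⟨v, -, rfl⟩ := hs
        exact (S.equivFin.symm (g.1 v)).2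
      · intro s hs
        obtain ⟨v, hv⟩ := g.2.2 (S.equivFin ⟨s, hs⟩)
        simp only [Finset.mem_image]
        exact ⟨v, Finset.mem_univ v, by rw [hv, Equiv.symm_apply_apply]⟩⟩
  left_inv f := by
    apply Subtype.ext
    funext v
    simp
  right_inv g := by
    apply Subtype.ext
    funext v
    simp

lemma pcount_eq_sum [Nonempty V] (G : SimpleGraph V) (n : ℕ) :
    pcount G n = ∑ k ∈ Finset.Icc 1 (Fintype.card V), n.choose k * scount G k := by
  classical
  have h1 : pcount G n
      = ∑ S : Finset (Fin n), scount G S.card := by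
    rw [pcount]
    rw [Nat.card_congr ((Equiv.sigmaFiberEquiv
      (fun f : {f : V → Fin n // Proper G f} => Finset.image f.1 Finset.univ)).symm)]
    rw [nat_card_sigma]
    congr 1
    funext S
    rw [Nat.card_congr ((Equiv.subtypeSubtypeEquivSubtypeInter _ _).trans (fiberEquiv G S))]
    rfl
  rw [h1]
  have h2 : ∑ S : Finset (Fin n), scount G S.card
      = ∑ k ∈ Finset.range (n + 1), n.choose k * scount G k := by
    rw [← Finset.sum_fiberwise_of_maps_to (g := fun S : Finset (Fin n) => S.card)
      (t := Finset.range (n + 1)) (fun S _ => by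
        simp only [Finset.mem_range]
        exact Nat.lt_succ_of_le (by simpa using S.card_le_univ))]
    apply Finset.sum_congr rfl
    intro k hk
    rw [Finset.sum_congr rfl (fun S hS => by
      simp only [Finset.mem_filter] at hS
      rw [hS.2]), Finset.sum_const, smul_eq_mul]
    congr 1
    have : Finset.univ.filter (fun S : Finset (Fin n) => S.card = k)
        = Finset.powersetCard k Finset.univ := by
      ext S
      simp [Finset.mem_powersetCard_univ]
    rw [this, Finset.card_powersetCard, Finset.card_univ, Fintype.card_fin]
  rw [h2]
  set l := Fintype.card V with hl
  have key : ∀ k, k ∈ Finset.range (n+1) ∪ Finset.Icc 1 l →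
      k ∉ Finset.Icc 1 l → n.choose k * scount G k = 0 := by
    intro k _ hk2
    simp only [Finset.mem_Icc, not_and, not_le] at hk2
    rcases Nat.eq_zero_or_pos k with rfl | hpos
    · rw [scount_zero]; ring
    · rw [scount_eq_zero_of_lt G (hk2 hpos)]; ring
  have key2 : ∀ k, k ∈ Finset.range (n+1) ∪ Finset.Icc 1 l →
      k ∉ Finset.range (n+1) → n.choose k * scount G k = 0 := by
    intro k _ hk2
    simp only [Finset.mem_range, not_lt] at hk2
    rw [Nat.choose_eq_zero_of_lt (by omega)]
    ring
  rw [Finset.sum_subset Finset.subset_union_left key2,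
    ← Finset.sum_subset Finset.subset_union_right key]

/-- The chromatic polynomial of `G`, via surjective-coloring counts. -/
noncomputable def chrom (G : SimpleGraph V) : ℚ[X] :=
  ∑ k ∈ Finset.Icc 1 (Fintype.card V),
    ((scount G k : ℚ) * ((k.factorial : ℚ)⁻¹)) • descPochhammer ℚ k

lemma chrom_eval [Nonempty V] (G : SimpleGraph V) (n : ℕ) :
    (chrom G).eval (n : ℚ) = pcount G n := by
  rw [chrom, Polynomial.eval_finset_sum, pcount_eq_sum G n, Nat.cast_sum]
  apply Finset.sum_congr rfl
  intro k hk
  rw [Polynomial.eval_smul, smul_eq_mul, descPochhammer_eval_eq_descFactorial,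
    Nat.descFactorial_eq_factorial_mul_choose]
  have hfac : (k.factorial : ℚ) ≠ 0 := by positivity
  push_cast
  field_simp

lemma descPochhammer_coeff_one : ∀ (k : ℕ), k ≠ 0 →
    (descPochhammer ℚ k).coeff 1 = (-1 : ℚ) ^ (k - 1) * (k - 1).factorial := by
  intro k
  induction k with
  | zero => simp
  | succ k ih =>
    intro _
    rcases Nat.eq_zero_or_pos k with rfl | hk
    · simp [descPochhammer_one]
    · rw [descPochhammer_succ_right, mul_sub, Polynomial.coeff_sub,
        Polynomial.coeff_mul_X]
      have h0 : (descPochhammer ℚ k).coeff 0 = 0 := by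
        have hkne : k ≠ 0 := by omega
        rw [Polynomial.coeff_zero_eq_eval_zero]
        simp [hkne]
      have hnc : ((k : ℕ) : ℚ[X]) = Polynomial.C (k : ℚ) := by
        simp
      rw [h0, hnc, mul_comm, Polynomial.coeff_C_mul, ih (by omega)]
      have : k - 1 + 1 = k := by omega
      rw [Nat.succ_sub_one]
      rw [← this, Nat.factorial_succ, pow_succ]
      push_cast [this]
      ring

lemma cInv_eq_coeff_one (G : SimpleGraph V) :
    G.cInv = (-1 : ℚ) ^ (Fintype.card V + 1) * (chrom G).coeff 1 := by
  rw [SimpleGraph.cInv, chrom, Polynomial.finset_sum_coeff, Finset.mul_sum, Finset.mul_sum]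
  apply Finset.sum_congr rfl
  intro k hk
  simp only [Finset.mem_Icc] at hk
  obtain ⟨j, rfl⟩ : ∃ j, k = j + 1 := ⟨k - 1, by omega⟩
  rw [ckPart_eq_scount G (j+1) (by omega)]
  rw [Polynomial.coeff_smul, smul_eq_mul, descPochhammer_coeff_one (j+1) (by omega)]
  simp only [Nat.add_sub_cancel, Nat.factorial_succ]
  have h2 : ((j.factorial : ℚ)) ≠ 0 := by positivity
  have h3 : ((j:ℚ) + 1) ≠ 0 := by positivity
  push_cast
  rw [pow_succ (-1:ℚ) (Fintype.card V), pow_succ (-1:ℚ) j]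
  field_simp

lemma poly_ext {P Q : ℚ[X]} (h : ∀ n : ℕ, P.eval (n : ℚ) = Q.eval (n : ℚ)) : P = Q := by
  have : P - Q = 0 := by
    apply Polynomial.eq_zero_of_infinite_isRoot
    apply Set.Infinite.mono (s := Set.range ((↑) : ℕ → ℚ))
    · rintro x ⟨n, rfl⟩
      simp [Polynomial.IsRoot, h n]
    · exact Set.infinite_range_of_injective Nat.cast_injective
  exact sub_eq_zero.mp this

lemma nat_card_split {α : Type*} [Finite α] (p q : α → Prop) :
    Nat.card {x // p x} = Nat.card {x // p x ∧ q x} + Nat.card {x // p x ∧ ¬ q x} := by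
  classical
  rw [Nat.card_congr (Equiv.sumCompl (fun x : {x // p x} => q x.1)).symm, Nat.card_sum]
  congr 1
  · exact Nat.card_congr (Equiv.subtypeSubtypeEquivSubtypeInter p q)
  · exact Nat.card_congr (Equiv.subtypeSubtypeEquivSubtypeInter p (fun x => ¬ q x))

/-- Contraction of the edge `a-b` (identifying `b` with `a`). -/
def contract (G : SimpleGraph V) (a b : V) : SimpleGraph {x : V // x ≠ b} where
  Adj x y := x ≠ y ∧ (G.Adj x y ∨ ((x : V) = a ∧ G.Adj b y) ∨ ((y : V) = a ∧ G.Adj (x : V) b))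
  symm := by
    constructor
    rintro x y ⟨hxy, h⟩
    refine ⟨hxy.symm, ?_⟩
    rcases h with h | ⟨h1, h2⟩ | ⟨h1, h2⟩
    · exact Or.inl h.symm
    · exact Or.inr (Or.inr ⟨h1, h2.symm⟩)
    · exact Or.inr (Or.inl ⟨h1, h2.symm⟩)
  loopless := ⟨fun x h => h.1 rfl⟩

lemma pcount_del (G : SimpleGraph V) {a b : V} (hab : G.Adj a b) (n : ℕ) :
    pcount (G.deleteEdges {s(a,b)}) n = pcount G n + pcount (contract G a b) n := by
  classical
  have hne : a ≠ b := G.ne_of_adj hab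
  rw [pcount, nat_card_split (fun f : V → Fin n => Proper (G.deleteEdges {s(a,b)}) f)
    (fun f => f a ≠ f b)]
  congr 1
  · rw [pcount]
    apply Nat.card_congr
    apply Equiv.subtypeEquivRight
    intro f
    constructor
    · rintro ⟨hp, hfab⟩ x y hxy
      by_cases h : s(x,y) = s(a,b)
      · rw [Sym2.eq_iff] at h
        rcases h with ⟨rfl, rfl⟩ | ⟨rfl, rfl⟩
        · exact hfab
        · exact fun h' => hfab h'.symm
      · exact hp (by simp [h, hxy])
    · intro hp
      refine ⟨fun x y hxy => hp ((SimpleGraph.deleteEdges_adj).mp hxy).1, hp hab⟩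
  · rw [pcount]
    apply Nat.card_congr
    refine Equiv.mk
      (fun f => ⟨fun x => f.1 x.1, ?_⟩)
      (fun g => ⟨fun x => if h : x = b then g.1 ⟨a, hne⟩ else g.1 ⟨x, h⟩, ?_, ?_⟩)
      ?_ ?_
    · -- image of f is proper for the contraction
      obtain ⟨f, hp, hfab⟩ := f
      rw [not_not] at hfab
      rintro x y ⟨hxy, h | ⟨h1, h2⟩ | ⟨h1, h2⟩⟩ heq
      · have hsexy : s(x.1, y.1) ≠ s(a,b) := by
          intro hc
          rw [Sym2.eq_iff] at hc
          rcases hc with ⟨-, hyb⟩ | ⟨hxb, -⟩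
          · exact y.2 hyb
          · exact x.2 hxb
        exact hp (by simp [h, hsexy]) heq
      · -- x.1 = a, G.Adj b y.1
        have heq' : f x.1 = f y.1 := heq
        have hy : y.1 ≠ a := fun hya => hxy (Subtype.ext (h1.trans hya.symm))
        have hsexy : s(b, y.1) ≠ s(a,b) := by
          intro hc
          rw [Sym2.eq_iff] at hc
          rcases hc with ⟨hba, -⟩ | ⟨-, hya⟩
          · exact hne hba.symm
          · exact hy hya
        refine hp (x := b) (y := y.1) (by simp [h2, hsexy]) ?_
        rw [← hfab, ← h1]
        exact heq'
      · have heq' : f x.1 = f y.1 := heq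
        have hx : x.1 ≠ a := fun hxa => hxy (Subtype.ext (hxa.trans h1.symm))
        have hsexy : s(x.1, b) ≠ s(a,b) := by
          intro hc
          rw [Sym2.eq_iff] at hc
          rcases hc with ⟨hxa, -⟩ | ⟨hxb, -⟩
          · exact hx hxa
          · exact x.2 hxb
        refine hp (x := x.1) (y := b) (by simp [h2, hsexy]) ?_
        rw [heq', h1]
        exact hfab
    · -- preimage is proper for G - e
      intro x y hxy heq
      rw [SimpleGraph.deleteEdges_adj, Set.mem_singleton_iff] at hxy
      obtain ⟨hadj, hse⟩ := hxy
      have hxyne : x ≠ y := G.ne_of_adj hadj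
      by_cases hx : x = b <;> by_cases hy : y = b
      · exact hxyne (hx.trans hy.symm)
      · subst hx
        have hya : y ≠ a := by
          intro h; apply hse; rw [h]; exact Sym2.eq_swap
        simp only [dif_pos, dif_neg hy] at heq
        refine g.2 (x := ⟨a, hne⟩) (y := ⟨y, hy⟩) ⟨?_, Or.inr (Or.inl ⟨rfl, hadj⟩)⟩ heq
        exact fun hc => hya (congrArg Subtype.val hc).symm
      · subst hy
        have hxa : x ≠ a := by
          intro h; apply hse; rw [h]
        simp only [dif_pos, dif_neg hx] at heq
        refine g.2 (x := ⟨x, hx⟩) (y := ⟨a, hne⟩) ⟨?_, Or.inr (Or.inr ⟨rfl, hadj⟩)⟩ heq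
        exact fun hc => hxa (congrArg Subtype.val hc)
      · simp only [dif_neg hx, dif_neg hy] at heq
        refine g.2 (x := ⟨x, hx⟩) (y := ⟨y, hy⟩) ⟨?_, Or.inl hadj⟩ heq
        exact fun hc => hxyne (congrArg Subtype.val hc)
    · rw [not_not]
      simp [dif_neg hne]
    · rintro ⟨f, hp, hfab⟩
      rw [not_not] at hfab
      apply Subtype.ext
      funext x
      by_cases hx : x = b
      · subst hx
        simp only [dif_pos]
        exact hfab
      · simp only [dif_neg hx]
    · intro g
      apply Subtype.ext
      funext x
      simp only [dif_neg x.2]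

lemma contract_connected {G : SimpleGraph V} {a b : V} (hab : G.Adj a b)
    (hG : G.Connected) : (contract G a b).Connected := by
  have hne : a ≠ b := G.ne_of_adj hab
  set π : V → {x : V // x ≠ b} := fun x => if h : x = b then ⟨a, hne⟩ else ⟨x, h⟩ with hπ
  have hstep : ∀ x y : V, G.Adj x y → (contract G a b).Reachable (π x) (π y) := by
    intro x y hxy
    by_cases hpeq : π x = π y
    · rw [hpeq]
    refine SimpleGraph.Adj.reachable ⟨hpeq, ?_⟩
    by_cases hx : x = b <;> by_cases hy : y = b
    · exact absurd (hx.trans hy.symm) (G.ne_of_adj hxy)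
    · subst hx
      simp only [hπ, dif_pos, dif_neg hy]
      exact Or.inr (Or.inl ⟨by trivial, hxy⟩)
    · subst hy
      simp only [hπ, dif_pos, dif_neg hx]
      exact Or.inr (Or.inr ⟨by trivial, hxy⟩)
    · simp only [hπ, dif_neg hx, dif_neg hy]
      exact Or.inl hxy
  have hreach : ∀ x y : V, G.Reachable x y → (contract G a b).Reachable (π x) (π y) := by
    intro x y hr
    obtain ⟨w⟩ := hr
    induction w with
    | nil => rfl
    | cons h p ih => exact (hstep _ _ h).trans ih
  rw [SimpleGraph.connected_iff]
  refine ⟨?_, ⟨⟨a, hne⟩⟩⟩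
  · intro u v
    have hu : π u.1 = u := by simp [hπ, dif_neg u.2]
    have hv : π v.1 = v := by simp [hπ, dif_neg v.2]
    rw [← hu, ← hv]
    exact hreach _ _ (hG.preconnected _ _)

lemma card_contract {b : V} : Fintype.card {x : V // x ≠ b} = Fintype.card V - 1 := by
  have h1 : Fintype.card {x : V // ¬ (x = b)} = Fintype.card V - Fintype.card {x : V // x = b} :=
    Fintype.card_subtype_compl _
  rw [Fintype.card_subtype_eq] at h1
  exact h1

lemma edgecount_del {G : SimpleGraph V} {a b : V} (hab : G.Adj a b) :
    Nat.card (G.deleteEdges {s(a,b)}).edgeSet < Nat.card G.edgeSet := by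
  rw [SimpleGraph.edgeSet_deleteEdges]
  rw [Nat.card_coe_set_eq, Nat.card_coe_set_eq]
  exact Set.ncard_lt_ncard (by
    constructor
    · exact Set.diff_subset
    · intro hsub
      exact (hsub (G.mem_edgeSet.mpr hab)).2 rfl) (Set.toFinite _)

lemma pcount_prod (G : SimpleGraph V) (A : Set V) [DecidablePred (· ∈ A)]
    (hA : ∀ ⦃x y⦄, G.Adj x y → x ∈ A → y ∈ A) (n : ℕ) :
    pcount G n = pcount (G.induce A) n * pcount (G.induce Aᶜ) n := by
  classical
  rw [pcount, pcount, pcount, ← Nat.card_prod]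
  apply Nat.card_congr
  refine Equiv.mk
    (fun f => (⟨fun v => f.1 v.1, ?_⟩, ⟨fun v => f.1 v.1, ?_⟩))
    (fun g => ⟨fun v => if h : v ∈ A then g.1.1 ⟨v, h⟩ else g.2.1 ⟨v, h⟩, ?_⟩)
    ?_ ?_
  · intro x y hxy
    exact f.2 ((SimpleGraph.comap_adj).mp hxy)
  · intro x y hxy
    exact f.2 ((SimpleGraph.comap_adj).mp hxy)
  · intro x y hxy
    by_cases hx : x ∈ A <;> by_cases hy : y ∈ A
    · simp only [dif_pos hx, dif_pos hy]
      exact g.1.2 (by exact hxy)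
    · exact absurd (hA hxy hx) hy
    · exact absurd (hA hxy.symm hy) hx
    · simp only [dif_neg hx, dif_neg hy]
      exact g.2.2 (by exact hxy)
  · intro f
    apply Subtype.ext
    funext v
    by_cases hv : v ∈ A
    · simp only [dif_pos hv]
    · simp only [dif_neg hv]
  · intro g
    ext v
    · simp only [dif_pos v.2]
    · simp only [dif_neg (Set.notMem_of_mem_compl v.2)]

lemma coeff_one_mul (P Q : ℚ[X]) :
    (P * Q).coeff 1 = P.coeff 0 * Q.coeff 1 + P.coeff 1 * Q.coeff 0 := by
  rw [Polynomial.coeff_mul]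
  have h : Finset.HasAntidiagonal.antidiagonal (1:ℕ) = {(0,1),(1,0)} := by rfl
  rw [h, Finset.sum_pair (by decide)]

lemma cInv_eq_zero_of_not_connected [Nonempty V] (G : SimpleGraph V)
    (h : ¬ G.Connected) : G.cInv = 0 := by
  classical
  have hpre : ¬ G.Preconnected := fun hp =>
    h (G.connected_iff.mpr ⟨hp, inferInstance⟩)
  rw [SimpleGraph.Preconnected] at hpre
  push_neg at hpre
  obtain ⟨v, w, hvw⟩ := hpre
  set A : Set V := {x | G.Reachable v x} with hA
  have hAcl : ∀ ⦃x y⦄, G.Adj x y → x ∈ A → y ∈ A := by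
    intro x y hxy hx
    exact hx.trans hxy.reachable
  haveI : Nonempty ↥A := ⟨⟨v, SimpleGraph.Reachable.refl v⟩⟩
  haveI : Nonempty ↥Aᶜ := ⟨⟨w, hvw⟩⟩
  have hchrom : chrom G = chrom (G.induce A) * chrom (G.induce Aᶜ) := by
    apply poly_ext
    intro n
    rw [Polynomial.eval_mul, chrom_eval, chrom_eval, chrom_eval, pcount_prod G A hAcl n]
    push_cast
    ring
  have hzero : (chrom G).coeff 1 = 0 := by
    rw [hchrom, coeff_one_mul]
    have c1 : (chrom (G.induce A)).coeff 0 = 0 := by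
      rw [Polynomial.coeff_zero_eq_eval_zero]
      have := chrom_eval (G.induce A) 0
      rw [pcount_zero] at this
      simpa using this
    have c2 : (chrom (G.induce Aᶜ)).coeff 0 = 0 := by
      rw [Polynomial.coeff_zero_eq_eval_zero]
      have := chrom_eval (G.induce Aᶜ) 0
      rw [pcount_zero] at this
      simpa using this
    rw [c1, c2]
    ring
  rw [cInv_eq_coeff_one, hzero, mul_zero]

lemma cInv_rec [Nonempty V] (G : SimpleGraph V) {a b : V} (hab : G.Adj a b) :
    G.cInv = (G.deleteEdges {s(a,b)}).cInv + (contract G a b).cInv := by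
  have hne : a ≠ b := G.ne_of_adj hab
  haveI : Nonempty {x : V // x ≠ b} := ⟨⟨a, hne⟩⟩
  have hchrom : chrom (G.deleteEdges {s(a,b)}) = chrom G + chrom (contract G a b) := by
    apply poly_ext
    intro n
    rw [Polynomial.eval_add, chrom_eval, chrom_eval, chrom_eval, pcount_del G hab n]
    push_cast
    ring
  obtain ⟨l, hl⟩ : ∃ l, Fintype.card V = l + 1 :=
    ⟨Fintype.card V - 1, by have := Fintype.card_pos (α := V); omega⟩
  have hco : (chrom G).coeff 1 =
      (chrom (G.deleteEdges {s(a,b)})).coeff 1 - (chrom (contract G a b)).coeff 1 := by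
    rw [hchrom, Polynomial.coeff_add]
    ring
  rw [cInv_eq_coeff_one, cInv_eq_coeff_one, cInv_eq_coeff_one, card_contract, hl]
  have hll : l + 1 - 1 = l := by omega
  rw [hll, hco, pow_succ, pow_succ]
  ring

lemma cInv_card_one (G : SimpleGraph V) (h : Fintype.card V = 1) : G.cInv = 1 := by
  have h1 : G.ckPart 1 = 1 := by
    rw [SimpleGraph.ckPart, if_neg one_ne_zero]
    haveI : Subsingleton V := by
      rw [← Fintype.card_le_one_iff_subsingleton, h]
    rw [Nat.card_eq_one_iff_unique]
    constructor
    · constructor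
      rintro ⟨J, hne, -, huniv, -⟩ ⟨K, kne, -, kuniv, -⟩
      apply Subtype.ext
      funext i
      have hJ : ∀ (L : Fin 1 → Finset V), Finset.univ.biUnion L = Finset.univ →
          L i = Finset.univ := by
        intro L hL
        apply Finset.eq_univ_of_forall
        intro x
        have : x ∈ Finset.univ.biUnion L := by rw [hL]; exact Finset.mem_univ x
        obtain ⟨j, -, hj⟩ := Finset.mem_biUnion.mp this
        rwa [Subsingleton.elim i j]
      show J i = K i
      rw [hJ J huniv, hJ K kuniv]
    · refine ⟨⟨fun _ => Finset.univ, ?_, ?_, ?_, ?_⟩⟩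
      · intro i
        haveI : Nonempty V := Fintype.card_pos_iff.mp (by omega)
        exact Finset.univ_nonempty
      · intro i j hij
        exact absurd (Subsingleton.elim i j) hij
      · simp
      · intro i x hx y hy hadj
        exact G.loopless.irrefl x (Subsingleton.elim y x ▸ hadj)
  rw [SimpleGraph.cInv, h, Finset.Icc_self, Finset.sum_singleton, h1]
  norm_num

end ChromAux

open ChromAux

/-- **Connected graphs.** If `G` is a connected graph (on at least one vertex),
then `c(G) > 0`. -/
theorem cInv_pos_of_connected {V : Type*} [Fintype V] [DecidableEq V] [Nonempty V]
    (G : SimpleGraph V) (hG : G.Connected) :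
    0 < G.cInv := by
  classical
  suffices H : ∀ (n m : ℕ) {W : Type _} [Fintype W] [DecidableEq W] [Nonempty W]
      (G : SimpleGraph W), Fintype.card W = n → Nat.card G.edgeSet = m → G.Connected →
      0 < G.cInv by
    exact H (Fintype.card V) (Nat.card G.edgeSet) G rfl rfl hG
  intro n
  induction n using Nat.strong_induction_on with
  | _ n ihn =>
  intro m
  induction m using Nat.strong_induction_on with
  | _ m ihm =>
  intro W _ _ _ G hn hm hG
  by_cases hE : G.edgeSet.Nonempty
  · obtain ⟨e, he⟩ := hE
    revert he
    induction e using Sym2.ind with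
    | _ a b =>
    intro he
    have hab : G.Adj a b := G.mem_edgeSet.mp he
    have hne : a ≠ b := G.ne_of_adj hab
    haveI : Nonempty {x : W // x ≠ b} := ⟨⟨a, hne⟩⟩
    rw [cInv_rec G hab]
    have hn1 : 1 ≤ n := by
      rw [← hn]
      exact Fintype.card_pos
    have hpos : 0 < (contract G a b).cInv := by
      have hcard : Fintype.card {x : W // x ≠ b} = n - 1 := by rw [card_contract, hn]
      exact ihn (n-1) (by omega) _ _ hcard rfl (contract_connected hab hG)
    have hnn : 0 ≤ (G.deleteEdges {s(a,b)}).cInv := by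
      by_cases hc : (G.deleteEdges {s(a,b)}).Connected
      · exact le_of_lt (ihm (Nat.card (G.deleteEdges {s(a,b)}).edgeSet)
          (hm ▸ edgecount_del hab) _ hn rfl hc)
      · rw [cInv_eq_zero_of_not_connected _ hc]
    linarith
  · have hbot : G = ⊥ := by
      rw [← SimpleGraph.edgeSet_eq_empty]
      rwa [Set.not_nonempty_iff_eq_empty] at hE
    have hcard1 : Fintype.card W = 1 := by
      rw [Fintype.card_eq_one_iff]
      refine ⟨Classical.arbitrary W, fun y => ?_⟩
      have := hG.preconnected y (Classical.arbitrary W)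
      rw [hbot] at this
      exact SimpleGraph.reachable_bot.mp this
    rw [cInv_card_one G hcard1]
    norm_num
end

section
/- Let G be a finite simple graph with at least one vertex. If G is disconnected (i.e., not connected), then c(G) = 0. -/
open Finset Polynomial

namespace ChromAux

/-- Number of proper colorings of `H` with colors in `Fin n`. -/
noncomputable def pc {W : Type*} (H : SimpleGraph W) (n : ℕ) : ℕ :=
  Nat.card {f : W → Fin n // ∀ a b, H.Adj a b → f a ≠ f b}

/-- Number of surjective proper colorings of `H` with colors in `Fin k`. -/
noncomputable def sc {W : Type*} (H : SimpleGraph W) (k : ℕ) : ℕ :=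
  Nat.card {f : W → Fin k // (∀ a b, H.Adj a b → f a ≠ f b) ∧ Function.Surjective f}

variable {V : Type*} [Fintype V] [DecidableEq V]

lemma existsUnique_part {G : SimpleGraph V} {k : ℕ} {J : Fin k → Finset V}
    (h : G.IsOrderedPartition J) (a : V) : ∃! i, a ∈ J i := by
  have ha : a ∈ Finset.univ.biUnion J := by rw [h.2.2.1]; exact Finset.mem_univ a
  obtain ⟨i, -, hi⟩ := Finset.mem_biUnion.1 ha
  refine ⟨i, hi, fun j hj => ?_⟩
  by_contra hne
  exact (Finset.disjoint_left.1 (h.2.1 j i hne) hj) hi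

/-- The coloring associated to an ordered partition. -/
noncomputable def pcol {G : SimpleGraph V} {k : ℕ} {J : Fin k → Finset V}
    (h : G.IsOrderedPartition J) (a : V) : Fin k :=
  (existsUnique_part h a).choose

lemma pcol_mem {G : SimpleGraph V} {k : ℕ} {J : Fin k → Finset V}
    (h : G.IsOrderedPartition J) (a : V) : a ∈ J (pcol h a) :=
  (existsUnique_part h a).choose_spec.1

lemma pcol_eq {G : SimpleGraph V} {k : ℕ} {J : Fin k → Finset V}
    (h : G.IsOrderedPartition J) {a : V} {i : Fin k} (hi : a ∈ J i) : pcol h a = i :=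
  ((existsUnique_part h a).choose_spec.2 i hi).symm

lemma sc_zero [Nonempty V] (G : SimpleGraph V) : sc G 0 = 0 := by
  have : IsEmpty {f : V → Fin 0 // (∀ a b, G.Adj a b → f a ≠ f b) ∧ Function.Surjective f} :=
    ⟨fun f => (f.1 (Classical.arbitrary V)).elim0⟩
  exact Nat.card_of_isEmpty

lemma sc_eq_zero_of_lt (G : SimpleGraph V) {k : ℕ} (h : Fintype.card V < k) : sc G k = 0 := by
  have : IsEmpty {f : V → Fin k // (∀ a b, G.Adj a b → f a ≠ f b) ∧ Function.Surjective f} := by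
    refine ⟨fun f => ?_⟩
    have := Fintype.card_le_of_surjective f.1 f.2.2
    rw [Fintype.card_fin] at this
    omega
  exact Nat.card_of_isEmpty

lemma ckPart_eq_sc [Nonempty V] (G : SimpleGraph V) (k : ℕ) : G.ckPart k = sc G k := by
  rcases Nat.eq_zero_or_pos k with rfl | hk
  · rw [SimpleGraph.ckPart, if_pos rfl, sc_zero]
  rw [SimpleGraph.ckPart, if_neg hk.ne', sc]
  apply Nat.card_congr
  classical
  refine Equiv.ofBijective
    (fun J => ⟨pcol J.2, fun a b hab hfe =>
      J.2.2.2.2 (pcol J.2 a) a (pcol_mem J.2 a) b (by rw [hfe]; exact pcol_mem J.2 b) hab,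
      fun i => by obtain ⟨a, ha⟩ := J.2.1 i; exact ⟨a, pcol_eq J.2 ha⟩⟩) ⟨?_, ?_⟩
  · intro J J' h
    have hp : (pcol J.2 : V → Fin k) = pcol J'.2 := congrArg Subtype.val h
    apply Subtype.ext
    funext i
    ext a
    constructor
    · intro ha
      have h1 : pcol J.2 a = i := pcol_eq J.2 ha
      have h2 : a ∈ J'.1 (pcol J'.2 a) := pcol_mem J'.2 a
      rwa [← congrFun hp a, h1] at h2
    · intro ha
      have h1 : pcol J'.2 a = i := pcol_eq J'.2 ha
      have h2 : a ∈ J.1 (pcol J.2 a) := pcol_mem J.2 a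
      rwa [congrFun hp a, h1] at h2
  · rintro ⟨f, hf, hsurj⟩
    set J : Fin k → Finset V := fun i => Finset.univ.filter (fun a => f a = i) with hJdef
    have hJ : G.IsOrderedPartition J := by
      refine ⟨fun i => ?_, fun i j hne => ?_, ?_, fun i a ha b hb hab => ?_⟩
      · obtain ⟨a, ha⟩ := hsurj i
        exact ⟨a, by simp [hJdef, ha]⟩
      · rw [Finset.disjoint_left]
        intro a ha hb
        simp only [hJdef, Finset.mem_filter] at ha hb
        exact hne (ha.2 ▸ hb.2 ▸ rfl)
      · ext a
        simp [hJdef]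
      · simp only [hJdef, Finset.mem_filter] at ha hb
        exact hf a b hab (ha.2.trans hb.2.symm)
    refine ⟨⟨J, hJ⟩, ?_⟩
    apply Subtype.ext
    funext a
    exact pcol_eq hJ (by simp [hJdef])

lemma pc_eq_sum (G : SimpleGraph V) (n : ℕ) :
    pc G n = ∑ k ∈ Finset.range (n + 1), n.choose k * sc G k := by
  classical
  rw [pc, Nat.card_eq_fintype_card]
  rw [Fintype.card_congr
    (Equiv.sigmaFiberEquiv
      (fun f : {f : V → Fin n // ∀ a b, G.Adj a b → f a ≠ f b} =>
        Finset.image f.1 Finset.univ)).symm]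
  rw [Fintype.card_sigma]
  have hfib : ∀ S : Finset (Fin n),
      Fintype.card {x : {f : V → Fin n // ∀ a b, G.Adj a b → f a ≠ f b} //
        Finset.image x.1 Finset.univ = S} = sc G S.card := by
    intro S
    rw [← Nat.card_eq_fintype_card, sc]
    apply Nat.card_congr
    set e : ↥S ≃ Fin S.card := Fintype.equivFinOfCardEq (Fintype.card_coe S) with he
    refine Equiv.ofBijective
      (fun x => ⟨fun a => e ⟨x.1.1 a, by
          have h0 := Finset.mem_image_of_mem x.1.1 (Finset.mem_univ a)
          rwa [x.2] at h0⟩,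
        fun a b hab hfe => x.1.2 a b hab (congrArg Subtype.val (e.injective hfe)),
        fun i => by
          obtain ⟨a, -, ha⟩ := Finset.mem_image.1
            (show ((e.symm i : ↥S) : Fin n) ∈ Finset.image x.1.1 Finset.univ by
              rw [x.2]; exact (e.symm i).2)
          exact ⟨a, e.apply_eq_iff_eq_symm_apply.mpr (Subtype.ext ha)⟩⟩) ⟨?_, ?_⟩
    · intro x y h
      apply Subtype.ext
      apply Subtype.ext
      funext a
      exact congrArg Subtype.val (e.injective (congrFun (congrArg Subtype.val h) a))
    · rintro ⟨h, hp, hs⟩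
      refine ⟨⟨⟨fun a => ((e.symm (h a) : ↥S) : Fin n),
        fun a b hab hfe => hp a b hab (e.symm.injective (Subtype.ext hfe))⟩, ?_⟩, ?_⟩
      · ext s
        simp only [Finset.mem_image, Finset.mem_univ, true_and]
        constructor
        · rintro ⟨a, rfl⟩
          exact (e.symm (h a)).2
        · intro hsS
          obtain ⟨a, ha⟩ := hs (e ⟨s, hsS⟩)
          refine ⟨a, ?_⟩
          rw [ha, Equiv.symm_apply_apply]
      · apply Subtype.ext
        funext a
        exact e.apply_eq_iff_eq_symm_apply.mpr (Subtype.ext rfl)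
  rw [Finset.sum_congr rfl (fun S _ => hfib S)]
  have := Finset.sum_powerset_apply_card (fun m => sc G m)
    (x := (Finset.univ : Finset (Fin n)))
  rw [Finset.powerset_univ] at this
  rw [this]
  simp [Finset.card_univ, smul_eq_mul]

/-- The "chromatic polynomial" built from surjective-coloring counts. -/
noncomputable def QP (G : SimpleGraph V) : Polynomial ℚ :=
  ∑ k ∈ Finset.Icc 1 (Fintype.card V),
    Polynomial.C ((sc G k : ℚ) / k.factorial) * descPochhammer ℚ k

lemma QP_eval [Nonempty V] (G : SimpleGraph V) (n : ℕ) :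
    (QP G).eval (n : ℚ) = (pc G n : ℚ) := by
  rw [QP, Polynomial.eval_finset_sum]
  simp only [Polynomial.eval_mul, Polynomial.eval_C]
  have hterm : ∀ k : ℕ, (sc G k : ℚ) / k.factorial * (descPochhammer ℚ k).eval (n : ℚ)
      = (n.choose k : ℚ) * sc G k := by
    intro k
    rw [descPochhammer_eval_eq_descFactorial, Nat.descFactorial_eq_factorial_mul_choose]
    have hfac : (k.factorial : ℚ) ≠ 0 := Nat.cast_ne_zero.2 k.factorial_ne_zero
    push_cast
    field_simp
  rw [Finset.sum_congr rfl (fun k _ => hterm k), pc_eq_sum]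
  push_cast
  set M := max (Fintype.card V) n with hM
  have h1 : ∑ k ∈ Finset.Icc 1 (Fintype.card V), (n.choose k : ℚ) * sc G k
      = ∑ k ∈ Finset.Icc 1 M, (n.choose k : ℚ) * sc G k := by
    apply Finset.sum_subset (Finset.Icc_subset_Icc le_rfl (le_max_left _ _))
    intro x hx hx'
    simp only [Finset.mem_Icc] at hx hx'
    have : Fintype.card V < x := by omega
    rw [sc_eq_zero_of_lt G this]
    simp
  have h2 : ∑ k ∈ Finset.range (n + 1), (n.choose k : ℚ) * sc G k
      = ∑ k ∈ Finset.Icc 1 M, (n.choose k : ℚ) * sc G k := by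
    have hins : Finset.range (n + 1) = insert 0 (Finset.Icc 1 n) := by
      ext x; simp [Finset.mem_Icc]; omega
    rw [hins, Finset.sum_insert (by simp)]
    rw [sc_zero]
    simp only [Nat.cast_zero, mul_zero, zero_add]
    apply Finset.sum_subset (Finset.Icc_subset_Icc le_rfl (le_max_right _ _))
    intro x hx hx'
    simp only [Finset.mem_Icc] at hx hx'
    have : n < x := by omega
    rw [Nat.choose_eq_zero_of_lt this]
    simp
  rw [h1, ← h2]


lemma pc_zero {W : Type*} [Nonempty W] (H : SimpleGraph W) : pc H 0 = 0 := by
  have : IsEmpty {f : W → Fin 0 // ∀ a b, H.Adj a b → f a ≠ f b} :=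
    ⟨fun f => (f.1 (Classical.arbitrary W)).elim0⟩
  exact Nat.card_of_isEmpty

lemma pc_prod {W : Type*} (H : SimpleGraph W) (A : Set W)
    (hcross : ∀ a b, a ∈ A → b ∉ A → ¬ H.Adj a b) (n : ℕ) :
    pc H n = pc (H.induce A) n * pc (H.induce Aᶜ) n := by
  classical
  rw [pc, pc, pc, ← Nat.card_prod]
  apply Nat.card_congr
  refine Equiv.ofBijective
    (fun f => (⟨fun a => f.1 a.1, fun a b hab => f.2 a.1 b.1 hab⟩,
               ⟨fun a => f.1 a.1, fun a b hab => f.2 a.1 b.1 hab⟩)) ⟨?_, ?_⟩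
  · intro f g h
    apply Subtype.ext
    funext v
    by_cases hv : v ∈ A
    · exact congrFun (congrArg Subtype.val (congrArg Prod.fst h)) ⟨v, hv⟩
    · exact congrFun (congrArg Subtype.val (congrArg Prod.snd h)) ⟨v, hv⟩
  · rintro ⟨⟨g, hg⟩, ⟨h, hh⟩⟩
    refine ⟨⟨fun v => if hv : v ∈ A then g ⟨v, hv⟩ else h ⟨v, hv⟩, ?_⟩, ?_⟩
    · intro a b hab
      by_cases ha : a ∈ A <;> by_cases hb : b ∈ A
      · intro heq
        simp only [dif_pos ha, dif_pos hb] at heq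
        exact hg ⟨a, ha⟩ ⟨b, hb⟩ hab heq
      · exact absurd hab (hcross a b ha hb)
      · exact absurd hab.symm (hcross b a hb ha)
      · intro heq
        simp only [dif_neg ha, dif_neg hb] at heq
        exact hh ⟨a, ha⟩ ⟨b, hb⟩ hab heq
    · refine Prod.ext ?_ ?_ <;> apply Subtype.ext <;> funext a
      · exact dif_pos a.2
      · exact dif_neg a.2

lemma coeff1_descPochhammer (m : ℕ) :
    (descPochhammer ℚ (m + 1)).coeff 1 = (-1) ^ m * m.factorial := by
  induction m with
  | zero => simp [descPochhammer_one]
  | succ m ih =>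
    rw [descPochhammer_succ_right]
    have hc : ((m + 1 : ℕ) : ℚ[X]) = Polynomial.C ((m + 1 : ℕ) : ℚ) := by
      simp
    rw [hc, mul_sub, Polynomial.coeff_sub, Polynomial.coeff_mul_C,
      show (1 : ℕ) = 0 + 1 from rfl, Polynomial.coeff_mul_X,
      Polynomial.coeff_zero_eq_eval_zero,
      descPochhammer_ne_zero_eval_zero ℚ (Nat.succ_ne_zero m), ih]
    rw [Nat.factorial_succ]
    push_cast
    ring

lemma coeff1_QP [Nonempty V] (G : SimpleGraph V) :
    (QP G).coeff 1
      = ∑ k ∈ Finset.Icc 1 (Fintype.card V),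
          (sc G k : ℚ) / k.factorial * (descPochhammer ℚ k).coeff 1 := by
  rw [QP, Polynomial.finset_sum_coeff]
  exact Finset.sum_congr rfl fun k _ => by rw [Polynomial.coeff_C_mul]

end ChromAux

/-- **Disconnected graphs.** If `G` is a graph on at least one vertex which is not connected,
then `c(G) = 0`. -/
theorem cInv_eq_zero_of_not_connected {V : Type*} [Fintype V] [DecidableEq V] [Nonempty V]
    (G : SimpleGraph V) (hG : ¬ G.Connected) :
    G.cInv = 0 := by
  classical
  open ChromAux in
  -- extract a nontrivial split of the vertex set with no crossing edges
  have hpre : ¬ G.Preconnected := fun h => hG ((SimpleGraph.connected_iff G).2 ⟨h, ‹_›⟩)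
  rw [SimpleGraph.Preconnected] at hpre
  push_neg at hpre
  obtain ⟨u, v, huv⟩ := hpre
  set A : Set V := {w | G.Reachable u w} with hA
  have hcross : ∀ a b, a ∈ A → b ∉ A → ¬ G.Adj a b :=
    fun a b ha hb hadj => hb (ha.trans hadj.reachable)
  haveI : Nonempty ↥A := ⟨⟨u, SimpleGraph.Reachable.refl u⟩⟩
  haveI : Nonempty ↥(Aᶜ) := ⟨⟨v, huv⟩⟩
  -- the polynomial factors
  have hQ : ChromAux.QP G = ChromAux.QP (G.induce A) * ChromAux.QP (G.induce Aᶜ) := by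
    rw [← sub_eq_zero]
    apply Polynomial.eq_zero_of_infinite_isRoot
    apply Set.infinite_of_injective_forall_mem
      (f := (Nat.cast : ℕ → ℚ)) Nat.cast_injective
    intro n
    simp only [Set.mem_setOf_eq, Polynomial.IsRoot.def, Polynomial.eval_sub,
      Polynomial.eval_mul, ChromAux.QP_eval]
    rw [ChromAux.pc_prod G A hcross n]
    push_cast
    ring
  have hc0A : (ChromAux.QP (G.induce A)).coeff 0 = 0 := by
    have h0 := ChromAux.QP_eval (G.induce A) 0
    rw [ChromAux.pc_zero] at h0
    rw [Polynomial.coeff_zero_eq_eval_zero]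
    simpa using h0
  have hc0B : (ChromAux.QP (G.induce Aᶜ)).coeff 0 = 0 := by
    have h0 := ChromAux.QP_eval (G.induce Aᶜ) 0
    rw [ChromAux.pc_zero] at h0
    rw [Polynomial.coeff_zero_eq_eval_zero]
    simpa using h0
  have hc1 : (ChromAux.QP G).coeff 1 = 0 := by
    rw [hQ, Polynomial.coeff_mul]
    rw [show (Finset.HasAntidiagonal.antidiagonal 1 : Finset (ℕ × ℕ)) = {(0, 1), (1, 0)} from rfl]
    simp [hc0A, hc0B]
  -- now express cInv via the first coefficient
  have hsum : ∑ k ∈ Finset.Icc 1 (Fintype.card V), (-1 : ℚ) ^ k * (G.ckPart k : ℚ) / k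
      = -(ChromAux.QP G).coeff 1 := by
    rw [ChromAux.coeff1_QP, ← Finset.sum_neg_distrib]
    apply Finset.sum_congr rfl
    intro k hk
    obtain ⟨m, rfl⟩ : ∃ m, k = m + 1 := by
      rw [Finset.mem_Icc] at hk; exact ⟨k - 1, by omega⟩
    rw [ChromAux.ckPart_eq_sc, ChromAux.coeff1_descPochhammer, Nat.factorial_succ]
    have hfac : (m.factorial : ℚ) ≠ 0 := Nat.cast_ne_zero.2 m.factorial_ne_zero
    have hm1 : ((m : ℚ) + 1) ≠ 0 := by positivity
    push_cast
    field_simp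
    ring
  rw [SimpleGraph.cInv, hsum, hc1]
  simp
end

section
/- Let R be a finite reduced crystallographic root system spanning a finite-dimensional real vector space V, with base Π and Weyl group W, and let γ ∈ V satisfy ⟨γ, α∨⟩ ∈ ℤ_{>0} for every α ∈ Π. For each w ∈ W, the element γ − wγ lies in the ℤ_{≥0}-span of Π; write γ − wγ = Σ_{α ∈ Π} c_α(w)·α with (uniquely determined) coefficients c_α(w) ∈ ℤ_{≥0}. Then for every w ∈ W and every reduced expression w = s_{α_1}·s_{α_2}·⋯·s_{α_k} with α_1, …, α_k ∈ Π, the set {α_1, …, α_k} equals {α ∈ Π : c_α(w) ≠ 0}. -/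
set_option linter.unusedSectionVars false
set_option maxHeartbeats 1000000

open RootPairing Finset

section Aux

variable {ι V N : Type*} [Fintype ι] [DecidableEq ι] [AddCommGroup V] [Module ℝ V]
  [AddCommGroup N] [Module ℝ N]
  (P : RootPairing ι ℝ V N) (b : Finset ι)

/-- Positivity of a root with respect to the base `b`. -/
def AuxPos (k : ι) : Prop :=
  ∃ c : ι → ℝ, (∀ j ∈ b, 0 ≤ c j) ∧ (∃ j ∈ b, 0 < c j) ∧
    P.root k = ∑ j ∈ b, c j • P.root j

/-- Negativity of a root with respect to the base `b`. -/
def AuxNeg (k : ι) : Prop :=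
  ∃ c : ι → ℝ, (∀ j ∈ b, c j ≤ 0) ∧ (∃ j ∈ b, c j < 0) ∧
    P.root k = ∑ j ∈ b, c j • P.root j

variable {P b}

lemma _root_.RootPairing.rootForm_root_self_pos (P : RootPairing ι ℝ V N) (j : ι) :
    0 < P.RootForm (P.root j) (P.root j) := by
  rw [RootPairing.rootForm_root_self]
  exact Finset.sum_pos' (fun i _ => mul_self_nonneg _) ⟨j, Finset.mem_univ _, by simp⟩

lemma aux_uniq (hb1 : LinearIndependent ℝ fun j : b => P.root j)
    {d e : ι → ℝ} (h : ∑ j ∈ b, d j • P.root j = ∑ j ∈ b, e j • P.root j) :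
    ∀ j ∈ b, d j = e j := by
  have h0 : ∑ j : b, (d j - e j) • P.root (j : ι) = 0 := by
    have h1 := sub_eq_zero_of_eq h
    rw [← Finset.sum_sub_distrib] at h1
    calc ∑ j : b, (d j - e j) • P.root (j : ι)
        = ∑ j ∈ b, (d j - e j) • P.root j :=
          (Finset.sum_coe_sort b (fun j => (d j - e j) • P.root j))
      _ = 0 := by rw [← h1]; exact Finset.sum_congr rfl fun j _ => by rw [sub_smul]
  intro j hj
  have := (Fintype.linearIndependent_iff.mp hb1) (fun j : b => d j - e j) h0 ⟨j, hj⟩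
  linarith [this]

lemma aux_pos_base {j : ι} (hj : j ∈ b) : AuxPos P b j := by
  refine ⟨fun j' => if j' = j then 1 else 0, fun j' _ => by dsimp only; split <;> norm_num,
    ⟨j, hj, by simp⟩, ?_⟩
  simp only [ite_smul, one_smul, zero_smul]
  rw [Finset.sum_ite_eq' b j]
  simp [hj]

lemma aux_pos_or_neg (hb2 : ∀ i : ι, ∃ c : ι → ℤ,
      ((∀ j ∈ b, 0 ≤ c j) ∨ (∀ j ∈ b, c j ≤ 0)) ∧ P.root i = ∑ j ∈ b, c j • P.root j)
    (k : ι) : AuxPos P b k ∨ AuxNeg P b k := by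
  obtain ⟨c, hsign, hsum⟩ := hb2 k
  have hsum' : P.root k = ∑ j ∈ b, ((c j : ℝ)) • P.root j := by
    rw [hsum]
    exact Finset.sum_congr rfl fun j _ => (Int.cast_smul_eq_zsmul ℝ (c j) (P.root j)).symm
  have hnz : ∃ j ∈ b, c j ≠ 0 := by
    by_contra hall
    push_neg at hall
    have : P.root k = 0 := by
      rw [hsum']
      refine Finset.sum_eq_zero fun j hj => by simp [hall j hj]
    exact P.ne_zero k this
  obtain ⟨j0, hj0, hj0ne⟩ := hnz
  rcases hsign with hpos | hneg
  · left
    refine ⟨fun j => (c j : ℝ), fun j hj => ?_, ⟨j0, hj0, ?_⟩, hsum'⟩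
    · show (0:ℝ) ≤ (c j : ℝ); exact_mod_cast hpos j hj
    · show (0:ℝ) < (c j0 : ℝ)
      exact_mod_cast lt_of_le_of_ne (hpos j0 hj0) (Ne.symm hj0ne)
  · right
    refine ⟨fun j => (c j : ℝ), fun j hj => ?_, ⟨j0, hj0, ?_⟩, hsum'⟩
    · show (c j : ℝ) ≤ 0; exact_mod_cast hneg j hj
    · show (c j0 : ℝ) < 0
      exact_mod_cast lt_of_le_of_ne (hneg j0 hj0) hj0ne

/-- `2 B(x, αⱼ) = ⟨x, αⱼ∨⟩ B(αⱼ, αⱼ)`. -/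
lemma aux_two_mul (x : V) (j : ι) :
    2 * P.RootForm x (P.root j) = P.coroot' j x * P.RootForm (P.root j) (P.root j) := by
  have h := P.rootForm_reflection_reflection_apply j x (P.root j)
  rw [reflection_apply_self, RootPairing.reflection_apply] at h
  simp only [map_sub, map_smul, map_neg, LinearMap.sub_apply, LinearMap.smul_apply,
    smul_eq_mul] at h
  ring_nf at h ⊢
  linarith

lemma aux_form_gamma_pos {γ : V} (hγ : ∀ j ∈ b, 0 < P.coroot' j γ)
    {k : ι} (h : AuxPos P b k) : 0 < P.RootForm γ (P.root k) := by
  obtain ⟨c, hc0, ⟨j0, hj0, hj0pos⟩, hsum⟩ := h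
  have hterm : ∀ j ∈ b, 0 < P.RootForm γ (P.root j) := by
    intro j hj
    have h2 := aux_two_mul (P := P) γ j
    have hjj := P.rootForm_root_self_pos j
    nlinarith [hγ j hj]
  rw [hsum, map_sum]
  refine Finset.sum_pos' (fun j hj => ?_) ⟨j0, hj0, ?_⟩
  · rw [map_smul, smul_eq_mul]
    exact mul_nonneg (hc0 j hj) (le_of_lt (hterm j hj))
  · rw [map_smul, smul_eq_mul]
    exact mul_pos hj0pos (hterm j0 hj0)

lemma aux_form_gamma_neg {γ : V} (hγ : ∀ j ∈ b, 0 < P.coroot' j γ)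
    {k : ι} (h : AuxNeg P b k) : P.RootForm γ (P.root k) < 0 := by
  obtain ⟨c, hc0, ⟨j0, hj0, hj0neg⟩, hsum⟩ := h
  have hterm : ∀ j ∈ b, 0 < P.RootForm γ (P.root j) := by
    intro j hj
    have h2 := aux_two_mul (P := P) γ j
    have hjj := P.rootForm_root_self_pos j
    nlinarith [hγ j hj]
  rw [hsum, map_sum]
  have hpos : 0 < ∑ j ∈ b, -((P.RootForm γ) (c j • P.root j)) := by
    refine Finset.sum_pos' (fun j hj => ?_) ⟨j0, hj0, ?_⟩
    · rw [map_smul, smul_eq_mul]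
      have := mul_nonpos_of_nonpos_of_nonneg (hc0 j hj) (le_of_lt (hterm j hj))
      linarith
    · rw [map_smul, smul_eq_mul]
      have := mul_neg_of_neg_of_pos hj0neg (hterm j0 hj0)
      linarith
  rw [Finset.sum_neg_distrib] at hpos
  linarith

lemma aux_not_both {γ : V} (hγ : ∀ j ∈ b, 0 < P.coroot' j γ)
    {k : ι} (h : AuxPos P b k) (h' : AuxNeg P b k) : False := by
  have := aux_form_gamma_pos hγ h
  have := aux_form_gamma_neg hγ h'
  linarith

/-- A simple reflection sends positive roots other than its own to positive roots. -/
lemma aux_pos_reflect (hb1 : LinearIndependent ℝ fun j : b => P.root j)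
    (hb2 : ∀ i : ι, ∃ c : ι → ℤ,
      ((∀ j ∈ b, 0 ≤ c j) ∨ (∀ j ∈ b, c j ≤ 0)) ∧ P.root i = ∑ j ∈ b, c j • P.root j)
    (hred : P.IsReduced) {γ : V} (hγ : ∀ j ∈ b, 0 < P.coroot' j γ)
    {j k : ι} (hj : j ∈ b) (hk : AuxPos P b k) (hne : P.root k ≠ P.root j) :
    AuxPos P b (P.reflectionPerm j k) := by
  obtain ⟨c, hc0, ⟨j0, hj0, hj0pos⟩, hsum⟩ := hk
  by_cases hcase : ∃ j1 ∈ b, j1 ≠ j ∧ 0 < c j1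
  · -- there is a positive coefficient away from j; reflection keeps it
    obtain ⟨j1, hj1b, hj1ne, hj1pos⟩ := hcase
    set p : ℝ := P.pairing k j with hp
    have hrefl : P.root (P.reflectionPerm j k) =
        ∑ j' ∈ b, (c j' + if j' = j then -p else 0) • P.root j' := by
      rw [P.root_reflectionPerm j k, reflection_apply_root]
      conv_lhs => rw [hsum]
      simp only [add_smul, ite_smul, zero_smul, Finset.sum_add_distrib]
      rw [Finset.sum_ite_eq' b j]
      simp only [hj, if_pos, neg_smul, hp]
      abel
    rcases aux_pos_or_neg hb2 (P.reflectionPerm j k) with h | h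
    · exact h
    · exfalso
      obtain ⟨e, he0, _, hesum⟩ := h
      have := aux_uniq hb1 (hesum.symm.trans hrefl) j1 hj1b
      have hej1 := he0 j1 hj1b
      simp [hj1ne] at this
      linarith
  · -- the root is a positive multiple of root j, contradiction with hne
    exfalso
    push_neg at hcase
    have hcj : ∀ j' ∈ b, j' ≠ j → c j' = 0 := by
      intro j' hj' hne'
      exact le_antisymm (hcase j' hj' hne') (hc0 j' hj')
    have hj0j : j0 = j := by
      by_contra hne'
      have := hcj j0 hj0 hne'
      linarith
    subst hj0j
    have hroot : P.root k = c j0 • P.root j0 := by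
      rw [hsum]
      rw [Finset.sum_eq_single j0]
      · intro j' hj' hne'
        rw [hcj j' hj' hne', zero_smul]
      · intro h; exact absurd hj0 h
    have hdep : ¬ LinearIndependent ℝ ![P.root k, P.root j0] := by
      rw [linearIndependent_fin2]
      push_neg
      intro _
      exact ⟨c j0, by simp [hroot]⟩
    rcases hred.eq_or_eq_neg k j0 hdep with h | h
    · exact hne h
    · have hroot' : c j0 • P.root j0 = - P.root j0 := by rw [← hroot, h]
      have : (c j0 + 1) • P.root j0 = 0 := by
        rw [add_smul, one_smul, hroot']
        abel
      rcases smul_eq_zero.mp this with h' | h'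
      · linarith
      · exact P.ne_zero j0 h'

/-- Reflection conjugation: `s_{s_j(α_k)} = s_j s_k s_j`. -/
lemma aux_refl_conj (j k : ι) :
    P.reflection (P.reflectionPerm j k) =
      P.reflection j * P.reflection k * P.reflection j := by
  ext x
  show P.reflection (P.reflectionPerm j k) x = P.reflection j (P.reflection k (P.reflection j x))
  rw [RootPairing.reflection_apply (i := P.reflectionPerm j k), coroot'_reflectionPerm,
    P.root_reflectionPerm j k,
    RootPairing.reflection_apply (i := k) (x := P.reflection j x),
    map_sub, map_smul, P.reflection_same, LinearMap.comp_apply]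
  rfl

variable (P) in
/-- Index of `w⁻¹(α_k)` where `w` is the product of reflections along `m`. -/
def auxPermInv : List ι → ι → ι
  | [], k => k
  | (j :: m), k => auxPermInv m (P.reflectionPerm j k)

lemma aux_root_permInv : ∀ (m : List ι) (k : ι),
    ((m.map fun i => P.reflection i).prod) (P.root (auxPermInv P m k)) = P.root k := by
  intro m
  induction m with
  | nil => intro k; simp [auxPermInv]
  | cons j t ih =>
    intro k
    have : auxPermInv P (j :: t) k = auxPermInv P t (P.reflectionPerm j k) := rfl
    rw [this, List.map_cons, List.prod_cons]
    show P.reflection j (((t.map fun i => P.reflection i).prod)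
      (P.root (auxPermInv P t (P.reflectionPerm j k)))) = P.root k
    rw [ih (P.reflectionPerm j k), P.root_reflectionPerm, P.reflection_same]

lemma aux_form_inv : ∀ (m : List ι) (x y : V),
    P.RootForm (((m.map fun i => P.reflection i).prod) x)
      (((m.map fun i => P.reflection i).prod) y) = P.RootForm x y := by
  intro m
  induction m with
  | nil => intro x y; simp
  | cons j t ih =>
    intro x y
    rw [List.map_cons, List.prod_cons]
    show P.RootForm (P.reflection j (((t.map fun i => P.reflection i).prod) x))
      (P.reflection j (((t.map fun i => P.reflection i).prod) y)) = _
    rw [P.rootForm_reflection_reflection_apply, ih]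

/-- Deletion: if `w⁻¹(α_k) < 0` for a positive root `α_k`, then `s_k · w` admits a
shorter expression. -/
lemma aux_delete (hb1 : LinearIndependent ℝ fun j : b => P.root j)
    (hb2 : ∀ i : ι, ∃ c : ι → ℤ,
      ((∀ j ∈ b, 0 ≤ c j) ∨ (∀ j ∈ b, c j ≤ 0)) ∧ P.root i = ∑ j ∈ b, c j • P.root j)
    (hred : P.IsReduced) {γ : V} (hγ : ∀ j ∈ b, 0 < P.coroot' j γ) :
    ∀ (m : List ι), (∀ i ∈ m, i ∈ b) → ∀ k, AuxPos P b k → AuxNeg P b (auxPermInv P m k) →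
    ∃ m' : List ι, (∀ i ∈ m', i ∈ b) ∧ m'.length + 1 = m.length ∧
      P.reflection k * (m.map fun i => P.reflection i).prod
        = (m'.map fun i => P.reflection i).prod := by
  intro m
  induction m with
  | nil =>
    intro _ k hpos hneg
    exact absurd hpos (fun h => aux_not_both hγ h hneg)
  | cons j t ih =>
    intro hmb k hpos hneg
    have hj : j ∈ b := hmb j (List.mem_cons_self (a := j) (l := t))
    have htb : ∀ i ∈ t, i ∈ b := fun i hi => hmb i (List.mem_cons_of_mem j hi)
    by_cases hne : P.root k = P.root j
    · -- k = j, cancel immediately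
      have hkj : k = j := P.root.injective hne
      refine ⟨t, htb, by simp, ?_⟩
      rw [List.map_cons, List.prod_cons, hkj, ← mul_assoc, ← sq, P.reflection_sq, one_mul]
    · have hpos' : AuxPos P b (P.reflectionPerm j k) :=
        aux_pos_reflect hb1 hb2 hred hγ hj hpos hne
      have hneg' : AuxNeg P b (auxPermInv P t (P.reflectionPerm j k)) := hneg
      obtain ⟨t', ht'b, ht'len, ht'eq⟩ := ih htb (P.reflectionPerm j k) hpos' hneg'
      refine ⟨j :: t', fun i hi => ?_, by simp [← ht'len], ?_⟩
      · rcases List.mem_cons.mp hi with h | h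
        · exact h ▸ hj
        · exact ht'b i h
      · have hconj := aux_refl_conj (P := P) j k
        have hswap : P.reflection k * P.reflection j
            = P.reflection j * P.reflection (P.reflectionPerm j k) := by
          rw [hconj, ← mul_assoc, ← mul_assoc, ← sq, P.reflection_sq, one_mul]
        rw [List.map_cons, List.prod_cons, List.map_cons, List.prod_cons,
          ← mul_assoc, hswap, mul_assoc, ht'eq]

/-- Main induction: for a reduced word `l`, the coefficients of `γ - w_l γ` are
nonnegative with support exactly the letters of `l`. -/
lemma aux_main (hb1 : LinearIndependent ℝ fun j : b => P.root j)
    (hb2 : ∀ i : ι, ∃ c : ι → ℤ,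
      ((∀ j ∈ b, 0 ≤ c j) ∨ (∀ j ∈ b, c j ≤ 0)) ∧ P.root i = ∑ j ∈ b, c j • P.root j)
    (hred : P.IsReduced) {γ : V} (hγ : ∀ j ∈ b, 0 < P.coroot' j γ) :
    ∀ (l : List ι), (∀ i ∈ l, i ∈ b) →
    (∀ l' : List ι, (∀ i ∈ l', i ∈ b) →
      (l.map fun i => P.reflection i).prod = (l'.map fun i => P.reflection i).prod →
      l.length ≤ l'.length) →
    ∃ d : ι → ℝ, (γ - ((l.map fun i => P.reflection i).prod) γ = ∑ j ∈ b, d j • P.root j) ∧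
      ∀ j ∈ b, 0 ≤ d j ∧ (d j ≠ 0 ↔ j ∈ l) := by
  intro l
  induction l with
  | nil =>
    intro _ _
    exact ⟨0, by simp, fun j hj => by simp⟩
  | cons i t ih =>
    intro hlb hmin
    have hi : i ∈ b := hlb i (List.mem_cons_self (a := i) (l := t))
    have htb : ∀ j ∈ t, j ∈ b := fun j hj => hlb j (List.mem_cons_of_mem i hj)
    have htmin : ∀ l' : List ι, (∀ j ∈ l', j ∈ b) →
        (t.map fun i => P.reflection i).prod = (l'.map fun i => P.reflection i).prod →
        t.length ≤ l'.length := by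
      intro l' hl'b hl'eq
      have := hmin (i :: l') (fun j hj => by
        rcases List.mem_cons.mp hj with h | h
        · exact h ▸ hi
        · exact hl'b j h) (by
          rw [List.map_cons, List.prod_cons, List.map_cons, List.prod_cons, hl'eq])
      simpa using this
    obtain ⟨d, hdsum, hdprop⟩ := ih htb htmin
    -- the root index for w_t⁻¹(α_i)
    set k' : ι := auxPermInv P t i with hk'
    have hk'pos : AuxPos P b k' := by
      rcases aux_pos_or_neg hb2 k' with h | h
      · exact h
      · exfalso
        obtain ⟨t', ht'b, ht'len, ht'eq⟩ :=
          aux_delete hb1 hb2 hred hγ t htb i (aux_pos_base hi) h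
        have := hmin t' ht'b (by
          rw [List.map_cons, List.prod_cons, ht'eq])
        simp only [List.length_cons] at this
        omega
    -- positivity of the pairing
    set x : V := ((t.map fun i => P.reflection i).prod) γ with hx
    have hform : P.RootForm x (P.root i) = P.RootForm γ (P.root k') := by
      conv_lhs => rw [← aux_root_permInv (P := P) t i, ← hk']
      rw [hx, aux_form_inv]
    have hppos : 0 < P.coroot' i x := by
      have h1 : 0 < P.RootForm γ (P.root k') := aux_form_gamma_pos hγ hk'pos
      have h2 := aux_two_mul (P := P) x i
      have h3 := P.rootForm_root_self_pos i
      nlinarith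
    set p : ℝ := P.coroot' i x with hp
    refine ⟨fun j => d j + if j = i then p else 0, ?_, ?_⟩
    · rw [List.map_cons, List.prod_cons]
      have hstep : (P.reflection i * (t.map fun i => P.reflection i).prod) γ
          = x - p • P.root i := by
        show P.reflection i x = _
        rw [RootPairing.reflection_apply, ← hp]
      rw [hstep]
      have : γ - (x - p • P.root i) = (γ - x) + p • P.root i := by abel
      rw [this, hdsum]
      rw [Finset.sum_congr rfl (fun j _ => add_smul (d j) _ (P.root j)),
        Finset.sum_add_distrib]
      congr 1
      simp only [ite_smul, zero_smul]
      rw [Finset.sum_ite_eq' b i]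
      simp [hi]
    · intro j hj
      obtain ⟨hd0, hdsupp⟩ := hdprop j hj
      by_cases hji : j = i
      · subst hji
        simp only [if_pos rfl, eq_self_iff_true, if_true]
        refine ⟨by linarith, fun _ => List.mem_cons_self (a := j) (l := t), fun _ => ?_⟩
        have : 0 < d j + p := by linarith
        exact ne_of_gt this
      · simp only [if_neg hji, add_zero]
        refine ⟨hd0, ?_⟩
        rw [hdsupp, List.mem_cons]
        exact ⟨fun h => Or.inr h, fun h => h.resolve_left hji⟩

end Aux

/-- A base of a root system: a linearly independent subset of the roots such that every root
is either a nonnegative or a nonpositive integer linear combination of its elements. -/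
def RootSystem.IsBaseSet {ι V N : Type*} [AddCommGroup V] [Module ℝ V]
    [AddCommGroup N] [Module ℝ N] (P : RootPairing ι ℝ V N) [P.IsRootSystem] (b : Finset ι) : Prop :=
  (LinearIndependent ℝ fun j : b => P.root j) ∧
    ∀ i : ι, ∃ c : ι → ℤ, ((∀ j ∈ b, 0 ≤ c j) ∨ (∀ j ∈ b, c j ≤ 0)) ∧
      P.root i = ∑ j ∈ b, c j • P.root j

/-- **Support of `γ − wγ` equals the support of any reduced word for `w`.**
For `γ` dominant regular integral (`⟨γ, α∨⟩ ∈ ℤ_{>0}` for all simple `α`), writing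
`γ − wγ = Σ_{α ∈ Π} c_α(w)·α`, the set of simple reflections occurring in any reduced
expression of `w` is exactly `{α ∈ Π : c_α(w) ≠ 0}`. -/
theorem support_reduced_word_eq_support_coeffs
    {ι V N : Type*} [Fintype ι] [DecidableEq ι] [AddCommGroup V] [Module ℝ V]
    [FiniteDimensional ℝ V] [AddCommGroup N] [Module ℝ N]
    (P : RootPairing ι ℝ V N) [P.IsRootSystem] (hcrys : P.IsCrystallographic) (hred : P.IsReduced)
    (b : Finset ι) (hb : RootSystem.IsBaseSet P b)
    (γ : V) (hγ : ∀ j ∈ b, ∃ z : ℤ, 0 < z ∧ (z : ℝ) = P.toLinearMap γ (P.coroot j))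
    (w : V ≃ₗ[ℝ] V) (l : List ι) (hl : ∀ i ∈ l, i ∈ b)
    (hw : w = (l.map fun i => P.reflection i).prod)
    (hmin : ∀ l' : List ι, (∀ i ∈ l', i ∈ b) →
      w = (l'.map fun i => P.reflection i).prod → l.length ≤ l'.length)
    (c : ι → ℕ) (hc : γ - w γ = ∑ j ∈ b, (c j : ℝ) • P.root j) :
    l.toFinset = b.filter fun j => c j ≠ 0 := by
  obtain ⟨hb1, hb2⟩ := hb
  have hγ' : ∀ j ∈ b, 0 < P.coroot' j γ := by
    intro j hj
    obtain ⟨z, hz, hzeq⟩ := hγ j hj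
    have : P.coroot' j γ = (z : ℝ) := by rw [hzeq]; rfl
    rw [this]
    exact_mod_cast hz
  have hmin' : ∀ l' : List ι, (∀ i ∈ l', i ∈ b) →
      (l.map fun i => P.reflection i).prod = (l'.map fun i => P.reflection i).prod →
      l.length ≤ l'.length := fun l' h1 h2 => hmin l' h1 (hw.trans h2)
  obtain ⟨d, hdsum, hdprop⟩ := aux_main hb1 hb2 hred hγ' l hl hmin'
  rw [hw] at hc
  have huniq : ∀ j ∈ b, (c j : ℝ) = d j := aux_uniq hb1 (hc.symm.trans hdsum)
  ext j
  simp only [List.mem_toFinset, Finset.mem_filter, ne_eq]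
  constructor
  · intro hjl
    have hjb := hl j hjl
    refine ⟨hjb, fun hc0 => ?_⟩
    have := (hdprop j hjb).2.mpr hjl
    rw [← huniq j hjb] at this
    exact this (by exact_mod_cast hc0)
  · rintro ⟨hjb, hc0⟩
    refine (hdprop j hjb).2.mp ?_
    rw [← huniq j hjb]
    exact_mod_cast hc0
end
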